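/- arXiv:2012.11051 — 4 statements merged into one kernel-verified Lean document; each statement's English description precedes it below -/
import Mathlib

section
/- Let A and B be unital prime complex *-algebras whose centers equal ℂ·1 and which each contain a nontrivial projection. Then a bijective mapping Φ : A → B satisfies Φ(ab + ba*) = Φ(a)Φ(b) + Φ(b)Φ(a)* for all elements a, b ∈ A if and only if Φ is a *-ring isomorphism. -/
private lemma aux_half {M : Type*} [AddCommGroup M] [Module ℂ M] {x y : M}
    (h : x + x = y + y) : x = y := by
  have h2 : (2:ℂ) • x = (2:ℂ) • y := by rw [two_smul, two_smul]; exact h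
  exact smul_right_injective M (two_ne_zero (α := ℂ)) h2

private lemma aux_self {M : Type*} [AddCommGroup M] [Module ℂ M] {x : M}
    (h : x + x = x) : x = 0 := by
  exact add_eq_left.mp h

set_option maxHeartbeats 1600000 in
/-- On unital prime complex *-algebras with center ℂ·1 and a nontrivial
projection, a bijection Φ satisfies Φ(ab + ba*) = Φ(a)Φ(b) + Φ(b)Φ(a)* for all a, b
iff Φ is a *-ring isomorphism (additive, multiplicative, star-preserving). -/
theorem stmt_0 {A B : Type*}
    [Ring A] [Algebra ℂ A] [StarRing A] [StarModule ℂ A]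
    [Ring B] [Algebra ℂ B] [StarRing B] [StarModule ℂ B]
    (hAprime : ∀ a b : A, (∀ x : A, a * x * b = 0) → a = 0 ∨ b = 0)
    (hBprime : ∀ a b : B, (∀ x : B, a * x * b = 0) → a = 0 ∨ b = 0)
    (hAcenter : ∀ a : A, (∀ x : A, a * x = x * a) → ∃ c : ℂ, a = c • (1 : A))
    (hBcenter : ∀ b : B, (∀ x : B, b * x = x * b) → ∃ c : ℂ, b = c • (1 : B))
    (hAproj : ∃ p : A, p ≠ 0 ∧ p ≠ 1 ∧ star p = p ∧ p * p = p)
    (hBproj : ∃ q : B, q ≠ 0 ∧ q ≠ 1 ∧ star q = q ∧ q * q = q)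
    (Φ : A → B) (hΦ : Function.Bijective Φ) :
    (∀ a b : A, Φ (a * b + b * star a) = Φ a * Φ b + Φ b * star (Φ a)) ↔
      ((∀ a b : A, Φ (a + b) = Φ a + Φ b) ∧
       (∀ a b : A, Φ (a * b) = Φ a * Φ b) ∧
       (∀ a : A, Φ (star a) = star (Φ a))) := by
  constructor
  case mpr =>
    rintro ⟨hadd, hmul, hstar⟩ a b
    rw [hadd, hmul, hmul, hstar]
  intro H
  obtain ⟨p, hp0, hp1, hps, hpp⟩ := hAproj
  have inj : Function.Injective Φ := hΦ.1
  have surj : Function.Surjective Φ := hΦ.2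
  obtain ⟨q, hqdef⟩ : ∃ q : A, q = 1 - p := ⟨1 - p, rfl⟩
  have hpq1 : p + q = 1 := by rw [hqdef]; abel
  have hpq : p * q = 0 := by rw [hqdef]; rw [mul_sub, mul_one, hpp, sub_self]
  have hqp : q * p = 0 := by rw [hqdef]; rw [sub_mul, one_mul, hpp, sub_self]
  have hqq : q * q = q := by rw [hqdef]; rw [mul_sub, mul_one, sub_mul, one_mul, hpp]; abel
  have hsq : star q = q := by rw [hqdef]; rw [star_sub, star_one, hps]
  have hq0 : q ≠ 0 := by
    intro h; apply hp1; rw [hqdef] at h; rw [← sub_eq_zero]; rw [← neg_sub 1 p, h, neg_zero]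
  have App : ∀ z : A, p * (p * z) = p * z := fun z => by rw [← mul_assoc, hpp]
  have Apq : ∀ z : A, p * (q * z) = 0 := fun z => by rw [← mul_assoc, hpq, zero_mul]
  have Aqp : ∀ z : A, q * (p * z) = 0 := fun z => by rw [← mul_assoc, hqp, zero_mul]
  have Aqq : ∀ z : A, q * (q * z) = q * z := fun z => by rw [← mul_assoc, hqq]
  have h0 : Φ 0 = 0 := by
    obtain ⟨b, hb⟩ := surj 0
    have h1 := H 0 b
    simpa [hb] using h1
  have key1 : ∀ t a b : A, Φ t = Φ a + Φ b → ∀ x : A,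
      Φ (x*t + t*star x) = Φ (x*a + a*star x) + Φ (x*b + b*star x) := by
    intro t a b ht x
    have h1 := H x t
    rw [ht] at h1
    rw [h1, H x a, H x b]
    noncomm_ring
  have key2 : ∀ t a b : A, Φ t = Φ a + Φ b → ∀ x : A,
      Φ (t*x + x*star t) = Φ (a*x + x*star a) + Φ (b*x + x*star b) := by
    intro t a b ht x
    have h1 := H t x
    rw [ht, star_add] at h1
    rw [h1, H a x, H b x]
    noncomm_ring
  have key13 : ∀ t a b c : A, Φ t = Φ a + Φ b + Φ c → ∀ x : A,
      Φ (x*t + t*star x) = Φ (x*a + a*star x) + Φ (x*b + b*star x) + Φ (x*c + c*star x) := by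
    intro t a b c ht x
    have h1 := H x t
    rw [ht] at h1
    rw [h1, H x a, H x b, H x c]
    noncomm_ring
  have key14 : ∀ t a b c d : A, Φ t = Φ a + Φ b + Φ c + Φ d → ∀ x : A,
      Φ (x*t + t*star x) = Φ (x*a + a*star x) + Φ (x*b + b*star x) + Φ (x*c + c*star x)
        + Φ (x*d + d*star x) := by
    intro t a b c d ht x
    have h1 := H x t
    rw [ht] at h1
    rw [h1, H x a, H x b, H x c, H x d]
    noncomm_ring
  have hrec : ∀ t : A, t = p*(t*p) + p*(t*q) + q*(t*p) + q*(t*q) := by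
    intro t
    have h3 : (p+q)*t*(p+q) = p*(t*p) + p*(t*q) + q*(t*p) + q*(t*q) := by noncomm_ring
    rw [← h3, hpq1, one_mul, mul_one]
  -- Claim 1
  have claim1 : ∀ x y : A, Φ (p*x*q + q*y*p) = Φ (p*x*q) + Φ (q*y*p) := by
    intro x y
    obtain ⟨t, ht⟩ := surj (Φ (p*x*q) + Φ (q*y*p))
    suffices hts : t = p*x*q + q*y*p by rw [← hts, ht]
    have e1 : p*t + t*p = t := by
      have h1 := key1 t _ _ ht p
      rw [hps] at h1
      have a1 : p*(p*x*q) + (p*x*q)*p = p*x*q := by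
        simp [mul_assoc, App, Apq, Aqp, Aqq, hpp, hpq, hqp, hqq]
      have a2 : p*(q*y*p) + (q*y*p)*p = q*y*p := by
        simp [mul_assoc, App, Apq, Aqp, Aqq, hpp, hpq, hqp, hqq]
      rw [a1, a2, ← ht] at h1
      exact inj h1
    have e2 : t*q + q*star t = p*x*q + q*(star x)*p := by
      have h1 := key2 t _ _ ht q
      have a1 : (p*x*q)*q + q*star (p*x*q) = p*x*q + q*(star x)*p := by
        simp [star_mul, hps, hsq, mul_assoc, App, Apq, Aqp, Aqq, hpp, hpq, hqp, hqq]
      have a2 : (q*y*p)*q + q*star (q*y*p) = 0 := by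
        simp [star_mul, hps, hsq, mul_assoc, App, Apq, Aqp, Aqq, hpp, hpq, hqp, hqq]
      rw [a1, a2, h0, add_zero] at h1
      exact inj h1
    have e3 : t*p + p*star t = q*y*p + p*(star y)*q := by
      have h1 := key2 t _ _ ht p
      have a1 : (p*x*q)*p + p*star (p*x*q) = 0 := by
        simp [star_mul, hps, hsq, mul_assoc, App, Apq, Aqp, Aqq, hpp, hpq, hqp, hqq]
      have a2 : (q*y*p)*p + p*star (q*y*p) = q*y*p + p*(star y)*q := by
        simp [star_mul, hps, hsq, mul_assoc, App, Apq, Aqp, Aqq, hpp, hpq, hqp, hqq]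
      rw [a1, a2, h0, zero_add] at h1
      exact inj h1
    have c11 : p*(t*p) = 0 := by
      have h1 := congrArg (fun z => p*z*p) e1
      simp only [mul_add, add_mul, mul_assoc, App, Apq, Aqp, Aqq, hpp, hpq, hqp, hqq,
        zero_mul, mul_zero, add_zero, zero_add] at h1
      exact add_eq_left.mp h1
    have c22 : q*(t*q) = 0 := by
      have h1 := congrArg (fun z => q*z*q) e1
      simp only [mul_add, add_mul, mul_assoc, App, Apq, Aqp, Aqq, hpp, hpq, hqp, hqq,
        zero_mul, mul_zero, add_zero, zero_add] at h1
      exact h1.symm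
    have c12 : p*(t*q) = p*(x*q) := by
      have h1 := congrArg (fun z => p*z*q) e2
      simpa [mul_add, add_mul, mul_assoc, App, Apq, Aqp, Aqq, hpp, hpq, hqp, hqq] using h1
    have c21 : q*(t*p) = q*(y*p) := by
      have h1 := congrArg (fun z => q*z*p) e3
      simpa [mul_add, add_mul, mul_assoc, App, Apq, Aqp, Aqq, hpp, hpq, hqp, hqq] using h1
    rw [hrec t, c11, c12, c21, c22]
    simp [mul_assoc]
  -- Claim 2a
  have claim2a : ∀ x y z : A, Φ (p*x*p + p*y*q + q*z*p) = Φ (p*x*p) + Φ (p*y*q) + Φ (q*z*p) := by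
    intro x y z
    obtain ⟨t, ht⟩ := surj (Φ (p*x*p) + Φ (p*y*q) + Φ (q*z*p))
    suffices hts : t = p*x*p + p*y*q + q*z*p by rw [← hts, ht]
    have e1 : (p-q)*t + t*(p-q) = p*x*p + p*x*p := by
      have h1 := key13 t _ _ _ ht (p-q)
      rw [star_sub, hps, hsq] at h1
      have a1 : (p-q)*(p*x*p) + (p*x*p)*(p-q) = p*x*p + p*x*p := by
        simp [sub_mul, mul_sub, mul_assoc, App, Apq, Aqp, Aqq, hpp, hpq, hqp, hqq]
      have a2 : (p-q)*(p*y*q) + (p*y*q)*(p-q) = 0 := by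
        simp [sub_mul, mul_sub, mul_assoc, App, Apq, Aqp, Aqq, hpp, hpq, hqp, hqq]
      have a3 : (p-q)*(q*z*p) + (q*z*p)*(p-q) = 0 := by
        simp [sub_mul, mul_sub, mul_assoc, App, Apq, Aqp, Aqq, hpp, hpq, hqp, hqq]
      rw [a1, a2, a3, h0, add_zero, add_zero] at h1
      exact inj h1
    have e2 : q*t + t*q = p*y*q + q*z*p := by
      have h1 := key13 t _ _ _ ht q
      rw [hsq] at h1
      have a1 : q*(p*x*p) + (p*x*p)*q = 0 := by
        simp [mul_assoc, App, Apq, Aqp, Aqq, hpp, hpq, hqp, hqq]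
      have a2 : q*(p*y*q) + (p*y*q)*q = p*y*q := by
        simp [mul_assoc, App, Apq, Aqp, Aqq, hpp, hpq, hqp, hqq]
      have a3 : q*(q*z*p) + (q*z*p)*q = q*z*p := by
        simp [mul_assoc, App, Apq, Aqp, Aqq, hpp, hpq, hqp, hqq]
      rw [a1, a2, a3, h0, zero_add, ← claim1 y z] at h1
      exact inj h1
    have c11 : p*(t*p) = p*(x*p) := by
      have h1 := congrArg (fun z => p*z*p) e1
      simp only [mul_add, add_mul, mul_sub, sub_mul, mul_assoc, App, Apq, Aqp, Aqq,
        hpp, hpq, hqp, hqq, zero_mul, mul_zero, add_zero, zero_add, sub_zero, zero_sub,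
        neg_mul, mul_neg, neg_neg, neg_zero] at h1
      exact aux_half h1
    have c22 : q*(t*q) = 0 := by
      have h1 := congrArg (fun z => q*z*q) e1
      simp only [mul_add, add_mul, mul_sub, sub_mul, mul_assoc, App, Apq, Aqp, Aqq,
        hpp, hpq, hqp, hqq, zero_mul, mul_zero, add_zero, zero_add, sub_zero, zero_sub,
        neg_mul, mul_neg, neg_neg, neg_zero] at h1
      have h2 : q*(t*q) + q*(t*q) = 0 + 0 := by
        rw [add_zero]
        rw [← neg_eq_zero]
        rw [neg_add]
        exact h1
      exact aux_half h2
    have c12 : p*(t*q) = p*(y*q) := by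
      have h1 := congrArg (fun z => p*z*q) e2
      simpa [mul_add, add_mul, mul_assoc, App, Apq, Aqp, Aqq, hpp, hpq, hqp, hqq] using h1
    have c21 : q*(t*p) = q*(z*p) := by
      have h1 := congrArg (fun z => q*z*p) e2
      simpa [mul_add, add_mul, mul_assoc, App, Apq, Aqp, Aqq, hpp, hpq, hqp, hqq] using h1
    rw [hrec t, c11, c12, c21, c22]
    simp [mul_assoc]
  -- Claim 2b
  have claim2b : ∀ x y z : A, Φ (q*x*q + p*y*q + q*z*p) = Φ (q*x*q) + Φ (p*y*q) + Φ (q*z*p) := by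
    intro x y z
    obtain ⟨t, ht⟩ := surj (Φ (q*x*q) + Φ (p*y*q) + Φ (q*z*p))
    suffices hts : t = q*x*q + p*y*q + q*z*p by rw [← hts, ht]
    have e1 : (q-p)*t + t*(q-p) = q*x*q + q*x*q := by
      have h1 := key13 t _ _ _ ht (q-p)
      rw [star_sub, hps, hsq] at h1
      have a1 : (q-p)*(q*x*q) + (q*x*q)*(q-p) = q*x*q + q*x*q := by
        simp [sub_mul, mul_sub, mul_assoc, App, Apq, Aqp, Aqq, hpp, hpq, hqp, hqq]
      have a2 : (q-p)*(p*y*q) + (p*y*q)*(q-p) = 0 := by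
        simp [sub_mul, mul_sub, mul_assoc, App, Apq, Aqp, Aqq, hpp, hpq, hqp, hqq]
      have a3 : (q-p)*(q*z*p) + (q*z*p)*(q-p) = 0 := by
        simp [sub_mul, mul_sub, mul_assoc, App, Apq, Aqp, Aqq, hpp, hpq, hqp, hqq]
      rw [a1, a2, a3, h0, add_zero, add_zero] at h1
      exact inj h1
    have e2 : p*t + t*p = p*y*q + q*z*p := by
      have h1 := key13 t _ _ _ ht p
      rw [hps] at h1
      have a1 : p*(q*x*q) + (q*x*q)*p = 0 := by
        simp [mul_assoc, App, Apq, Aqp, Aqq, hpp, hpq, hqp, hqq]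
      have a2 : p*(p*y*q) + (p*y*q)*p = p*y*q := by
        simp [mul_assoc, App, Apq, Aqp, Aqq, hpp, hpq, hqp, hqq]
      have a3 : p*(q*z*p) + (q*z*p)*p = q*z*p := by
        simp [mul_assoc, App, Apq, Aqp, Aqq, hpp, hpq, hqp, hqq]
      rw [a1, a2, a3, h0, zero_add, ← claim1 y z] at h1
      exact inj h1
    have c22 : q*(t*q) = q*(x*q) := by
      have h1 := congrArg (fun z => q*z*q) e1
      simp only [mul_add, add_mul, mul_sub, sub_mul, mul_assoc, App, Apq, Aqp, Aqq,
        hpp, hpq, hqp, hqq, zero_mul, mul_zero, add_zero, zero_add, sub_zero, zero_sub,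
        neg_mul, mul_neg, neg_neg, neg_zero] at h1
      exact aux_half h1
    have c11 : p*(t*p) = 0 := by
      have h1 := congrArg (fun z => p*z*p) e1
      simp only [mul_add, add_mul, mul_sub, sub_mul, mul_assoc, App, Apq, Aqp, Aqq,
        hpp, hpq, hqp, hqq, zero_mul, mul_zero, add_zero, zero_add, sub_zero, zero_sub,
        neg_mul, mul_neg, neg_neg, neg_zero] at h1
      have h2 : p*(t*p) + p*(t*p) = 0 + 0 := by
        rw [add_zero]
        rw [← neg_eq_zero]
        rw [neg_add]
        exact h1
      exact aux_half h2
    have c12 : p*(t*q) = p*(y*q) := by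
      have h1 := congrArg (fun z => p*z*q) e2
      simpa [mul_add, add_mul, mul_assoc, App, Apq, Aqp, Aqq, hpp, hpq, hqp, hqq] using h1
    have c21 : q*(t*p) = q*(z*p) := by
      have h1 := congrArg (fun z => q*z*p) e2
      simpa [mul_add, add_mul, mul_assoc, App, Apq, Aqp, Aqq, hpp, hpq, hqp, hqq] using h1
    rw [hrec t, c11, c12, c21, c22]
    simp [mul_assoc]
    all_goals abel
  -- Claim 3
  have claim3 : ∀ x y z w : A,
      Φ (p*x*p + p*y*q + q*z*p + q*w*q)
        = Φ (p*x*p) + Φ (p*y*q) + Φ (q*z*p) + Φ (q*w*q) := by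
    intro x y z w
    obtain ⟨t, ht⟩ := surj (Φ (p*x*p) + Φ (p*y*q) + Φ (q*z*p) + Φ (q*w*q))
    suffices hts : t = p*x*p + p*y*q + q*z*p + q*w*q by rw [← hts, ht]
    have e1 : p*t + t*p = p*(x+x)*p + p*y*q + q*z*p := by
      have h1 := key14 t _ _ _ _ ht p
      rw [hps] at h1
      have a1 : p*(p*x*p) + (p*x*p)*p = p*x*p + p*x*p := by
        simp [mul_assoc, App, Apq, Aqp, Aqq, hpp, hpq, hqp, hqq]
      have a2 : p*(p*y*q) + (p*y*q)*p = p*y*q := by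
        simp [mul_assoc, App, Apq, Aqp, Aqq, hpp, hpq, hqp, hqq]
      have a3 : p*(q*z*p) + (q*z*p)*p = q*z*p := by
        simp [mul_assoc, App, Apq, Aqp, Aqq, hpp, hpq, hqp, hqq]
      have a4 : p*(q*w*q) + (q*w*q)*p = 0 := by
        simp [mul_assoc, App, Apq, Aqp, Aqq, hpp, hpq, hqp, hqq]
      rw [a1, a2, a3, a4, h0, add_zero] at h1
      have hxx : p*x*p + p*x*p = p*(x+x)*p := by noncomm_ring
      rw [hxx, ← claim2a (x+x) y z] at h1
      exact inj h1
    have e2 : q*t + t*q = q*(w+w)*q + p*y*q + q*z*p := by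
      have h1 := key14 t _ _ _ _ ht q
      rw [hsq] at h1
      have a1 : q*(p*x*p) + (p*x*p)*q = 0 := by
        simp [mul_assoc, App, Apq, Aqp, Aqq, hpp, hpq, hqp, hqq]
      have a2 : q*(p*y*q) + (p*y*q)*q = p*y*q := by
        simp [mul_assoc, App, Apq, Aqp, Aqq, hpp, hpq, hqp, hqq]
      have a3 : q*(q*z*p) + (q*z*p)*q = q*z*p := by
        simp [mul_assoc, App, Apq, Aqp, Aqq, hpp, hpq, hqp, hqq]
      have a4 : q*(q*w*q) + (q*w*q)*q = q*w*q + q*w*q := by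
        simp [mul_assoc, App, Apq, Aqp, Aqq, hpp, hpq, hqp, hqq]
      rw [a1, a2, a3, a4, h0, zero_add] at h1
      have hww : q*w*q + q*w*q = q*(w+w)*q := by noncomm_ring
      rw [hww] at h1
      have hperm : Φ (p*y*q) + Φ (q*z*p) + Φ (q*(w+w)*q)
          = Φ (q*(w+w)*q) + Φ (p*y*q) + Φ (q*z*p) := by abel
      rw [hperm, ← claim2b (w+w) y z] at h1
      exact inj h1
    have c11 : p*(t*p) = p*(x*p) := by
      have h1 := congrArg (fun z => p*z*p) e1
      simp only [mul_add, add_mul, mul_assoc, App, Apq, Aqp, Aqq,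
        hpp, hpq, hqp, hqq, zero_mul, mul_zero, add_zero, zero_add] at h1
      exact aux_half h1
    have c12 : p*(t*q) = p*(y*q) := by
      have h1 := congrArg (fun z => p*z*q) e1
      simpa [mul_add, add_mul, mul_assoc, App, Apq, Aqp, Aqq, hpp, hpq, hqp, hqq] using h1
    have c21 : q*(t*p) = q*(z*p) := by
      have h1 := congrArg (fun z => q*z*p) e1
      simpa [mul_add, add_mul, mul_assoc, App, Apq, Aqp, Aqq, hpp, hpq, hqp, hqq] using h1
    have c22 : q*(t*q) = q*(w*q) := by
      have h1 := congrArg (fun z => q*z*q) e2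
      simp only [mul_add, add_mul, mul_assoc, App, Apq, Aqp, Aqq,
        hpp, hpq, hqp, hqq, zero_mul, mul_zero, add_zero, zero_add] at h1
      exact aux_half h1
    rw [hrec t, c11, c12, c21, c22]
    simp [mul_assoc]
    all_goals abel
  -- Claim 4 : additivity on A12
  have claim4 : ∀ x y : A, Φ (p*x*q + p*y*q) = Φ (p*x*q) + Φ (p*y*q) := by
    intro x y
    have hU : Φ (p + p*y*q) = Φ p + Φ (p*y*q) := by
      have h := claim2a 1 y 0
      simpa only [mul_one, one_mul, hpp, mul_zero, zero_mul, add_zero, h0] using h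
    have hV : Φ (p*x*q + q) = Φ (p*x*q) + Φ q := by
      have h := claim2b 1 x 0
      simp only [mul_one, one_mul, hqq, mul_zero, zero_mul, add_zero, h0] at h
      rw [add_comm q (p*x*q)] at h
      rw [h, add_comm]
    have hmain := H (p + p*y*q) (p*x*q + q)
    have harg : (p + p*y*q) * (p*x*q + q) + (p*x*q + q) * star (p + p*y*q)
        = p*(x*(q*star y))*p + p*(x+y)*q + q*(star y)*p := by
      simp [star_add, star_mul, hps, hsq, mul_add, add_mul, mul_assoc,
        App, Apq, Aqp, Aqq, hpp, hpq, hqp, hqq]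
      all_goals abel
    rw [harg, hU, hV, star_add] at hmain
    have hgroups : (Φ p + Φ (p*y*q)) * (Φ (p*x*q) + Φ q)
          + (Φ (p*x*q) + Φ q) * (star (Φ p) + star (Φ (p*y*q)))
        = (Φ p * Φ (p*x*q) + Φ (p*x*q) * star (Φ p)) + (Φ p * Φ q + Φ q * star (Φ p))
          + (Φ (p*y*q) * Φ (p*x*q) + Φ (p*x*q) * star (Φ (p*y*q)))
          + (Φ (p*y*q) * Φ q + Φ q * star (Φ (p*y*q))) := by
      noncomm_ring
    rw [hgroups, ← H p (p*x*q), ← H p q, ← H (p*y*q) (p*x*q), ← H (p*y*q) q] at hmain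
    have g1 : p*(p*x*q) + (p*x*q)*star p = p*x*q := by
      rw [hps]; simp [mul_assoc, App, Apq, Aqp, Aqq, hpp, hpq, hqp, hqq]
    have g2 : p*q + q*star p = 0 := by rw [hps, hpq, hqp, add_zero]
    have g3 : (p*y*q)*(p*x*q) + (p*x*q)*star (p*y*q) = p*(x*(q*star y))*p := by
      simp [star_mul, hps, hsq, mul_assoc, App, Apq, Aqp, Aqq, hpp, hpq, hqp, hqq]
    have g4 : (p*y*q)*q + q*star (p*y*q) = p*y*q + q*(star y)*p := by
      simp [star_mul, hps, hsq, mul_assoc, App, Apq, Aqp, Aqq, hpp, hpq, hqp, hqq]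
    rw [g1, g2, g3, g4, h0, claim1 y (star y)] at hmain
    rw [claim2a (x*(q*star y)) (x+y) (star y)] at hmain
    have hfin : Φ (p*(x+y)*q) = Φ (p*x*q) + Φ (p*y*q) := by
      have h3 : Φ (p*(x+y)*q) - (Φ (p*x*q) + Φ (p*y*q))
          = (Φ (p*(x*(q*star y))*p) + Φ (p*(x+y)*q) + Φ (q*(star y)*p))
            - (Φ (p*x*q) + 0 + Φ (p*(x*(q*star y))*p) + (Φ (p*y*q) + Φ (q*(star y)*p))) := by
        abel
      rw [hmain, sub_self] at h3
      exact sub_eq_zero.mp h3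
    rw [show p*x*q + p*y*q = p*(x+y)*q from by noncomm_ring, hfin]
  -- Claim 4' : additivity on A21
  have claim4' : ∀ x y : A, Φ (q*x*p + q*y*p) = Φ (q*x*p) + Φ (q*y*p) := by
    intro x y
    have hU : Φ (q + q*y*p) = Φ q + Φ (q*y*p) := by
      have h := claim2b 1 0 y
      simpa only [mul_one, one_mul, hqq, mul_zero, zero_mul, add_zero, zero_add, h0] using h
    have hV : Φ (q*x*p + p) = Φ (q*x*p) + Φ p := by
      have h := claim2a 1 0 x
      simp only [mul_one, one_mul, hpp, mul_zero, zero_mul, add_zero, zero_add, h0] at h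
      rw [add_comm p (q*x*p)] at h
      rw [h, add_comm]
    have hmain := H (q + q*y*p) (q*x*p + p)
    have harg : (q + q*y*p) * (q*x*p + p) + (q*x*p + p) * star (q + q*y*p)
        = q*(x*(p*star y))*q + p*(star y)*q + q*(x+y)*p := by
      simp [star_add, star_mul, hps, hsq, mul_add, add_mul, mul_assoc,
        App, Apq, Aqp, Aqq, hpp, hpq, hqp, hqq]
      all_goals abel
    rw [harg, hU, hV, star_add] at hmain
    have hgroups : (Φ q + Φ (q*y*p)) * (Φ (q*x*p) + Φ p)
          + (Φ (q*x*p) + Φ p) * (star (Φ q) + star (Φ (q*y*p)))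
        = (Φ q * Φ (q*x*p) + Φ (q*x*p) * star (Φ q)) + (Φ q * Φ p + Φ p * star (Φ q))
          + (Φ (q*y*p) * Φ (q*x*p) + Φ (q*x*p) * star (Φ (q*y*p)))
          + (Φ (q*y*p) * Φ p + Φ p * star (Φ (q*y*p))) := by
      noncomm_ring
    rw [hgroups, ← H q (q*x*p), ← H q p, ← H (q*y*p) (q*x*p), ← H (q*y*p) p] at hmain
    have g1 : q*(q*x*p) + (q*x*p)*star q = q*x*p := by
      rw [hsq]; simp [mul_assoc, App, Apq, Aqp, Aqq, hpp, hpq, hqp, hqq]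
    have g2 : q*p + p*star q = 0 := by rw [hsq, hqp, hpq, add_zero]
    have g3 : (q*y*p)*(q*x*p) + (q*x*p)*star (q*y*p) = q*(x*(p*star y))*q := by
      simp [star_mul, hps, hsq, mul_assoc, App, Apq, Aqp, Aqq, hpp, hpq, hqp, hqq]
    have g4 : (q*y*p)*p + p*star (q*y*p) = p*(star y)*q + q*y*p := by
      simp [star_mul, hps, hsq, mul_assoc, App, Apq, Aqp, Aqq, hpp, hpq, hqp, hqq]
      all_goals abel
    rw [g1, g2, g3, g4, h0, claim1 (star y) y] at hmain
    rw [claim2b (x*(p*star y)) (star y) (x+y)] at hmain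
    have hfin : Φ (q*(x+y)*p) = Φ (q*x*p) + Φ (q*y*p) := by
      have h3 : Φ (q*(x+y)*p) - (Φ (q*x*p) + Φ (q*y*p))
          = (Φ (q*(x*(p*star y))*q) + Φ (p*(star y)*q) + Φ (q*(x+y)*p))
            - (Φ (q*x*p) + 0 + Φ (q*(x*(p*star y))*q) + (Φ (p*(star y)*q) + Φ (q*y*p))) := by
        abel
      rw [hmain, sub_self] at h3
      exact sub_eq_zero.mp h3
    rw [show q*x*p + q*y*p = q*(x+y)*p from by noncomm_ring, hfin]
  -- Claim 5 : additivity on A11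
  have claim5 : ∀ x y : A, Φ (p*x*p + p*y*p) = Φ (p*x*p) + Φ (p*y*p) := by
    intro x y
    obtain ⟨t, ht⟩ := surj (Φ (p*x*p) + Φ (p*y*p))
    suffices hts : t = p*x*p + p*y*p by rw [← hts, ht]
    have e1 : q*t + t*q = 0 := by
      have h1 := key1 t _ _ ht q
      rw [hsq] at h1
      have a1 : q*(p*x*p) + (p*x*p)*q = 0 := by
        simp [mul_assoc, App, Apq, Aqp, Aqq, hpp, hpq, hqp, hqq]
      have a2 : q*(p*y*p) + (p*y*p)*q = 0 := by
        simp [mul_assoc, App, Apq, Aqp, Aqq, hpp, hpq, hqp, hqq]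
      rw [a1, a2, h0, add_zero, ← h0] at h1
      exact inj h1
    have c22 : q*(t*q) = 0 := by
      have h1 := congrArg (fun z => q*z*q) e1
      simp only [mul_add, add_mul, mul_assoc, App, Apq, Aqp, Aqq, hpp, hpq, hqp, hqq,
        zero_mul, mul_zero, add_zero, zero_add] at h1
      have h2 : q*(t*q) + q*(t*q) = 0 + 0 := by rw [add_zero]; exact h1
      exact aux_half h2
    have c12 : p*(t*q) = 0 := by
      have h1 := congrArg (fun z => p*z*q) e1
      simpa [mul_add, add_mul, mul_assoc, App, Apq, Aqp, Aqq, hpp, hpq, hqp, hqq] using h1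
    have c21 : q*(t*p) = 0 := by
      have h1 := congrArg (fun z => q*z*p) e1
      simpa [mul_add, add_mul, mul_assoc, App, Apq, Aqp, Aqq, hpp, hpq, hqp, hqq] using h1
    have c22s : q*(star t*q) = 0 := by
      have h1 := congrArg star c22
      simpa [star_mul, hsq, mul_assoc] using h1
    have hsand : ∀ w : A, p*(t*(p*(w*q))) = p*(x*(p*(w*q))) + p*(y*(p*(w*q))) := by
      intro w
      have h1 := key2 t _ _ ht (p*w*q)
      have a1 : (p*x*p)*(p*w*q) + (p*w*q)*star (p*x*p) = p*(x*(p*w))*q := by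
        simp [star_mul, hps, hsq, mul_assoc, App, Apq, Aqp, Aqq, hpp, hpq, hqp, hqq]
      have a2 : (p*y*p)*(p*w*q) + (p*w*q)*star (p*y*p) = p*(y*(p*w))*q := by
        simp [star_mul, hps, hsq, mul_assoc, App, Apq, Aqp, Aqq, hpp, hpq, hqp, hqq]
      rw [a1, a2, ← claim4 (x*(p*w)) (y*(p*w))] at h1
      have h2 := inj h1
      have h3 := congrArg (fun z => p*z*q) h2
      simpa [mul_add, add_mul, mul_assoc, App, Apq, Aqp, Aqq, hpp, hpq, hqp, hqq, c22s] using h3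
    have hr : p*(t*p) = p*(x*p) + p*(y*p) := by
      have h1 : ∀ w : A, (p*(t*p) - p*(x*p) - p*(y*p)) * w * q = 0 := by
        intro w
        have h2 := hsand w
        simp only [sub_mul, mul_assoc, App, Apq, Aqp, Aqq, hpp, hpq, hqp, hqq]
        rw [h2]; abel
      rcases hAprime _ _ h1 with h | h
      · rw [sub_sub] at h
        exact sub_eq_zero.mp h
      · exact absurd h hq0
    rw [hrec t, hr, c12, c21, c22]
    simp [mul_assoc]
    all_goals abel
  -- Claim 5' : additivity on A22
  have claim5' : ∀ x y : A, Φ (q*x*q + q*y*q) = Φ (q*x*q) + Φ (q*y*q) := by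
    intro x y
    obtain ⟨t, ht⟩ := surj (Φ (q*x*q) + Φ (q*y*q))
    suffices hts : t = q*x*q + q*y*q by rw [← hts, ht]
    have e1 : p*t + t*p = 0 := by
      have h1 := key1 t _ _ ht p
      rw [hps] at h1
      have a1 : p*(q*x*q) + (q*x*q)*p = 0 := by
        simp [mul_assoc, App, Apq, Aqp, Aqq, hpp, hpq, hqp, hqq]
      have a2 : p*(q*y*q) + (q*y*q)*p = 0 := by
        simp [mul_assoc, App, Apq, Aqp, Aqq, hpp, hpq, hqp, hqq]
      rw [a1, a2, h0, add_zero, ← h0] at h1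
      exact inj h1
    have c11 : p*(t*p) = 0 := by
      have h1 := congrArg (fun z => p*z*p) e1
      simp only [mul_add, add_mul, mul_assoc, App, Apq, Aqp, Aqq, hpp, hpq, hqp, hqq,
        zero_mul, mul_zero, add_zero, zero_add] at h1
      have h2 : p*(t*p) + p*(t*p) = 0 + 0 := by rw [add_zero]; exact h1
      exact aux_half h2
    have c12 : p*(t*q) = 0 := by
      have h1 := congrArg (fun z => p*z*q) e1
      simpa [mul_add, add_mul, mul_assoc, App, Apq, Aqp, Aqq, hpp, hpq, hqp, hqq] using h1
    have c21 : q*(t*p) = 0 := by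
      have h1 := congrArg (fun z => q*z*p) e1
      simpa [mul_add, add_mul, mul_assoc, App, Apq, Aqp, Aqq, hpp, hpq, hqp, hqq] using h1
    have c11s : p*(star t*p) = 0 := by
      have h1 := congrArg star c11
      simpa [star_mul, hps, mul_assoc] using h1
    have hsand : ∀ w : A, q*(t*(q*(w*p))) = q*(x*(q*(w*p))) + q*(y*(q*(w*p))) := by
      intro w
      have h1 := key2 t _ _ ht (q*w*p)
      have a1 : (q*x*q)*(q*w*p) + (q*w*p)*star (q*x*q) = q*(x*(q*w))*p := by
        simp [star_mul, hps, hsq, mul_assoc, App, Apq, Aqp, Aqq, hpp, hpq, hqp, hqq]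
      have a2 : (q*y*q)*(q*w*p) + (q*w*p)*star (q*y*q) = q*(y*(q*w))*p := by
        simp [star_mul, hps, hsq, mul_assoc, App, Apq, Aqp, Aqq, hpp, hpq, hqp, hqq]
      rw [a1, a2, ← claim4' (x*(q*w)) (y*(q*w))] at h1
      have h2 := inj h1
      have h3 := congrArg (fun z => q*z*p) h2
      simpa [mul_add, add_mul, mul_assoc, App, Apq, Aqp, Aqq, hpp, hpq, hqp, hqq, c11s] using h3
    have hr : q*(t*q) = q*(x*q) + q*(y*q) := by
      have h1 : ∀ w : A, (q*(t*q) - q*(x*q) - q*(y*q)) * w * p = 0 := by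
        intro w
        have h2 := hsand w
        simp only [sub_mul, mul_assoc, App, Apq, Aqp, Aqq, hpp, hpq, hqp, hqq]
        rw [h2]; abel
      rcases hAprime _ _ h1 with h | h
      · rw [sub_sub] at h
        exact sub_eq_zero.mp h
      · exact absurd h hp0
    rw [hrec t, hr, c11, c12, c21]
    simp [mul_assoc]
    all_goals abel
  -- Full additivity
  have hadd : ∀ a b : A, Φ (a + b) = Φ a + Φ b := by
    intro a b
    have hd : ∀ u : A, Φ u = Φ (p*u*p) + Φ (p*u*q) + Φ (q*u*p) + Φ (q*u*q) := by
      intro u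
      have h1 := claim3 u u u u
      have h2 : p*u*p + p*u*q + q*u*p + q*u*q = u := by
        have h3 : (p+q)*u*(p+q) = p*u*p + p*u*q + q*u*p + q*u*q := by noncomm_ring
        rw [← h3, hpq1, one_mul, mul_one]
      rw [h2] at h1
      exact h1
    rw [hd (a+b), hd a, hd b]
    rw [show p*(a+b)*p = p*a*p + p*b*p from by noncomm_ring, claim5 a b]
    rw [show p*(a+b)*q = p*a*q + p*b*q from by noncomm_ring, claim4 a b]
    rw [show q*(a+b)*p = q*a*p + q*b*p from by noncomm_ring, claim4' a b]
    rw [show q*(a+b)*q = q*a*q + q*b*q from by noncomm_ring, claim5' a b]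
    abel
  -- Phase 2 : basic structure constants
  have hB1 : (1:B) ≠ 0 := by
    obtain ⟨r, hr0, -, -, -⟩ := hBproj
    intro h
    exact hr0 (by rw [← mul_one r, h, mul_zero])
  have hA1 : (1:A) ≠ 0 := by
    intro h
    exact hp0 (by rw [← mul_one p, h, mul_zero])
  have hzB : ∀ z : ℂ, z • (1:B) = 0 → z = 0 := by
    intro z h
    rcases smul_eq_zero.mp h with h | h
    · exact h
    · exact absurd h hB1
  have hneg : ∀ a : A, Φ (-a) = - Φ a := by
    intro a
    have h1 : Φ a + Φ (-a) = 0 := by rw [← hadd, add_neg_cancel, h0]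
    exact eq_neg_of_add_eq_zero_right h1
  have hsur2 : ∀ y : B, y + y = Φ 1 * y + y * star (Φ 1) := by
    intro y
    obtain ⟨a, ha⟩ := surj y
    have h1 := H 1 a
    rw [star_one, mul_one, one_mul, hadd, ha] at h1
    exact h1
  have hestar : star (Φ 1) = 1 + 1 - Φ 1 := by
    have h1 := hsur2 1
    rw [mul_one, one_mul] at h1
    exact eq_sub_of_add_eq' h1.symm
  have hecomm : ∀ y : B, Φ 1 * y = y * Φ 1 := by
    intro y
    have h1 := hsur2 y
    rw [hestar] at h1
    linear_combination (norm := noncomm_ring) -h1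
  obtain ⟨c, hc⟩ := hBcenter _ hecomm
  have hcconj : (starRingEnd ℂ) c = 2 - c := by
    have h1 := hestar
    rw [hc, star_smul, star_one, Complex.star_def] at h1
    have h2 : ((starRingEnd ℂ) c - (2 - c)) • (1:B) = 0 := by
      rw [sub_smul, h1, sub_smul, two_smul]
      abel
    have h3 := hzB _ h2
    exact sub_eq_zero.mp h3
  have hc0 : c ≠ 0 := by
    intro h
    rw [h, map_zero] at hcconj
    have : (2:ℂ) = 0 := by linear_combination -hcconj
    norm_num at this
  have hIA : ∀ b : A, (Complex.I • (1:A)) * b + b * star (Complex.I • (1:A)) = 0 := by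
    intro b
    rw [star_smul, star_one, Complex.star_def, Complex.conj_I, smul_mul_assoc,
      mul_smul_comm, one_mul, mul_one, neg_smul, add_neg_cancel]
  have hfy : ∀ y : B, Φ (Complex.I • 1) * y + y * star (Φ (Complex.I • 1)) = 0 := by
    intro y
    obtain ⟨a, ha⟩ := surj y
    have h1 := H (Complex.I • 1) a
    rw [hIA a, h0, ha] at h1
    exact h1.symm
  have hfstar : star (Φ (Complex.I • 1)) = - Φ (Complex.I • 1) := by
    have h1 := hfy 1
    rw [mul_one, one_mul] at h1
    exact eq_neg_of_add_eq_zero_right h1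
  have hfcomm : ∀ y : B, Φ (Complex.I • 1) * y = y * Φ (Complex.I • 1) := by
    intro y
    have h1 := hfy y
    rw [hfstar, mul_neg] at h1
    linear_combination (norm := abel) h1
  obtain ⟨δ, hδ⟩ := hBcenter _ hfcomm
  have hδconj : (starRingEnd ℂ) δ = -δ := by
    have h1 := hfstar
    rw [hδ, star_smul, star_one, Complex.star_def] at h1
    have h2 : ((starRingEnd ℂ) δ - (-δ)) • (1:B) = 0 := by
      rw [sub_smul, h1, neg_smul]
      abel
    have h3 := hzB _ h2
    exact sub_eq_zero.mp h3
  have hδ0 : δ ≠ 0 := by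
    intro h
    have h1 : Φ (Complex.I • 1) = Φ 0 := by rw [hδ, h, zero_smul, h0]
    have h2 := inj h1
    rcases smul_eq_zero.mp h2 with h | h
    · exact Complex.I_ne_zero h
    · exact absurd h hA1
  have hstarf : ∀ a : A, Φ (star a) = (c-1) • Φ a + c • star (Φ a) := by
    intro a
    have h1 := H a 1
    rw [mul_one, one_mul, hadd, hc, mul_smul_comm, smul_mul_assoc, mul_one, one_mul] at h1
    rw [sub_smul, one_smul]
    linear_combination (norm := abel) h1
  obtain ⟨γ, hγdef⟩ : ∃ γ : ℂ, γ = (2-c)/c := ⟨_, rfl⟩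
  have hγc : c * γ = 2 - c := by rw [hγdef]; field_simp
  have hsastar : ∀ h : A, star h = h → star (Φ h) = γ • Φ h := by
    intro h hh
    have h1 := hstarf h
    rw [hh, sub_smul, one_smul] at h1
    have h2 : c • star (Φ h) = (2-c) • Φ h := by
      rw [sub_smul, two_smul]
      linear_combination (norm := abel) -h1
    have h3 : star (Φ h) = c⁻¹ • ((2-c) • Φ h) := by
      rw [← h2, smul_smul, inv_mul_cancel₀ hc0, one_smul]
    rw [h3, smul_smul, hγdef, div_eq_inv_mul]
  obtain ⟨ε, hεdef⟩ : ∃ ε : ℂ, ε = δ/c := ⟨_, rfl⟩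
  have hεc : c * ε = δ := by rw [hεdef]; field_simp
  have hIs : ∀ h : A, star h = h → Φ (Complex.I • h) = ε • Φ h := by
    intro h hh
    have h1 := H h (Complex.I • 1)
    have harg : h * (Complex.I • 1) + (Complex.I • 1) * star h
        = Complex.I • h + Complex.I • h := by
      rw [hh, mul_smul_comm, smul_mul_assoc, mul_one, one_mul]
    rw [harg, hadd, hδ, hsastar h hh] at h1
    have h2 : Φ h * (δ • (1:B)) + (δ • (1:B)) * (γ • Φ h) = (δ + δ*γ) • Φ h := by
      rw [mul_smul_comm, smul_mul_assoc, mul_one, one_mul, smul_smul, add_smul]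
    rw [h2] at h1
    have h3 : δ + δ*γ = ε + ε := by
      rw [hεdef]; field_simp; linear_combination hγc
    rw [h3, add_smul] at h1
    exact aux_half h1
  -- w := Φ p facts
  have hw0 : Φ p ≠ 0 := by
    intro h
    rw [← h0] at h
    exact hp0 (inj h)
  have hwstar : star (Φ p) = γ • Φ p := hsastar p hps
  have hw2 : Φ p * Φ p = c • Φ p := by
    have h1 := H p p
    rw [hps, hpp, hadd, hwstar, mul_smul_comm] at h1
    have h2 : c • (Φ p + Φ p) = c • (Φ p * Φ p + γ • (Φ p * Φ p)) := by rw [h1]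
    rw [smul_add, smul_add, smul_smul, hγc, sub_smul, two_smul] at h2
    have h3 : Φ p * Φ p + Φ p * Φ p = c • Φ p + c • Φ p := by
      linear_combination (norm := abel) -h2
    exact aux_half h3
  have hw2n : ∀ z : B, Φ p * (Φ p * z) = c • (Φ p * z) := by
    intro z
    rw [← mul_assoc, hw2, smul_mul_assoc]
  obtain ⟨Q, hQdef⟩ : ∃ Q : B, Q = c⁻¹ • Φ p := ⟨_, rfl⟩
  have hQw : Φ p = c • Q := by rw [hQdef, smul_smul, mul_inv_cancel₀ hc0, one_smul]
  have hQ2 : Q * Q = Q := by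
    rw [hQdef, smul_mul_assoc, mul_smul_comm, hw2, smul_smul, smul_smul]
    congr 1
    field_simp
  have hQ2n : ∀ z : B, Q * (Q * z) = Q * z := by
    intro z
    rw [← mul_assoc, hQ2]
  have hQ0 : Q ≠ 0 := by
    intro h
    rw [h, smul_zero] at hQw
    exact hw0 hQw
  have hwQl : Q * Φ p = Φ p := by rw [hQw, mul_smul_comm, hQ2]
  have hwQr : Φ p * Q = Φ p := by rw [hQw, smul_mul_assoc, hQ2]
  have hQ1mQ : Q * (1 - Q) = 0 := by rw [mul_sub, mul_one, hQ2, sub_self]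
  have h1mQQ : (1 - Q) * Q = 0 := by rw [sub_mul, one_mul, hQ2, sub_self]
  have hJγ : ∀ h b : A, star h = h → Φ (h*b + b*h) = Φ h * Φ b + γ • (Φ b * Φ h) := by
    intro h b hh
    have h1 := H h b
    rw [hh, hsastar h hh, mul_smul_comm] at h1
    exact h1
  have hQ1 : (1:B) - Q ≠ 0 := by
    intro hq1
    have hQe : Q = 1 := by
      have := sub_eq_zero.mp hq1
      exact this.symm
    have hwc : Φ p = c • (1:B) := by rw [hQw, hQe]
    have h1 := hJγ p q hps
    rw [hwc, hpq, hqp, add_zero, h0] at h1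
    have h2 : (c • (1:B))*Φ q + γ • (Φ q * (c • 1)) = (c + γ*c) • Φ q := by
      rw [smul_mul_assoc, mul_smul_comm, smul_smul, one_mul, mul_one, add_smul]
    rw [h2] at h1
    have h3 : c + γ*c = 2 := by linear_combination hγc
    rw [h3] at h1
    have h4 : Φ q = 0 := by
      have h5 : ((2:ℂ))⁻¹ • ((2:ℂ) • Φ q) = 0 := by rw [← h1, smul_zero]
      rwa [smul_smul, inv_mul_cancel₀ (two_ne_zero), one_smul] at h5
    rw [← h0] at h4
    exact hq0 (inj h4)
  -- hG : the pbp formula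
  have hG : ∀ b : A, Φ (p*(b*p)) + Φ (p*(b*p))
      = ((c-1)*1) • (Φ p * Φ b) + (γ+γ) • (Φ p * (Φ b * Φ p))
        + (γ*γ*c - γ) • (Φ b * Φ p) := by
    intro b
    have j1 := hJγ p (p*b + b*p) hps
    have harg : p*(p*b + b*p) + (p*b + b*p)*p = (p*b + b*p) + (p*(b*p) + p*(b*p)) := by
      simp [mul_add, add_mul, mul_assoc, App, hpp]
      all_goals abel
    rw [harg] at j1
    rw [hadd (p*b+b*p) (p*(b*p)+p*(b*p)), hadd (p*(b*p)) (p*(b*p)), hJγ p b hps] at j1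
    simp only [mul_add, add_mul, smul_add, mul_smul_comm, smul_mul_assoc, smul_smul,
      mul_assoc, hw2, hw2n] at j1
    linear_combination (norm := module) j1
  -- hPγ : products of self-adjoint elements
  have hPγ : ∀ g h : A, star g = g → star h = h →
      Φ (g*h) + Φ (g*h)
        = (1 + γ*(ε*(starRingEnd ℂ) ε)) • (Φ g * Φ h) + (γ + ε*ε) • (Φ h * Φ g) := by
    intro g h hg hh
    have j1 := hJγ g h hg
    rw [hadd] at j1
    have j2 := H (Complex.I • h) (Complex.I • g)
    have harg : (Complex.I • h) * (Complex.I • g) + (Complex.I • g) * star (Complex.I • h)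
        = g*h - h*g := by
      rw [star_smul, Complex.star_def, Complex.conj_I, hh]
      rw [smul_mul_assoc, smul_mul_assoc, mul_smul_comm, mul_smul_comm, smul_smul, smul_smul]
      rw [Complex.I_mul_I, mul_neg, Complex.I_mul_I, neg_neg, one_smul, neg_one_smul]
      abel
    rw [harg, hIs h hh, hIs g hg, star_smul, Complex.star_def, hsastar h hh] at j2
    rw [sub_eq_add_neg, hadd, hneg] at j2
    simp only [smul_mul_assoc, mul_smul_comm, smul_smul] at j2
    linear_combination (norm := module) j1 + j2
  -- doubled key equation from H (p*g) p
  have hKey2 : ∀ g : A, star g = g →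
      (Φ (p*(g*p)) + Φ (p*(g*p))) + (Φ (p*(g*p)) + Φ (p*(g*p)))
        = (Φ (p*g) + Φ (p*g)) * Φ p + Φ p * star (Φ (p*g) + Φ (p*g)) := by
    intro g hg
    have k1 := H (p*g) p
    have harg : (p*g)*p + p*star (p*g) = p*(g*p) + p*(g*p) := by
      rw [star_mul, hg, hps]
      simp [mul_assoc, App]
    rw [harg, hadd] at k1
    rw [star_add, add_mul, mul_add]
    linear_combination (norm := abel) k1 + k1
  have sand1 : ∀ g : A, star g = g →
      Q * (Φ (p*(g*p)) * (1-Q)) + Q * (Φ (p*(g*p)) * (1-Q))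
        = ((c-1)*c) • (Q * (Φ g * (1-Q))) := by
    intro g hg
    have s1 := congrArg (fun y => Q * y * (1-Q)) (hG g)
    simp only [mul_add, add_mul, smul_add, mul_smul_comm, smul_mul_assoc, smul_smul,
      mul_assoc, hQw, hQ2n, hQ1mQ, mul_zero, zero_mul, smul_zero, add_zero, zero_add,
      mul_one, one_mul] at s1
    linear_combination (norm := module) s1
  have sand2 : ∀ g : A, star g = g →
      (Q * (Φ (p*(g*p)) * (1-Q)) + Q * (Φ (p*(g*p)) * (1-Q)))
        + (Q * (Φ (p*(g*p)) * (1-Q)) + Q * (Φ (p*(g*p)) * (1-Q)))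
        = (((starRingEnd ℂ) γ + (starRingEnd ℂ) ε * (starRingEnd ℂ) ε) * (γ*γ) * (c*c)) • (Q * (Φ g * (1-Q))) := by
    intro g hg
    have k3 := hKey2 g hg
    rw [hPγ p g hps hg] at k3
    have s2 := congrArg (fun y => Q * y * (1-Q)) k3
    simp only [star_add, star_smul, star_mul, Complex.star_def, hsastar g hg, hwstar] at s2
    simp only [mul_add, add_mul, smul_add, mul_smul_comm, smul_mul_assoc, smul_smul,
      mul_assoc, hQw, hQ2n, hQ1mQ, mul_zero, zero_mul, smul_zero, add_zero, zero_add,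
      mul_one, one_mul] at s2
    linear_combination (norm := module) s2
  have h1mQQn : ∀ z : B, (1-Q)*(Q*z) = 0 := by
    intro z; rw [← mul_assoc, h1mQQ, zero_mul]
  have sand1' : ∀ g : A, star g = g →
      (1-Q) * (Φ (p*(g*p)) * Q) + (1-Q) * (Φ (p*(g*p)) * Q)
        = ((γ*γ*c - γ)*c) • ((1-Q) * (Φ g * Q)) := by
    intro g hg
    have s1 := congrArg (fun y => (1-Q) * y * Q) (hG g)
    simp only [mul_add, add_mul, smul_add, mul_smul_comm, smul_mul_assoc, smul_smul,
      mul_assoc, hQw, hQ2n, h1mQQn, hQ2, mul_zero, zero_mul, smul_zero, add_zero, zero_add,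
      mul_one, one_mul] at s1
    linear_combination (norm := module) s1
  have sand2' : ∀ g : A, star g = g →
      ((1-Q) * (Φ (p*(g*p)) * Q) + (1-Q) * (Φ (p*(g*p)) * Q))
        + ((1-Q) * (Φ (p*(g*p)) * Q) + (1-Q) * (Φ (p*(g*p)) * Q))
        = ((γ + ε*ε) * (c*c)) • ((1-Q) * (Φ g * Q)) := by
    intro g hg
    have k3 := hKey2 g hg
    rw [hPγ p g hps hg] at k3
    have s2 := congrArg (fun y => (1-Q) * y * Q) k3
    simp only [star_add, star_smul, star_mul, Complex.star_def, hsastar g hg, hwstar] at s2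
    simp only [mul_add, add_mul, smul_add, mul_smul_comm, smul_mul_assoc, smul_smul,
      mul_assoc, hQw, hQ2n, h1mQQn, hQ2, mul_zero, zero_mul, smul_zero, add_zero, zero_add,
      mul_one, one_mul] at s2
    linear_combination (norm := module) s2
  -- decomposition into selfadjoint parts
  have hdec : ∀ a : A, ∃ g k : A, star g = g ∧ star k = k ∧ a = g + Complex.I • k := by
    intro a
    have hIk : Complex.I * (-(Complex.I) * 2⁻¹) = 2⁻¹ := by
      rw [show Complex.I * (-(Complex.I) * 2⁻¹) = -(Complex.I*Complex.I) * 2⁻¹ from by ring,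
        Complex.I_mul_I]
      ring
    refine ⟨(2⁻¹:ℂ) • (a + star a), (-(Complex.I) * 2⁻¹) • (a - star a), ?_, ?_, ?_⟩
    · rw [star_smul, star_add, star_star, Complex.star_def]
      rw [show (starRingEnd ℂ) (2⁻¹:ℂ) = 2⁻¹ from by rw [map_inv₀, map_ofNat]]
      rw [add_comm]
    · rw [star_smul, star_sub, star_star, Complex.star_def]
      rw [show (starRingEnd ℂ) (-(Complex.I) * 2⁻¹) = Complex.I * 2⁻¹ from by rw [map_mul, map_neg, Complex.conj_I, map_inv₀, map_ofNat, neg_neg]]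
      match_scalars <;> ring
    · rw [smul_smul, hIk]
      match_scalars <;> ring
  have ext1 : ∀ lam : ℂ, (∀ g : A, star g = g → lam • (Q * (Φ g * (1-Q))) = 0) → lam = 0 := by
    intro lam hlam
    by_contra hl0
    have hz : ∀ g : A, star g = g → Q * (Φ g * (1-Q)) = 0 := by
      intro g hg
      rcases smul_eq_zero.mp (hlam g hg) with h | h
      · exact absurd h hl0
      · exact h
    have hall : ∀ y : B, Q * y * (1-Q) = 0 := by
      intro y
      obtain ⟨a, ha⟩ := surj y
      obtain ⟨g, k, hgs, hks, hdx⟩ := hdec a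
      rw [← ha, hdx, hadd, hIs k hks]
      simp [mul_assoc, mul_add, add_mul, smul_mul_assoc, mul_smul_comm, hz g hgs, hz k hks]
    rcases hBprime Q (1-Q) hall with h | h
    · exact absurd h hQ0
    · exact absurd h hQ1
  have ext2 : ∀ lam : ℂ, (∀ g : A, star g = g → lam • ((1-Q) * (Φ g * Q)) = 0) → lam = 0 := by
    intro lam hlam
    by_contra hl0
    have hz : ∀ g : A, star g = g → (1-Q) * (Φ g * Q) = 0 := by
      intro g hg
      rcases smul_eq_zero.mp (hlam g hg) with h | h
      · exact absurd h hl0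
      · exact h
    have hall : ∀ y : B, (1-Q) * y * Q = 0 := by
      intro y
      obtain ⟨a, ha⟩ := surj y
      obtain ⟨g, k, hgs, hks, hdx⟩ := hdec a
      rw [← ha, hdx, hadd, hIs k hks]
      simp [mul_assoc, mul_add, add_mul, smul_mul_assoc, mul_smul_comm, hz g hgs, hz k hks]
    rcases hBprime (1-Q) Q hall with h | h
    · exact absurd h hQ1
    · exact absurd h hQ0
  -- the two scalar equations
  have E1 : (((starRingEnd ℂ) γ + (starRingEnd ℂ) ε * (starRingEnd ℂ) ε) * (γ*γ) * (c*c))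
      - (((c-1)*c) + ((c-1)*c)) = 0 := by
    apply ext1
    intro g hg
    rw [sub_smul, add_smul]
    linear_combination (norm := module) sand1 g hg + sand1 g hg - sand2 g hg
  have E2 : ((γ + ε*ε) * (c*c)) - ((((γ*γ*c - γ)*c)) + (((γ*γ*c - γ)*c))) = 0 := by
    apply ext2
    intro g hg
    rw [sub_smul, add_smul]
    linear_combination (norm := module) sand1' g hg + sand1' g hg - sand2' g hg
  -- solve for c and δ
  have h2c0 : (2:ℂ) - c ≠ 0 := by
    intro h
    have h2 : (starRingEnd ℂ) ((starRingEnd ℂ) c) = 0 := by rw [hcconj, h, map_zero]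
    rw [Complex.conj_conj] at h2
    exact hc0 h2
  have hγ' : (starRingEnd ℂ) γ = c / (2-c) := by
    rw [hγdef, map_div₀, map_sub, map_ofNat, hcconj]
    rw [show (2:ℂ) - (2 - c) = c from by ring]
  have hε' : (starRingEnd ℂ) ε = -δ / (2-c) := by
    rw [hεdef, map_div₀, hδconj, hcconj, neg_div]
  rw [hγ', hε', hγdef] at E1
  rw [hγdef, hεdef] at E2
  field_simp at E1 E2
  have T1 : c*(2-c) + δ*δ - 2*((c-1)*c) = 0 := by
    have h2 : (c*(2-c) + δ*δ - 2*((c-1)*c)) * (((2:ℂ)-c)^3 * c^2) = 0 := by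
      linear_combination E1 * (((2:ℂ)-c)^3 * c^2)
    rcases mul_eq_zero.mp h2 with h | h
    · exact h
    · exact absurd h (mul_ne_zero (pow_ne_zero _ h2c0) (pow_ne_zero _ hc0))
  have T2 : (2-c)*c + δ*δ - 2*((2-c)*(1-c)) = 0 := by
    have h2 : ((2-c)*c + δ*δ - 2*((2-c)*(1-c))) * (c^6) = 0 := by
      linear_combination E2 * (c^6)
    rcases mul_eq_zero.mp h2 with h | h
    · exact h
    · exact absurd h (pow_ne_zero _ hc0)
  have hc1 : c = 1 := by linear_combination (T2 - T1)/4
  have hδ2 : δ*δ = -1 := by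
    rw [hc1] at T1
    linear_combination T1
  have hγ1 : γ = 1 := by rw [hγdef, hc1]; norm_num
  have hεδ : ε = δ := by rw [hεdef, hc1, div_one]
  have hstar : ∀ a : A, Φ (star a) = star (Φ a) := by
    intro a
    rw [hstarf a, hc1]
    simp
  have hMsa : ∀ g h : A, star g = g → star h = h → Φ (g*h) = Φ g * Φ h := by
    intro g h hg hh
    have h1 := hPγ g h hg hh
    rw [hγ1, hεδ, hδconj] at h1
    have hs1 : (1 + 1*(δ*(starRingEnd ℂ) δ)) = (1:ℂ) + 1 := by
      rw [hδconj]; linear_combination -hδ2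
    rw [hδconj] at hs1
    have hs2 : ((1:ℂ) + δ*δ) = 0 := by linear_combination hδ2
    rw [hs1, hs2, zero_smul, add_zero, add_smul, one_smul] at h1
    exact aux_half h1
  have hIall : ∀ x : A, Φ (Complex.I • x) = δ • Φ x := by
    intro x
    obtain ⟨g, k, hgs, hks, hdx⟩ := hdec x
    have h1 : Complex.I • x = Complex.I • g + -k := by
      rw [hdx, smul_add, smul_smul, Complex.I_mul_I, neg_one_smul]
    rw [h1, hadd, hneg, hIs g hgs, hεδ]
    rw [hdx, hadd, hIs k hks, hεδ, smul_add, smul_smul, hδ2, neg_one_smul]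
  have hmul : ∀ a b : A, Φ (a * b) = Φ a * Φ b := by
    intro a b
    obtain ⟨g1, k1, hg1, hk1, hda⟩ := hdec a
    obtain ⟨g2, k2, hg2, hk2, hdb⟩ := hdec b
    have hab : a*b = (g1*g2 + -(k1*k2)) + Complex.I • (g1*k2 + k1*g2) := by
      rw [hda, hdb]
      simp only [mul_add, add_mul, smul_mul_assoc, mul_smul_comm, smul_smul,
        Complex.I_mul_I, neg_one_smul, smul_add]
      abel
    have hΦab : Φ (a*b) = Φ (g1*g2) + -Φ (k1*k2) + δ • (Φ (g1*k2) + Φ (k1*g2)) := by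
      rw [hab, hadd, hadd, hneg, hIall, hadd]
    have hΦa : Φ a = Φ g1 + δ • Φ k1 := by rw [hda, hadd, hIs k1 hk1, hεδ]
    have hΦb : Φ b = Φ g2 + δ • Φ k2 := by rw [hdb, hadd, hIs k2 hk2, hεδ]
    rw [hΦab, hΦa, hΦb, hMsa g1 g2 hg1 hg2, hMsa k1 k2 hk1 hk2, hMsa g1 k2 hg1 hk2,
      hMsa k1 g2 hk1 hg2]
    have hexp : (Φ g1 + δ • Φ k1)*(Φ g2 + δ • Φ k2)
        = Φ g1 * Φ g2 + δ • (Φ g1 * Φ k2) + δ • (Φ k1 * Φ g2) + (δ*δ) • (Φ k1 * Φ k2) := by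
      simp only [mul_add, add_mul, smul_mul_assoc, mul_smul_comm, smul_smul, smul_add]
      abel
    rw [hexp, hδ2, neg_one_smul, smul_add]
    abel
  exact ⟨hadd, hmul, hstar⟩
end

section
/- Let A and B be unital prime complex *-algebras whose centers equal ℂ·1 and which each contain a nontrivial projection. Then a bijective mapping Φ : A → B satisfies Φ(ab − ba*) = Φ(a)Φ(b) − Φ(b)Φ(a)* for all elements a, b ∈ A if and only if Φ is a *-ring isomorphism. -/
open Complex

set_option linter.unusedSectionVars false
set_option maxHeartbeats 1000000

namespace Stmt1
variable {R S : Type*}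

section DD
variable [Ring R] [Algebra ℂ R] [StarRing R] [StarModule ℂ R]
def dd (a b : R) : R := a * b - b * star a
lemma dd_add_right (a u v : R) : dd a (u + v) = dd a u + dd a v := by
  simp only [dd, mul_add, add_mul]; abel
lemma dd_add_left (u v b : R) : dd (u + v) b = dd u b + dd v b := by
  simp only [dd, star_add, mul_add, add_mul]; abel
lemma dd_sub_right (a u v : R) : dd a (u - v) = dd a u - dd a v := by
  simp only [dd, mul_sub, sub_mul]; abel
lemma dd_sub_left (u v b : R) : dd (u - v) b = dd u b - dd v b := by
  simp only [dd, star_sub, mul_sub, sub_mul]; abel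
lemma dd_zero_right (a : R) : dd a 0 = 0 := by simp [dd]
lemma dd_zero_left (b : R) : dd 0 b = 0 := by simp [dd]
lemma smul_cancel {r : ℂ} (hr : r ≠ 0) {x y : R} (h : r • x = r • y) : x = y := by
  have := congrArg (fun z => r⁻¹ • z) h
  simpa [smul_smul, inv_mul_cancel₀ hr] using this
lemma add_self_cancel {x y : R} (h : x + x = y + y) : x = y := by
  have h2 : (2:ℂ) • x = (2:ℂ) • y := by rw [two_smul, two_smul]; exact h
  exact smul_cancel two_ne_zero h2
lemma add_self_zero {x : R} (h : x + x = 0) : x = 0 :=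
  add_self_cancel (by rw [h, add_zero])
lemma smul_one_cancel (h1 : (1:R) ≠ 0) {r : ℂ} (h : r • (1:R) = 0) : r = 0 := by
  by_contra hr
  exact h1 (smul_cancel hr (by simpa using h))
lemma eq_zero_of_smul {r : ℂ} {x : R} (h : r • x = 0) (hr : r ≠ 0) : x = 0 := by
  have := congrArg (fun z => r⁻¹ • z) h
  simpa [smul_smul, inv_mul_cancel₀ hr] using this
lemma dd_I_one (x : R) : dd (I • (1:R)) x = (2*I) • x := by
  have h : star (I • (1:R)) = -(I • (1:R)) := by
    rw [star_smul]; simp [Complex.star_def]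
  simp only [dd, h, smul_mul_assoc, one_mul, mul_neg, mul_smul_comm, mul_one, sub_neg_eq_add]
  rw [← add_smul]; ring_nf
lemma star_I_smul (x : R) : star (I • x) = -(I • star x) := by
  rw [star_smul]; simp [Complex.star_def]
lemma idem_assoc {e : R} (hee : e*e = e) (x : R) : e*(e*x) = e*x := by
  rw [← mul_assoc, hee]
lemma zmul_assoc {e f : R} (hef : e*f = 0) (x : R) : e*(f*x) = 0 := by
  rw [← mul_assoc, hef, zero_mul]
end DD

section Main
variable [Ring R] [Algebra ℂ R] [StarRing R] [StarModule ℂ R]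
variable [Ring S] [Algebra ℂ S] [StarRing S] [StarModule ℂ S]
variable (Φ : R → S)
variable (hinj : Function.Injective Φ) (hsur : Function.Surjective Φ)
variable (hd : ∀ a b : R, Φ (dd a b) = dd (Φ a) (Φ b))

include hinj hsur hd in
lemma phi_zero : Φ 0 = 0 := by
  obtain ⟨z, hz⟩ := hsur 0
  have h : Φ (dd 0 z) = Φ z := by
    rw [hd, hz, dd_zero_right]
  have h0 : dd 0 z = z := hinj h
  rw [dd_zero_left] at h0
  rw [← hz, ← h0]

include hd in
lemma step {u v w : R} (h : Φ w = Φ u + Φ v) (y : R) :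
    Φ (dd y w) = Φ (dd y u) + Φ (dd y v) := by
  rw [hd, h, dd_add_right, ← hd, ← hd]

include hd in
lemma stepR {u v w : R} (h : Φ w = Φ u + Φ v) (y : R) :
    Φ (dd w y) = Φ (dd u y) + Φ (dd v y) := by
  rw [hd, h, dd_add_left, ← hd, ← hd]

include hd in
lemma step3 {u v w x : R} (h : Φ x = Φ u + Φ v + Φ w) (y : R) :
    Φ (dd y x) = Φ (dd y u) + Φ (dd y v) + Φ (dd y w) := by
  rw [hd, h, dd_add_right, dd_add_right, ← hd, ← hd, ← hd]

include hd in
lemma step4 {u v w z x : R} (h : Φ x = Φ u + Φ v + Φ w + Φ z) (y : R) :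
    Φ (dd y x) = Φ (dd y u) + Φ (dd y v) + Φ (dd y w) + Φ (dd y z) := by
  rw [hd, h, dd_add_right, dd_add_right, dd_add_right, ← hd, ← hd, ← hd, ← hd]

end Main

section Peirce
variable [Ring R] [Algebra ℂ R] [StarRing R] [StarModule ℂ R]
variable [Ring S] [Algebra ℂ S] [StarRing S] [StarModule ℂ S]
variable (Φ : R → S)
variable (hinj : Function.Injective Φ) (hsur : Function.Surjective Φ)
variable (hd : ∀ a b : R, Φ (dd a b) = dd (Φ a) (Φ b))
variable (hprime : ∀ a b : R, (∀ x : R, a * x * b = 0) → a = 0 ∨ b = 0)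
variable (hcent : ∀ a : R, (∀ x : R, a * x = x * a) → ∃ c : ℂ, a = c • (1 : R))
variable (h1R : (1:R) ≠ 0)
variable {e f : R}
variable (hef1 : e + f = 1)
variable (hee : e * e = e) (hff : f * f = f) (hef : e * f = 0) (hfe : f * e = 0)
variable (hse : star e = e) (hsf : star f = f)
variable (he0 : e ≠ 0) (hf0 : f ≠ 0)

include hprime in
lemma ann_left (hg : e ≠ 0) {c : R} (h : ∀ x, (e*x*f)*c = 0) : f*c = 0 := by
  refine (hprime e (f*c) fun x => ?_).resolve_left hg
  have := h x
  rw [mul_assoc (e*x) f c] at this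
  exact this

include hprime in
lemma ann_right (hg : f ≠ 0) {c : R} (h : ∀ x, c*(e*x*f) = 0) : c*e = 0 := by
  refine (hprime (c*e) f fun x => ?_).resolve_right hg
  have := h x
  simp only [← mul_assoc] at this ⊢
  exact this

include hse hsf in
lemma star_core (x : R) : star (e*x*f) = f*(star x)*e := by
  simp only [star_mul, hse, hsf, mul_assoc]

include hse hsf in
lemma off_kill {c : R} (h : ∀ x, dd (e*x*f) c = 0) :
    (∀ x, (e*x*f)*c = 0) ∧ (∀ x, c*(f*x*e) = 0) := by
  have key : ∀ x, (e*x*f)*c = 0 ∧ c*(f*(star x)*e) = 0 := by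
    intro x
    have h1 := h x
    have h2 := h (I • x)
    rw [dd] at h1 h2
    have hsm : e*(I • x)*f = I • (e*x*f) := by
      rw [mul_smul_comm, smul_mul_assoc]
    rw [hsm, star_I_smul, smul_mul_assoc, mul_neg, mul_smul_comm, sub_neg_eq_add] at h2
    rw [← smul_add] at h2
    have h2' : (e*x*f)*c + c * star (e*x*f) = 0 := smul_cancel I_ne_zero (by rw [h2, smul_zero])
    rw [star_core hse hsf] at h1 h2'
    have h3 : (e*x*f)*c + (e*x*f)*c =
        ((e*x*f)*c - c*(f*(star x)*e)) + ((e*x*f)*c + c*(f*(star x)*e)) := by abel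
    rw [h1, h2', add_zero] at h3
    have ha : (e*x*f)*c = 0 := add_self_zero h3
    rw [ha, zero_add] at h2'
    exact ⟨ha, h2'⟩
  refine ⟨fun x => (key x).1, fun x => ?_⟩
  have := (key (star x)).2
  rwa [star_star] at this

include hse in
lemma diag_kill {c : R} (h1 : dd e c = 0) (h2 : dd (I•e) c = 0) :
    e*c = 0 ∧ c*e = 0 := by
  rw [dd, hse] at h1
  rw [dd, star_I_smul, hse, smul_mul_assoc, mul_neg, mul_smul_comm, sub_neg_eq_add,
    ← smul_add] at h2
  have h2' : e*c + c*e = 0 := smul_cancel I_ne_zero (by rw [h2, smul_zero])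
  have h1' : e*c = c*e := sub_eq_zero.mp h1
  rw [← h1'] at h2'
  have hec : e*c = 0 := add_self_zero h2'
  exact ⟨hec, by rw [← h1', hec]⟩



lemma lemZ {n : R} (h : ∀ y : R, dd y n = 0) : n = 0 := by
  have key : ∀ y : R, y * n = 0 := by
    intro y
    have h1 := h y
    rw [dd] at h1
    have h2 := h (I • y)
    rw [dd, star_I_smul, smul_mul_assoc, mul_neg, mul_smul_comm, sub_neg_eq_add,
      ← smul_add] at h2
    have h2' : y*n + n*star y = 0 := smul_cancel I_ne_zero (by rw [h2, smul_zero])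
    have h3 : y*n + y*n = (y*n - n*star y) + (y*n + n*star y) := by abel
    rw [h1, h2', add_zero] at h3
    exact add_self_zero h3
  have := key 1
  rwa [one_mul] at this

include hinj hsur hd hprime hcent h1R hef1 hee hff hef hfe hse hsf he0 hf0 in
lemma pair_EF_FF (a b : R) :
    Φ (e*a*f + f*b*f) = Φ (e*a*f) + Φ (f*b*f) := by
  have hz := phi_zero Φ hinj hsur hd
  obtain ⟨t, ht⟩ := hsur (Φ (e*a*f) + Φ (f*b*f))
  set s := e*a*f + f*b*f with hs
  have hwe : dd e t = dd e s := by
    apply hinj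
    have z1 : dd e (e*a*f) = e*a*f := by simp only [dd, mul_assoc, smul_mul_assoc, mul_smul_comm, star_mul, star_star, star_smul, star_one, star_add, star_sub, star_neg, Complex.star_def, Complex.conj_I, neg_smul, smul_neg, mul_one, one_mul, mul_zero, zero_mul, smul_zero, zero_add, add_zero, sub_zero, zero_sub, sub_self, neg_zero, mul_neg, neg_mul, neg_neg, hse, hsf, hee, hff, hef, hfe, idem_assoc hee, idem_assoc hff, zmul_assoc hef, zmul_assoc hfe]
    have z2 : dd e (f*b*f) = 0 := by simp only [dd, mul_assoc, smul_mul_assoc, mul_smul_comm, star_mul, star_star, star_smul, star_one, star_add, star_sub, star_neg, Complex.star_def, Complex.conj_I, neg_smul, smul_neg, mul_one, one_mul, mul_zero, zero_mul, smul_zero, zero_add, add_zero, sub_zero, zero_sub, sub_self, neg_zero, mul_neg, neg_mul, neg_neg, hse, hsf, hee, hff, hef, hfe, idem_assoc hee, idem_assoc hff, zmul_assoc hef, zmul_assoc hfe]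
    rw [step Φ hd ht e, hs, dd_add_right, z1, z2, hz, add_zero, add_zero]
  have hwie : dd (I•e) t = dd (I•e) s := by
    apply hinj
    have z1 : dd (I•e) (e*a*f) = I•(e*a*f) := by simp only [dd, mul_assoc, smul_mul_assoc, mul_smul_comm, star_mul, star_star, star_smul, star_one, star_add, star_sub, star_neg, Complex.star_def, Complex.conj_I, neg_smul, smul_neg, mul_one, one_mul, mul_zero, zero_mul, smul_zero, zero_add, add_zero, sub_zero, zero_sub, sub_self, neg_zero, mul_neg, neg_mul, neg_neg, hse, hsf, hee, hff, hef, hfe, idem_assoc hee, idem_assoc hff, zmul_assoc hef, zmul_assoc hfe]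
    have z2 : dd (I•e) (f*b*f) = 0 := by simp only [dd, mul_assoc, smul_mul_assoc, mul_smul_comm, star_mul, star_star, star_smul, star_one, star_add, star_sub, star_neg, Complex.star_def, Complex.conj_I, neg_smul, smul_neg, mul_one, one_mul, mul_zero, zero_mul, smul_zero, zero_add, add_zero, sub_zero, zero_sub, sub_self, neg_zero, mul_neg, neg_mul, neg_neg, hse, hsf, hee, hff, hef, hfe, idem_assoc hee, idem_assoc hff, zmul_assoc hef, zmul_assoc hfe]
    rw [step Φ hd ht (I•e), hs, dd_add_right, z1, z2, hz, add_zero, add_zero]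
  have hd1 : dd e (t - s) = 0 := by rw [dd_sub_right, hwe, sub_self]
  have hd2 : dd (I•e) (t - s) = 0 := by rw [dd_sub_right, hwie, sub_self]
  obtain ⟨hec, hce⟩ := diag_kill hse hd1 hd2
  set c := t - s with hcdef
  have hfc : f*c = c := by
    have h' : (e+f)*c = 1*c := by rw [hef1]
    rw [add_mul, hec, zero_add, one_mul] at h'
    exact h'
  have hcf : c*f = c := by
    have h' : c*(e+f) = c*1 := by rw [hef1]
    rw [mul_add, hce, zero_add, mul_one] at h'
    exact h'
  have hfc' : ∀ z, f*(c*z) = c*z := fun z => by rw [← mul_assoc, hfc]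
  have hw2 : ∀ x y, dd (e*y*f) (dd (e*x*f) c) = 0 := by
    intro x y
    have h1 : Φ (dd (e*x*f) t) = Φ (dd (e*x*f) (e*a*f)) + Φ (dd (e*x*f) (f*b*f)) :=
      step Φ hd ht _
    have h2 : Φ (dd (e*y*f) (dd (e*x*f) t)) = Φ (dd (e*y*f) (dd (e*x*f) (e*a*f)))
        + Φ (dd (e*y*f) (dd (e*x*f) (f*b*f))) := step Φ hd h1 _
    have hzA : dd (e*y*f) (dd (e*x*f) (e*a*f)) = 0 := by simp only [dd, mul_assoc, smul_mul_assoc, mul_smul_comm, star_mul, star_star, star_smul, star_one, star_add, star_sub, star_neg, Complex.star_def, Complex.conj_I, neg_smul, smul_neg, mul_one, one_mul, mul_zero, zero_mul, smul_zero, zero_add, add_zero, sub_zero, zero_sub, sub_self, neg_zero, mul_neg, neg_mul, neg_neg, hse, hsf, hee, hff, hef, hfe, idem_assoc hee, idem_assoc hff, zmul_assoc hef, zmul_assoc hfe]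
    have heq : dd (e*y*f) (dd (e*x*f) t) = dd (e*y*f) (dd (e*x*f) s) := by
      apply hinj
      rw [h2, hzA, hz, zero_add, hs, dd_add_right, dd_add_right, hzA, zero_add]
    rw [hcdef, dd_sub_right, dd_sub_right, heq, sub_self]
  have hcfe : ∀ z, c*(f*z*e) = 0 := by
    have h' : ∀ x, c*(f*(star x)*e) = 0 := by
      intro x
      have hfm : ∀ y, (e*y*f) * (dd (e*x*f) c) = 0 := fun y =>
        (off_kill hse hsf (fun y' => hw2 x y')).1 y
      have hfmzero : f * dd (e*x*f) c = 0 := ann_left hprime he0 hfm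
      have hcomp : f * dd (e*x*f) c = -(c*(f*(star x)*e)) := by
        simp only [dd, mul_assoc, smul_mul_assoc, mul_smul_comm, star_mul, star_star, star_smul, star_one, star_add, star_sub, star_neg, Complex.star_def, Complex.conj_I, neg_smul, smul_neg, mul_one, one_mul, mul_zero, zero_mul, smul_zero, zero_add, add_zero, sub_zero, zero_sub, sub_self, neg_zero, mul_neg, neg_mul, neg_neg, hse, hsf, hee, hff, hef, hfe, idem_assoc hee, idem_assoc hff, zmul_assoc hef, zmul_assoc hfe, hfc', mul_sub]
      rw [hcomp] at hfmzero
      exact neg_eq_zero.mp hfmzero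
    intro z
    have := h' (star z)
    rwa [star_star] at this
  have hcf0 : c*f = 0 := ann_right (e := f) (f := e) hprime he0 hcfe
  have hc0 : c = 0 := by rw [← hcf, hcf0]
  have hts : t = s := by
    have := sub_eq_zero.mp hc0
    exact this
  rw [← ht, hts]

include hinj hsur hd hprime hcent h1R hef1 hee hff hef hfe hse hsf he0 hf0 in
lemma pair_EF_EE (a b : R) :
    Φ (e*a*f + e*b*e) = Φ (e*a*f) + Φ (e*b*e) := by
  have hz := phi_zero Φ hinj hsur hd
  obtain ⟨t, ht⟩ := hsur (Φ (e*a*f) + Φ (e*b*e))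
  set s := e*a*f + e*b*e with hs
  have hwf : dd f t = dd f s := by
    apply hinj
    have z1 : dd f (e*a*f) = -(e*a*f) := by simp only [dd, mul_assoc, smul_mul_assoc, mul_smul_comm, star_mul, star_star, star_smul, star_one, star_add, star_sub, star_neg, Complex.star_def, Complex.conj_I, neg_smul, smul_neg, mul_one, one_mul, mul_zero, zero_mul, smul_zero, zero_add, add_zero, sub_zero, zero_sub, sub_self, neg_zero, mul_neg, neg_mul, neg_neg, sub_neg_eq_add, hse, hsf, hee, hff, hef, hfe, idem_assoc hee, idem_assoc hff, zmul_assoc hef, zmul_assoc hfe]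
    have z2 : dd f (e*b*e) = 0 := by simp only [dd, mul_assoc, smul_mul_assoc, mul_smul_comm, star_mul, star_star, star_smul, star_one, star_add, star_sub, star_neg, Complex.star_def, Complex.conj_I, neg_smul, smul_neg, mul_one, one_mul, mul_zero, zero_mul, smul_zero, zero_add, add_zero, sub_zero, zero_sub, sub_self, neg_zero, mul_neg, neg_mul, neg_neg, sub_neg_eq_add, hse, hsf, hee, hff, hef, hfe, idem_assoc hee, idem_assoc hff, zmul_assoc hef, zmul_assoc hfe]
    rw [step Φ hd ht f, hs, dd_add_right, z1, z2, hz, add_zero, add_zero]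
  have hwif : dd (I•f) t = dd (I•f) s := by
    apply hinj
    have z1 : dd (I•f) (e*a*f) = I•(e*a*f) := by simp only [dd, mul_assoc, smul_mul_assoc, mul_smul_comm, star_mul, star_star, star_smul, star_one, star_add, star_sub, star_neg, Complex.star_def, Complex.conj_I, neg_smul, smul_neg, mul_one, one_mul, mul_zero, zero_mul, smul_zero, zero_add, add_zero, sub_zero, zero_sub, sub_self, neg_zero, mul_neg, neg_mul, neg_neg, sub_neg_eq_add, hse, hsf, hee, hff, hef, hfe, idem_assoc hee, idem_assoc hff, zmul_assoc hef, zmul_assoc hfe]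
    have z2 : dd (I•f) (e*b*e) = 0 := by simp only [dd, mul_assoc, smul_mul_assoc, mul_smul_comm, star_mul, star_star, star_smul, star_one, star_add, star_sub, star_neg, Complex.star_def, Complex.conj_I, neg_smul, smul_neg, mul_one, one_mul, mul_zero, zero_mul, smul_zero, zero_add, add_zero, sub_zero, zero_sub, sub_self, neg_zero, mul_neg, neg_mul, neg_neg, sub_neg_eq_add, hse, hsf, hee, hff, hef, hfe, idem_assoc hee, idem_assoc hff, zmul_assoc hef, zmul_assoc hfe]
    rw [step Φ hd ht (I•f), hs, dd_add_right, z1, z2, hz, add_zero, add_zero]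
  have hd1 : dd f (t - s) = 0 := by rw [dd_sub_right, hwf, sub_self]
  have hd2 : dd (I•f) (t - s) = 0 := by rw [dd_sub_right, hwif, sub_self]
  obtain ⟨hfc0, hcf0⟩ := diag_kill (e := f) hsf hd1 hd2
  set c := t - s with hcdef
  have hec : e*c = c := by
    have h' : (e+f)*c = 1*c := by rw [hef1]
    rw [add_mul, hfc0, add_zero, one_mul] at h'
    exact h'
  have hce : c*e = c := by
    have h' : c*(e+f) = c*1 := by rw [hef1]
    rw [mul_add, hcf0, add_zero, mul_one] at h'
    exact h'
  have hec' : ∀ z, e*(c*z) = c*z := fun z => by rw [← mul_assoc, hec]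
  have hw2 : ∀ x y, dd (f*y*e) (dd (f*x*e) c) = 0 := by
    intro x y
    have h1 : Φ (dd (f*x*e) t) = Φ (dd (f*x*e) (e*a*f)) + Φ (dd (f*x*e) (e*b*e)) :=
      step Φ hd ht _
    have h2 : Φ (dd (f*y*e) (dd (f*x*e) t)) = Φ (dd (f*y*e) (dd (f*x*e) (e*a*f)))
        + Φ (dd (f*y*e) (dd (f*x*e) (e*b*e))) := step Φ hd h1 _
    have hzA : dd (f*y*e) (dd (f*x*e) (e*a*f)) = 0 := by simp only [dd, mul_assoc, smul_mul_assoc, mul_smul_comm, star_mul, star_star, star_smul, star_one, star_add, star_sub, star_neg, Complex.star_def, Complex.conj_I, neg_smul, smul_neg, mul_one, one_mul, mul_zero, zero_mul, smul_zero, zero_add, add_zero, sub_zero, zero_sub, sub_self, neg_zero, mul_neg, neg_mul, neg_neg, sub_neg_eq_add, hse, hsf, hee, hff, hef, hfe, idem_assoc hee, idem_assoc hff, zmul_assoc hef, zmul_assoc hfe]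
    have heq : dd (f*y*e) (dd (f*x*e) t) = dd (f*y*e) (dd (f*x*e) s) := by
      apply hinj
      rw [h2, hzA, hz, zero_add, hs, dd_add_right, dd_add_right, hzA, zero_add]
    rw [hcdef, dd_sub_right, dd_sub_right, heq, sub_self]
  have hcef : ∀ z, c*(e*z*f) = 0 := by
    have h' : ∀ x, c*(e*(star x)*f) = 0 := by
      intro x
      have hfm : ∀ y, (f*y*e) * (dd (f*x*e) c) = 0 := fun y =>
        (off_kill (e := f) (f := e) hsf hse (fun y' => hw2 x y')).1 y
      have hfmzero : e * dd (f*x*e) c = 0 :=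
        ann_left (e := f) (f := e) hprime hf0 hfm
      have hcomp : e * dd (f*x*e) c = -(c*(e*(star x)*f)) := by
        simp only [dd, mul_assoc, smul_mul_assoc, mul_smul_comm, star_mul, star_star, star_smul, star_one, star_add, star_sub, star_neg, Complex.star_def, Complex.conj_I, neg_smul, smul_neg, mul_one, one_mul, mul_zero, zero_mul, smul_zero, zero_add, add_zero, sub_zero, zero_sub, sub_self, neg_zero, mul_neg, neg_mul, neg_neg, sub_neg_eq_add, hse, hsf, hee, hff, hef, hfe, idem_assoc hee, idem_assoc hff, zmul_assoc hef, zmul_assoc hfe, hec', mul_sub]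
      rw [hcomp] at hfmzero
      exact neg_eq_zero.mp hfmzero
    intro z
    have := h' (star z)
    rwa [star_star] at this
  have hce0 : c*e = 0 := ann_right hprime hf0 hcef
  have hc0 : c = 0 := by rw [← hce, hce0]
  have hts : t = s := sub_eq_zero.mp hc0
  rw [← ht, hts]

include hinj hsur hd hprime hcent h1R hef1 hee hff hef hfe hse hsf he0 hf0 in
lemma weak_A (a b : R) :
    ∃ r : ℝ, Φ (e*a*f) + Φ (f*b*e) = Φ (e*a*f + f*b*e + ((r:ℂ))•(1:R)) := by
  have hz := phi_zero Φ hinj hsur hd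
  obtain ⟨t, ht⟩ := hsur (Φ (e*a*f) + Φ (f*b*e))
  set s := e*a*f + f*b*e with hs
  -- first order R-words at e and f
  have hwe : dd t e = dd s e := by
    apply hinj
    have z1 : dd (e*a*f) e = 0 := by simp only [dd, mul_assoc, smul_mul_assoc, mul_smul_comm, star_mul, star_star, star_smul, star_one, star_add, star_sub, star_neg, Complex.star_def, Complex.conj_I, neg_smul, smul_neg, mul_one, one_mul, mul_zero, zero_mul, smul_zero, zero_add, add_zero, sub_zero, zero_sub, sub_self, neg_zero, mul_neg, neg_mul, neg_neg, sub_neg_eq_add, hse, hsf, hee, hff, hef, hfe, idem_assoc hee, idem_assoc hff, zmul_assoc hef, zmul_assoc hfe]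
    rw [stepR Φ hd ht e, z1, hz, zero_add, hs, dd_add_left, z1, zero_add]
  have hwf : dd t f = dd s f := by
    apply hinj
    have z2 : dd (f*b*e) f = 0 := by simp only [dd, mul_assoc, smul_mul_assoc, mul_smul_comm, star_mul, star_star, star_smul, star_one, star_add, star_sub, star_neg, Complex.star_def, Complex.conj_I, neg_smul, smul_neg, mul_one, one_mul, mul_zero, zero_mul, smul_zero, zero_add, add_zero, sub_zero, zero_sub, sub_self, neg_zero, mul_neg, neg_mul, neg_neg, sub_neg_eq_add, hse, hsf, hee, hff, hef, hfe, idem_assoc hee, idem_assoc hff, zmul_assoc hef, zmul_assoc hfe]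
    rw [stepR Φ hd ht f, z2, hz, add_zero, hs, dd_add_left, z2, add_zero]
  set c := t - s with hcdef
  have hre : dd c e = 0 := by rw [hcdef, dd_sub_left, hwe, sub_self]
  have hrf : dd c f = 0 := by rw [hcdef, dd_sub_left, hwf, sub_self]
  rw [dd] at hre
  rw [dd] at hrf
  have hre' : c*e = e*star c := sub_eq_zero.mp hre
  have hrf' : c*f = f*star c := sub_eq_zero.mp hrf
  have hcstar : star c = c := by
    have h1 : c*e + c*f = e*star c + f*star c := by rw [hre', hrf']
    rw [← mul_add, ← add_mul, hef1, mul_one, one_mul] at h1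
    exact h1.symm
  have hce : c*e = e*c := by rw [hre', hcstar]
  have hcf : c*f = f*c := by rw [hrf', hcstar]
  -- useful assoc facts
  have hece : e*(c*e) = c*e := by rw [hce, idem_assoc hee]
  have hfcf : f*(c*f) = c*f := by rw [hcf, idem_assoc hff]
  have hce2 : ∀ z, e*(c*(e*z)) = c*(e*z) := by
    intro z
    rw [← mul_assoc c e z, ← mul_assoc e (c*e) z, hece]
  have hcf2 : ∀ z, f*(c*(f*z)) = c*(f*z) := by
    intro z
    rw [← mul_assoc c f z, ← mul_assoc f (c*f) z, hfcf]
  -- commutation with corner A_ef elements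
  have hcommEF : ∀ z, c*(e*z*f) = (e*z*f)*c := by
    intro z
    -- second-order R-word: R_{fyf} ∘ R_{ezf}
    have hw : ∀ y, dd (dd c (e*z*f)) (f*y*f) = 0 := by
      intro y
      have h1 : Φ (dd t (e*z*f)) = Φ (dd (e*a*f) (e*z*f)) + Φ (dd (f*b*e) (e*z*f)) :=
        stepR Φ hd ht _
      have h2 : Φ (dd (dd t (e*z*f)) (f*y*f)) =
          Φ (dd (dd (e*a*f) (e*z*f)) (f*y*f)) + Φ (dd (dd (f*b*e) (e*z*f)) (f*y*f)) :=
        stepR Φ hd h1 _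
      have hzA : dd (dd (e*a*f) (e*z*f)) (f*y*f) = 0 := by simp only [dd, mul_assoc, smul_mul_assoc, mul_smul_comm, star_mul, star_star, star_smul, star_one, star_add, star_sub, star_neg, Complex.star_def, Complex.conj_I, neg_smul, smul_neg, mul_one, one_mul, mul_zero, zero_mul, smul_zero, zero_add, add_zero, sub_zero, zero_sub, sub_self, neg_zero, mul_neg, neg_mul, neg_neg, sub_neg_eq_add, hse, hsf, hee, hff, hef, hfe, idem_assoc hee, idem_assoc hff, zmul_assoc hef, zmul_assoc hfe]
      have heq : dd (dd t (e*z*f)) (f*y*f) = dd (dd s (e*z*f)) (f*y*f) := by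
        apply hinj
        rw [h2, hzA, hz, zero_add, hs, dd_add_left, dd_add_left, hzA, zero_add]
      rw [hcdef, dd_sub_left, dd_sub_left, heq, sub_self]
    set m := dd c (e*z*f) with hm
    have hem : e*m = m := by
      rw [hm, dd, hcstar, mul_sub]
      rw [show e*(c*(e*z*f)) = c*(e*z*f) from by
        rw [mul_assoc e z f, hce2 (z*f), ← mul_assoc e z f]]
      rw [show e*(e*z*f*c) = e*z*f*c from by
        rw [mul_assoc (e*z) f c, mul_assoc e z (f*c), idem_assoc hee,
          ← mul_assoc e z (f*c), ← mul_assoc (e*z) f c]]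
    have hmf : ∀ y, m*(f*y*f) = 0 := by
      intro y
      have h' := hw y
      rw [dd] at h'
      have h'' : m*(f*y*f) = (f*y*f)*star m := sub_eq_zero.mp h'
      have h3 : e*(m*(f*y*f)) = e*((f*y*f)*star m) := by rw [h'']
      rw [← mul_assoc e m (f*y*f), hem] at h3
      rw [h3, ← mul_assoc e (f*y*f) (star m), ← mul_assoc e (f*y) f,
        ← mul_assoc e f y, hef, zero_mul, zero_mul, zero_mul]
    have hmf0 : m*f = 0 := ann_right (e := f) (f := f) hprime hf0 hmf
    have hmfm : m*f = m := by
      rw [hm, dd, hcstar, sub_mul, mul_assoc c (e*z*f) f, mul_assoc (e*z*f) c f]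
      rw [mul_assoc (e*z) f f, hff]
      rw [hcf, ← mul_assoc (e*z*f) f c, mul_assoc (e*z) f f, hff]
    have hm0 : m = 0 := by rw [← hmfm, hmf0]
    rw [hm, dd, hcstar, sub_eq_zero] at hm0
    exact hm0
  -- commutation with corner A_fe elements
  have hcommFE : ∀ z, c*(f*z*e) = (f*z*e)*c := by
    intro z
    have hw : ∀ y, dd (dd c (f*z*e)) (e*y*e) = 0 := by
      intro y
      have h1 : Φ (dd t (f*z*e)) = Φ (dd (e*a*f) (f*z*e)) + Φ (dd (f*b*e) (f*z*e)) :=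
        stepR Φ hd ht _
      have h2 : Φ (dd (dd t (f*z*e)) (e*y*e)) =
          Φ (dd (dd (e*a*f) (f*z*e)) (e*y*e)) + Φ (dd (dd (f*b*e) (f*z*e)) (e*y*e)) :=
        stepR Φ hd h1 _
      have hzB : dd (dd (f*b*e) (f*z*e)) (e*y*e) = 0 := by simp only [dd, mul_assoc, smul_mul_assoc, mul_smul_comm, star_mul, star_star, star_smul, star_one, star_add, star_sub, star_neg, Complex.star_def, Complex.conj_I, neg_smul, smul_neg, mul_one, one_mul, mul_zero, zero_mul, smul_zero, zero_add, add_zero, sub_zero, zero_sub, sub_self, neg_zero, mul_neg, neg_mul, neg_neg, sub_neg_eq_add, hse, hsf, hee, hff, hef, hfe, idem_assoc hee, idem_assoc hff, zmul_assoc hef, zmul_assoc hfe]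
      have heq : dd (dd t (f*z*e)) (e*y*e) = dd (dd s (f*z*e)) (e*y*e) := by
        apply hinj
        rw [h2, hzB, hz, add_zero, hs, dd_add_left, dd_add_left, hzB, add_zero]
      rw [hcdef, dd_sub_left, dd_sub_left, heq, sub_self]
    set m := dd c (f*z*e) with hm
    have hfm : f*m = m := by
      rw [hm, dd, hcstar, mul_sub]
      rw [show f*(c*(f*z*e)) = c*(f*z*e) from by
        rw [mul_assoc f z e, hcf2 (z*e), ← mul_assoc f z e]]
      rw [show f*(f*z*e*c) = f*z*e*c from by
        rw [mul_assoc (f*z) e c, mul_assoc f z (e*c), idem_assoc hff,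
          ← mul_assoc f z (e*c), ← mul_assoc (f*z) e c]]
    have hme : ∀ y, m*(e*y*e) = 0 := by
      intro y
      have h' := hw y
      rw [dd] at h'
      have h'' : m*(e*y*e) = (e*y*e)*star m := sub_eq_zero.mp h'
      have h3 : f*(m*(e*y*e)) = f*((e*y*e)*star m) := by rw [h'']
      rw [← mul_assoc f m (e*y*e), hfm] at h3
      rw [h3, ← mul_assoc f (e*y*e) (star m), ← mul_assoc f (e*y) e,
        ← mul_assoc f e y, hfe, zero_mul, zero_mul, zero_mul]
    have hme0 : m*e = 0 := ann_right (e := e) (f := e) hprime he0 hme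
    have hmem : m*e = m := by
      rw [hm, dd, hcstar, sub_mul, mul_assoc c (f*z*e) e, mul_assoc (f*z*e) c e]
      rw [mul_assoc (f*z) e e, hee]
      rw [hce, ← mul_assoc (f*z*e) e c, mul_assoc (f*z) e e, hee]
    have hm0 : m = 0 := by rw [← hmem, hme0]
    rw [hm, dd, hcstar, sub_eq_zero] at hm0
    exact hm0
  -- commutation with diagonal corners via words based at R_{eze}, R_{fzf}
  have hcommEE : ∀ z, c*(e*z*e) = (e*z*e)*c := by
    intro z
    have hw : ∀ y, dd y (dd c (e*z*e)) = 0 := by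
      intro y
      have h1 : Φ (dd t (e*z*e)) = Φ (dd (e*a*f) (e*z*e)) + Φ (dd (f*b*e) (e*z*e)) :=
        stepR Φ hd ht _
      have h2 : Φ (dd y (dd t (e*z*e))) =
          Φ (dd y (dd (e*a*f) (e*z*e))) + Φ (dd y (dd (f*b*e) (e*z*e))) :=
        step Φ hd h1 _
      have hzA : dd (e*a*f) (e*z*e) = 0 := by simp only [dd, mul_assoc, smul_mul_assoc, mul_smul_comm, star_mul, star_star, star_smul, star_one, star_add, star_sub, star_neg, Complex.star_def, Complex.conj_I, neg_smul, smul_neg, mul_one, one_mul, mul_zero, zero_mul, smul_zero, zero_add, add_zero, sub_zero, zero_sub, sub_self, neg_zero, mul_neg, neg_mul, neg_neg, sub_neg_eq_add, hse, hsf, hee, hff, hef, hfe, idem_assoc hee, idem_assoc hff, zmul_assoc hef, zmul_assoc hfe]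
      have heq : dd y (dd t (e*z*e)) = dd y (dd s (e*z*e)) := by
        apply hinj
        rw [h2, hzA, dd_zero_right, hz, zero_add, hs, dd_add_left, hzA, zero_add]
      rw [hcdef, dd_sub_left, dd_sub_right, heq, sub_self]
    have hn := lemZ (fun y => hw y)
    rw [dd, hcstar, sub_eq_zero] at hn
    exact hn
  have hcommFF : ∀ z, c*(f*z*f) = (f*z*f)*c := by
    intro z
    have hw : ∀ y, dd y (dd c (f*z*f)) = 0 := by
      intro y
      have h1 : Φ (dd t (f*z*f)) = Φ (dd (e*a*f) (f*z*f)) + Φ (dd (f*b*e) (f*z*f)) :=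
        stepR Φ hd ht _
      have h2 : Φ (dd y (dd t (f*z*f))) =
          Φ (dd y (dd (e*a*f) (f*z*f))) + Φ (dd y (dd (f*b*e) (f*z*f))) :=
        step Φ hd h1 _
      have hzB : dd (f*b*e) (f*z*f) = 0 := by simp only [dd, mul_assoc, smul_mul_assoc, mul_smul_comm, star_mul, star_star, star_smul, star_one, star_add, star_sub, star_neg, Complex.star_def, Complex.conj_I, neg_smul, smul_neg, mul_one, one_mul, mul_zero, zero_mul, smul_zero, zero_add, add_zero, sub_zero, zero_sub, sub_self, neg_zero, mul_neg, neg_mul, neg_neg, sub_neg_eq_add, hse, hsf, hee, hff, hef, hfe, idem_assoc hee, idem_assoc hff, zmul_assoc hef, zmul_assoc hfe]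
      have heq : dd y (dd t (f*z*f)) = dd y (dd s (f*z*f)) := by
        apply hinj
        rw [h2, hzB, dd_zero_right, hz, add_zero, hs, dd_add_left, hzB, add_zero]
      rw [hcdef, dd_sub_left, dd_sub_right, heq, sub_self]
    have hn := lemZ (fun y => hw y)
    rw [dd, hcstar, sub_eq_zero] at hn
    exact hn
  -- c is central
  have hcen : ∀ y : R, c * y = y * c := by
    intro y
    have hyd : e*y*e + e*y*f + f*y*e + f*y*f = y := by
      have h' : (e+f)*y*(e+f) = y := by rw [hef1, one_mul, mul_one]
      conv_rhs => rw [← h']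
      simp only [add_mul, mul_add]
      abel
    have h1 : c*y = c*(e*y*e) + c*(e*y*f) + c*(f*y*e) + c*(f*y*f) := by
      conv_lhs => rw [← hyd]
      simp only [mul_add]
    have h2 : y*c = (e*y*e)*c + (e*y*f)*c + (f*y*e)*c + (f*y*f)*c := by
      conv_lhs => rw [← hyd]
      simp only [add_mul]
    rw [h1, h2, hcommEE y, hcommEF y, hcommFE y, hcommFF y]
  obtain ⟨r, hr⟩ := hcent c hcen
  have hrreal : (starRingEnd ℂ) r = r := by
    have h' : star c = c := hcstar
    rw [hr, star_smul, star_one, Complex.star_def] at h'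
    have h2 : ((starRingEnd ℂ) r - r)•(1:R) = 0 := by rw [sub_smul, h', sub_self]
    have h3 := smul_one_cancel h1R h2
    exact sub_eq_zero.mp h3
  have him : r.im = 0 := Complex.conj_eq_iff_im.mp hrreal
  refine ⟨r.re, ?_⟩
  have hrc : ((r.re : ℝ) : ℂ) = r := Complex.ext rfl (by simp [him])
  rw [← ht]
  have ht2 : t = s + ((r.re:ℝ):ℂ)•(1:R) := by
    rw [hrc, ← hr, hcdef]; abel
  rw [ht2]

include hinj hsur hd hprime hcent h1R hef1 hee hff hef hfe hse hsf he0 hf0 in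
lemma pair_A (a b : R) :
    Φ (e*a*f + f*b*e) = Φ (e*a*f) + Φ (f*b*e) := by
  obtain ⟨r, hr⟩ := weak_A Φ hinj hsur hd hprime hcent h1R hef1 hee hff hef hfe hse hsf
    he0 hf0 a b
  obtain ⟨r', hr'⟩ := weak_A Φ hinj hsur hd hprime hcent h1R hef1 hee hff hef hfe hse hsf
    he0 hf0 ((2*I)•a) ((2*I)•b)
  have hA2 : e*((2*I)•a)*f = (2*I)•(e*a*f) := by rw [mul_smul_comm, smul_mul_assoc]
  have hB2 : f*((2*I)•b)*e = (2*I)•(f*b*e) := by rw [mul_smul_comm, smul_mul_assoc]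
  rw [hA2, hB2] at hr'
  set s := e*a*f + f*b*e + ((r:ℝ):ℂ)•(1:R) with hs
  have key : dd (I•(1:R)) s = (2*I)•(e*a*f) + (2*I)•(f*b*e) + ((r':ℝ):ℂ)•(1:R) := by
    apply hinj
    have hstep := step Φ hd hr.symm (I•(1:R))
    rw [dd_I_one, dd_I_one, dd_I_one] at hstep
    rw [dd_I_one, hstep, hr']
  have key2 : dd (I•(1:R)) s = (2*I)•(e*a*f) + (2*I)•(f*b*e) + ((2*I)*((r:ℝ):ℂ))•(1:R) := by
    rw [dd_I_one, hs, smul_add, smul_add, smul_smul]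
  rw [key2] at key
  have hscal : ((2*I)*((r:ℝ):ℂ))•(1:R) = ((r':ℝ):ℂ)•(1:R) := by
    have := key
    exact add_left_cancel this
  have hscal2 : ((2*I)*((r:ℝ):ℂ) - ((r':ℝ):ℂ))•(1:R) = 0 := by
    rw [sub_smul, hscal, sub_self]
  have hscal3 : (2*I)*((r:ℝ):ℂ) - ((r':ℝ):ℂ) = 0 := smul_one_cancel h1R hscal2
  have hr0 : r = 0 := by
    have h4 : (2*I)*((r:ℝ):ℂ) = ((r':ℝ):ℂ) := sub_eq_zero.mp hscal3
    have h5 := congrArg Complex.im h4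
    simp [Complex.mul_im] at h5
    -- h5 should give 2 * r = 0  (im of RHS is 0)
    linarith [h5]
  rw [hs, hr0] at hr
  simpa using hr.symm

include hinj hsur hd hprime hcent h1R hef1 hee hff hef hfe hse hsf he0 hf0 in
lemma triple_EFE (a u v : R) :
    Φ (e*a*e + e*u*f + f*v*e) = Φ (e*a*e) + Φ (e*u*f) + Φ (f*v*e) := by
  have hz := phi_zero Φ hinj hsur hd
  have PA := pair_A Φ hinj hsur hd hprime hcent h1R hef1 hee hff hef hfe hse hsf he0 hf0
  obtain ⟨t, ht⟩ := hsur (Φ (e*a*e) + Φ (e*u*f) + Φ (f*v*e))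
  set s := e*a*e + e*u*f + f*v*e with hs
  have hwf : dd f t = dd f s := by
    apply hinj
    have z1 : dd f (e*a*e) = 0 := by simp only [dd, mul_assoc, smul_mul_assoc, mul_smul_comm, star_mul, star_star, star_smul, star_one, star_add, star_sub, star_neg, Complex.star_def, Complex.conj_I, neg_smul, smul_neg, mul_one, one_mul, mul_zero, zero_mul, smul_zero, zero_add, add_zero, sub_zero, zero_sub, sub_self, neg_zero, mul_neg, neg_mul, neg_neg, sub_neg_eq_add, hse, hsf, hee, hff, hef, hfe, idem_assoc hee, idem_assoc hff, zmul_assoc hef, zmul_assoc hfe]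
    have z2 : dd f (e*u*f) = -(e*u*f) := by simp only [dd, mul_assoc, smul_mul_assoc, mul_smul_comm, star_mul, star_star, star_smul, star_one, star_add, star_sub, star_neg, Complex.star_def, Complex.conj_I, neg_smul, smul_neg, mul_one, one_mul, mul_zero, zero_mul, smul_zero, zero_add, add_zero, sub_zero, zero_sub, sub_self, neg_zero, mul_neg, neg_mul, neg_neg, sub_neg_eq_add, hse, hsf, hee, hff, hef, hfe, idem_assoc hee, idem_assoc hff, zmul_assoc hef, zmul_assoc hfe]
    have z3 : dd f (f*v*e) = f*v*e := by simp only [dd, mul_assoc, smul_mul_assoc, mul_smul_comm, star_mul, star_star, star_smul, star_one, star_add, star_sub, star_neg, Complex.star_def, Complex.conj_I, neg_smul, smul_neg, mul_one, one_mul, mul_zero, zero_mul, smul_zero, zero_add, add_zero, sub_zero, zero_sub, sub_self, neg_zero, mul_neg, neg_mul, neg_neg, sub_neg_eq_add, hse, hsf, hee, hff, hef, hfe, idem_assoc hee, idem_assoc hff, zmul_assoc hef, zmul_assoc hfe]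
    rw [step3 Φ hd ht f, hs, dd_add_right, dd_add_right, z1, z2, z3, hz, zero_add, zero_add]
    have hneg : e*(-u)*f = -(e*u*f) := by simp only [mul_neg, neg_mul]
    have := PA (-u) v
    rw [hneg] at this
    exact this.symm
  have hwif : dd (I•f) t = dd (I•f) s := by
    apply hinj
    have z1 : dd (I•f) (e*a*e) = 0 := by simp only [dd, mul_assoc, smul_mul_assoc, mul_smul_comm, star_mul, star_star, star_smul, star_one, star_add, star_sub, star_neg, Complex.star_def, Complex.conj_I, neg_smul, smul_neg, mul_one, one_mul, mul_zero, zero_mul, smul_zero, zero_add, add_zero, sub_zero, zero_sub, sub_self, neg_zero, mul_neg, neg_mul, neg_neg, sub_neg_eq_add, hse, hsf, hee, hff, hef, hfe, idem_assoc hee, idem_assoc hff, zmul_assoc hef, zmul_assoc hfe]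
    have z2 : dd (I•f) (e*u*f) = I•(e*u*f) := by simp only [dd, mul_assoc, smul_mul_assoc, mul_smul_comm, star_mul, star_star, star_smul, star_one, star_add, star_sub, star_neg, Complex.star_def, Complex.conj_I, neg_smul, smul_neg, mul_one, one_mul, mul_zero, zero_mul, smul_zero, zero_add, add_zero, sub_zero, zero_sub, sub_self, neg_zero, mul_neg, neg_mul, neg_neg, sub_neg_eq_add, hse, hsf, hee, hff, hef, hfe, idem_assoc hee, idem_assoc hff, zmul_assoc hef, zmul_assoc hfe]
    have z3 : dd (I•f) (f*v*e) = I•(f*v*e) := by simp only [dd, mul_assoc, smul_mul_assoc, mul_smul_comm, star_mul, star_star, star_smul, star_one, star_add, star_sub, star_neg, Complex.star_def, Complex.conj_I, neg_smul, smul_neg, mul_one, one_mul, mul_zero, zero_mul, smul_zero, zero_add, add_zero, sub_zero, zero_sub, sub_self, neg_zero, mul_neg, neg_mul, neg_neg, sub_neg_eq_add, hse, hsf, hee, hff, hef, hfe, idem_assoc hee, idem_assoc hff, zmul_assoc hef, zmul_assoc hfe]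
    rw [step3 Φ hd ht (I•f), hs, dd_add_right, dd_add_right, z1, z2, z3, hz, zero_add,
      zero_add]
    have hsm1 : e*(I•u)*f = I•(e*u*f) := by rw [mul_smul_comm, smul_mul_assoc]
    have hsm2 : f*(I•v)*e = I•(f*v*e) := by rw [mul_smul_comm, smul_mul_assoc]
    have := PA (I•u) (I•v)
    rw [hsm1, hsm2] at this
    exact this.symm
  have hd1 : dd f (t - s) = 0 := by rw [dd_sub_right, hwf, sub_self]
  have hd2 : dd (I•f) (t - s) = 0 := by rw [dd_sub_right, hwif, sub_self]
  obtain ⟨hfc0, hcf0⟩ := diag_kill (e := f) hsf hd1 hd2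
  set c := t - s with hcdef
  have hec : e*c = c := by
    have h' : (e+f)*c = 1*c := by rw [hef1]
    rw [add_mul, hfc0, add_zero, one_mul] at h'
    exact h'
  have hce : c*e = c := by
    have h' : c*(e+f) = c*1 := by rw [hef1]
    rw [mul_add, hcf0, add_zero, mul_one] at h'
    exact h'
  have hec' : ∀ z, e*(c*z) = c*z := fun z => by rw [← mul_assoc, hec]
  have hw2 : ∀ x y, dd (f*y*e) (dd (f*x*e) c) = 0 := by
    intro x y
    have h1 : Φ (dd (f*x*e) t) = Φ (dd (f*x*e) (e*a*e)) + Φ (dd (f*x*e) (e*u*f))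
        + Φ (dd (f*x*e) (f*v*e)) := step3 Φ hd ht _
    have h2 : Φ (dd (f*y*e) (dd (f*x*e) t)) = Φ (dd (f*y*e) (dd (f*x*e) (e*a*e)))
        + Φ (dd (f*y*e) (dd (f*x*e) (e*u*f)))
        + Φ (dd (f*y*e) (dd (f*x*e) (f*v*e))) := step3 Φ hd h1 _
    have hzU : dd (f*y*e) (dd (f*x*e) (e*u*f)) = 0 := by simp only [dd, mul_assoc, smul_mul_assoc, mul_smul_comm, star_mul, star_star, star_smul, star_one, star_add, star_sub, star_neg, Complex.star_def, Complex.conj_I, neg_smul, smul_neg, mul_one, one_mul, mul_zero, zero_mul, smul_zero, zero_add, add_zero, sub_zero, zero_sub, sub_self, neg_zero, mul_neg, neg_mul, neg_neg, sub_neg_eq_add, hse, hsf, hee, hff, hef, hfe, idem_assoc hee, idem_assoc hff, zmul_assoc hef, zmul_assoc hfe]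
    have hzV : dd (f*y*e) (dd (f*x*e) (f*v*e)) = 0 := by simp only [dd, mul_assoc, smul_mul_assoc, mul_smul_comm, star_mul, star_star, star_smul, star_one, star_add, star_sub, star_neg, Complex.star_def, Complex.conj_I, neg_smul, smul_neg, mul_one, one_mul, mul_zero, zero_mul, smul_zero, zero_add, add_zero, sub_zero, zero_sub, sub_self, neg_zero, mul_neg, neg_mul, neg_neg, sub_neg_eq_add, hse, hsf, hee, hff, hef, hfe, idem_assoc hee, idem_assoc hff, zmul_assoc hef, zmul_assoc hfe]
    have heq : dd (f*y*e) (dd (f*x*e) t) = dd (f*y*e) (dd (f*x*e) s) := by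
      apply hinj
      rw [h2, hzU, hzV, hz, add_zero, add_zero, hs, dd_add_right, dd_add_right,
        dd_add_right, dd_add_right, hzU, hzV, add_zero, add_zero]
    rw [hcdef, dd_sub_right, dd_sub_right, heq, sub_self]
  have hcef : ∀ z, c*(e*z*f) = 0 := by
    have h' : ∀ x, c*(e*(star x)*f) = 0 := by
      intro x
      have hfm : ∀ y, (f*y*e) * (dd (f*x*e) c) = 0 := fun y =>
        (off_kill (e := f) (f := e) hsf hse (fun y' => hw2 x y')).1 y
      have hfmzero : e * dd (f*x*e) c = 0 :=
        ann_left (e := f) (f := e) hprime hf0 hfm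
      have hcomp : e * dd (f*x*e) c = -(c*(e*(star x)*f)) := by
        simp only [dd, mul_assoc, smul_mul_assoc, mul_smul_comm, star_mul, star_star, star_smul, star_one, star_add, star_sub, star_neg, Complex.star_def, Complex.conj_I, neg_smul, smul_neg, mul_one, one_mul, mul_zero, zero_mul, smul_zero, zero_add, add_zero, sub_zero, zero_sub, sub_self, neg_zero, mul_neg, neg_mul, neg_neg, sub_neg_eq_add, hse, hsf, hee, hff, hef, hfe, idem_assoc hee, idem_assoc hff, zmul_assoc hef, zmul_assoc hfe, hec', mul_sub]
      rw [hcomp] at hfmzero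
      exact neg_eq_zero.mp hfmzero
    intro z
    have := h' (star z)
    rwa [star_star] at this
  have hce0 : c*e = 0 := ann_right hprime hf0 hcef
  have hc0 : c = 0 := by rw [← hce, hce0]
  have hts : t = s := sub_eq_zero.mp hc0
  rw [← ht, hts]

include hinj hsur hd hprime hcent h1R hef1 hee hff hef hfe hse hsf he0 hf0 in
lemma pair_EF_EF (x y : R) :
    Φ (e*x*f + e*y*f) = Φ (e*x*f) + Φ (e*y*f) := by
  have hz := phi_zero Φ hinj hsur hd
  have PA := pair_A Φ hinj hsur hd hprime hcent h1R hef1 hee hff hef hfe hse hsf he0 hf0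
  have hid : dd (e + e*y*f) (e*x*f + f) =
      e*(-(x*(f*star y)))*e + e*(x+y)*f + f*(-(star y))*e := by
    simp only [dd, mul_assoc, smul_mul_assoc, mul_smul_comm, star_mul, star_star, star_smul, star_one, star_add, star_sub, star_neg, Complex.star_def, Complex.conj_I, neg_smul, smul_neg, mul_one, one_mul, mul_zero, zero_mul, smul_zero, zero_add, add_zero, sub_zero, zero_sub, sub_self, neg_zero, mul_neg, neg_mul, neg_neg, sub_neg_eq_add, hse, hsf, hee, hff, hef, hfe, idem_assoc hee, idem_assoc hff, zmul_assoc hef, zmul_assoc hfe, mul_add, add_mul]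
    abel
  have h1 : Φ (dd (e + e*y*f) (e*x*f + f)) =
      Φ (e*(-(x*(f*star y)))*e) + Φ (e*(x+y)*f) + Φ (f*(-(star y))*e) := by
    rw [hid]
    have h3 := triple_EFE Φ hinj hsur hd hprime hcent h1R hef1 hee hff hef hfe hse hsf
      he0 hf0 (-(x*(f*star y))) (x+y) (-(star y))
    rw [show e*(-(x*(f*star y)))*e + e*(x+y)*f + f*(-(star y))*e =
        e*(-(x*(f*star y)))*e + e*(x+y)*f + f*(-(star y))*e from rfl] at h3
    exact h3
  have hsplit1 : Φ (e*y*f + e) = Φ (e*y*f) + Φ e := by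
    have := pair_EF_EE Φ hinj hsur hd hprime hcent h1R hef1 hee hff hef hfe hse hsf
      he0 hf0 y 1
    simpa only [mul_one, hee] using this
  have hsplit2 : Φ (e*x*f + f) = Φ (e*x*f) + Φ f := by
    have := pair_EF_FF Φ hinj hsur hd hprime hcent h1R hef1 hee hff hef hfe hse hsf
      he0 hf0 x 1
    simpa only [mul_one, hff] using this
  have h2 : Φ (dd (e + e*y*f) (e*x*f + f)) = dd (Φ e + Φ (e*y*f)) (Φ (e*x*f) + Φ f) := by
    rw [hd]
    rw [show Φ (e + e*y*f) = Φ e + Φ (e*y*f) from by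
      rw [add_comm e (e*y*f), hsplit1, add_comm], hsplit2]
  have h3 : dd (Φ e + Φ (e*y*f)) (Φ (e*x*f) + Φ f) =
      Φ (dd e (e*x*f)) + Φ (dd e f) + Φ (dd (e*y*f) (e*x*f)) + Φ (dd (e*y*f) f) := by
    rw [dd_add_left, dd_add_right, dd_add_right, ← hd, ← hd, ← hd, ← hd]
    abel
  have zv1 : dd e (e*x*f) = e*x*f := by simp only [dd, mul_assoc, smul_mul_assoc, mul_smul_comm, star_mul, star_star, star_smul, star_one, star_add, star_sub, star_neg, Complex.star_def, Complex.conj_I, neg_smul, smul_neg, mul_one, one_mul, mul_zero, zero_mul, smul_zero, zero_add, add_zero, sub_zero, zero_sub, sub_self, neg_zero, mul_neg, neg_mul, neg_neg, sub_neg_eq_add, hse, hsf, hee, hff, hef, hfe, idem_assoc hee, idem_assoc hff, zmul_assoc hef, zmul_assoc hfe]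
  have zv2 : dd e f = 0 := by simp only [dd, mul_assoc, smul_mul_assoc, mul_smul_comm, star_mul, star_star, star_smul, star_one, star_add, star_sub, star_neg, Complex.star_def, Complex.conj_I, neg_smul, smul_neg, mul_one, one_mul, mul_zero, zero_mul, smul_zero, zero_add, add_zero, sub_zero, zero_sub, sub_self, neg_zero, mul_neg, neg_mul, neg_neg, sub_neg_eq_add, hse, hsf, hee, hff, hef, hfe, idem_assoc hee, idem_assoc hff, zmul_assoc hef, zmul_assoc hfe]
  have zv3 : dd (e*y*f) (e*x*f) = e*(-(x*(f*star y)))*e := by simp only [dd, mul_assoc, smul_mul_assoc, mul_smul_comm, star_mul, star_star, star_smul, star_one, star_add, star_sub, star_neg, Complex.star_def, Complex.conj_I, neg_smul, smul_neg, mul_one, one_mul, mul_zero, zero_mul, smul_zero, zero_add, add_zero, sub_zero, zero_sub, sub_self, neg_zero, mul_neg, neg_mul, neg_neg, sub_neg_eq_add, hse, hsf, hee, hff, hef, hfe, idem_assoc hee, idem_assoc hff, zmul_assoc hef, zmul_assoc hfe]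
  have zv4 : dd (e*y*f) f = e*y*f + f*(-(star y))*e := by
    simp only [dd, mul_assoc, smul_mul_assoc, mul_smul_comm, star_mul, star_star, star_smul, star_one, star_add, star_sub, star_neg, Complex.star_def, Complex.conj_I, neg_smul, smul_neg, mul_one, one_mul, mul_zero, zero_mul, smul_zero, zero_add, add_zero, sub_zero, zero_sub, sub_self, neg_zero, mul_neg, neg_mul, neg_neg, sub_neg_eq_add, hse, hsf, hee, hff, hef, hfe, idem_assoc hee, idem_assoc hff, zmul_assoc hef, zmul_assoc hfe]
    abel
  have hYf : Φ (dd (e*y*f) f) = Φ (e*y*f) + Φ (f*(-(star y))*e) := by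
    rw [zv4]
    exact PA y (-(star y))
  have hbig := h1.symm.trans (h2.trans h3)
  rw [zv1, zv2, zv3, hYf, hz] at hbig
  have hXY : e*(x+y)*f = e*x*f + e*y*f := by simp only [add_mul, mul_add]
  rw [← hXY]
  calc Φ (e*(x+y)*f)
      = (Φ (e*(-(x*(f*star y)))*e) + Φ (e*(x+y)*f) + Φ (f*(-(star y))*e))
        - Φ (e*(-(x*(f*star y)))*e) - Φ (f*(-(star y))*e) := by abel
    _ = (Φ (e*x*f) + 0 + Φ (e*(-(x*(f*star y)))*e) + (Φ (e*y*f) + Φ (f*(-(star y))*e)))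
        - Φ (e*(-(x*(f*star y)))*e) - Φ (f*(-(star y))*e) := by rw [hbig]
    _ = Φ (e*x*f) + Φ (e*y*f) := by abel

include hinj hsur hd hprime hcent h1R hef1 hee hff hef hfe hse hsf he0 hf0 in
lemma pair_EE_EE (x y : R) :
    Φ (e*x*e + e*y*e) = Φ (e*x*e) + Φ (e*y*e) := by
  have hz := phi_zero Φ hinj hsur hd
  obtain ⟨t, ht⟩ := hsur (Φ (e*x*e) + Φ (e*y*e))
  set s := e*x*e + e*y*e with hs
  -- L_{ezf} kills both
  have hoff : ∀ z, dd (e*z*f) (t - s) = 0 := by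
    intro z
    have z1 : dd (e*z*f) (e*x*e) = 0 := by simp only [dd, mul_assoc, smul_mul_assoc, mul_smul_comm, star_mul, star_star, star_smul, star_one, star_add, star_sub, star_neg, Complex.star_def, Complex.conj_I, neg_smul, smul_neg, mul_one, one_mul, mul_zero, zero_mul, smul_zero, zero_add, add_zero, sub_zero, zero_sub, sub_self, neg_zero, mul_neg, neg_mul, neg_neg, sub_neg_eq_add, hse, hsf, hee, hff, hef, hfe, idem_assoc hee, idem_assoc hff, zmul_assoc hef, zmul_assoc hfe]
    have z2 : dd (e*z*f) (e*y*e) = 0 := by simp only [dd, mul_assoc, smul_mul_assoc, mul_smul_comm, star_mul, star_star, star_smul, star_one, star_add, star_sub, star_neg, Complex.star_def, Complex.conj_I, neg_smul, smul_neg, mul_one, one_mul, mul_zero, zero_mul, smul_zero, zero_add, add_zero, sub_zero, zero_sub, sub_self, neg_zero, mul_neg, neg_mul, neg_neg, sub_neg_eq_add, hse, hsf, hee, hff, hef, hfe, idem_assoc hee, idem_assoc hff, zmul_assoc hef, zmul_assoc hfe]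
    have hwt : dd (e*z*f) t = 0 := by
      apply hinj
      rw [step Φ hd ht (e*z*f), z1, z2, hz, add_zero]
    have hws : dd (e*z*f) s = 0 := by
      rw [hs, dd_add_right, z1, z2, add_zero]
    rw [dd_sub_right, hwt, hws, sub_self]
  set c := t - s with hcdef
  obtain ⟨hoff1, hoff2⟩ := off_kill hse hsf hoff
  have hfc0 : f*c = 0 := ann_left hprime he0 hoff1
  have hcf0 : c*f = 0 := ann_right (e := f) (f := e) hprime he0 hoff2
  have hce : c*e = c := by
    have h' : c*(e+f) = c*1 := by rw [hef1]
    rw [mul_add, hcf0, add_zero, mul_one] at h'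
    exact h'
  have hfsc : f * star c = 0 := by
    have := congrArg star hcf0
    rwa [star_mul, hsf, star_zero] at this
  -- R_{ezf} words using pair_EF_EF
  have hR : ∀ z, dd c (e*z*f) = 0 := by
    intro z
    have z1 : dd (e*x*e) (e*z*f) = e*(x*(e*z))*f := by simp only [dd, mul_assoc, smul_mul_assoc, mul_smul_comm, star_mul, star_star, star_smul, star_one, star_add, star_sub, star_neg, Complex.star_def, Complex.conj_I, neg_smul, smul_neg, mul_one, one_mul, mul_zero, zero_mul, smul_zero, zero_add, add_zero, sub_zero, zero_sub, sub_self, neg_zero, mul_neg, neg_mul, neg_neg, sub_neg_eq_add, hse, hsf, hee, hff, hef, hfe, idem_assoc hee, idem_assoc hff, zmul_assoc hef, zmul_assoc hfe]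
    have z2 : dd (e*y*e) (e*z*f) = e*(y*(e*z))*f := by simp only [dd, mul_assoc, smul_mul_assoc, mul_smul_comm, star_mul, star_star, star_smul, star_one, star_add, star_sub, star_neg, Complex.star_def, Complex.conj_I, neg_smul, smul_neg, mul_one, one_mul, mul_zero, zero_mul, smul_zero, zero_add, add_zero, sub_zero, zero_sub, sub_self, neg_zero, mul_neg, neg_mul, neg_neg, sub_neg_eq_add, hse, hsf, hee, hff, hef, hfe, idem_assoc hee, idem_assoc hff, zmul_assoc hef, zmul_assoc hfe]
    have heq : dd t (e*z*f) = dd s (e*z*f) := by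
      apply hinj
      rw [stepR Φ hd ht (e*z*f), z1, z2, hs, dd_add_left, z1, z2]
      exact (pair_EF_EF Φ hinj hsur hd hprime hcent h1R hef1 hee hff hef hfe hse hsf
        he0 hf0 (x*(e*z)) (y*(e*z))).symm
    rw [hcdef, dd_sub_left, heq, sub_self]
  have hcezf : ∀ z, c*(e*z*f) = 0 := by
    intro z
    have h' := hR z
    rw [dd] at h'
    have h2 : (e*z*f)*star c = 0 := by
      rw [mul_assoc (e*z) f (star c), mul_assoc e z (f*star c), hfsc, mul_zero, mul_zero]
    rw [h2, sub_zero] at h'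
    exact h'
  have hce0 : c*e = 0 := ann_right hprime hf0 hcezf
  have hc0 : c = 0 := by rw [← hce, hce0]
  have hts : t = s := sub_eq_zero.mp hc0
  rw [← ht, hts]

include hinj hsur hd hprime hcent h1R hef1 hee hff hef hfe hse hsf he0 hf0 in
lemma quad (a u v d : R) :
    Φ (e*a*e + e*u*f + f*v*e + f*d*f) =
      Φ (e*a*e) + Φ (e*u*f) + Φ (f*v*e) + Φ (f*d*f) := by
  have hz := phi_zero Φ hinj hsur hd
  have hef1' : f + e = 1 := by rw [add_comm]; exact hef1
  have PA := pair_A Φ hinj hsur hd hprime hcent h1R hef1 hee hff hef hfe hse hsf he0 hf0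
  have T3' := triple_EFE (e := f) (f := e) Φ hinj hsur hd hprime hcent h1R hef1' hff hee
    hfe hef hsf hse hf0 he0
  obtain ⟨t, ht⟩ := hsur (Φ (e*a*e) + Φ (e*u*f) + Φ (f*v*e) + Φ (f*d*f))
  set s := e*a*e + e*u*f + f*v*e + f*d*f with hs
  have hwf : dd f t = dd f s := by
    apply hinj
    have z1 : dd f (e*a*e) = 0 := by simp only [dd, mul_assoc, smul_mul_assoc, mul_smul_comm, star_mul, star_star, star_smul, star_one, star_add, star_sub, star_neg, Complex.star_def, Complex.conj_I, neg_smul, smul_neg, mul_one, one_mul, mul_zero, zero_mul, smul_zero, zero_add, add_zero, sub_zero, zero_sub, sub_self, neg_zero, mul_neg, neg_mul, neg_neg, sub_neg_eq_add, hse, hsf, hee, hff, hef, hfe, idem_assoc hee, idem_assoc hff, zmul_assoc hef, zmul_assoc hfe]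
    have z2 : dd f (e*u*f) = -(e*u*f) := by simp only [dd, mul_assoc, smul_mul_assoc, mul_smul_comm, star_mul, star_star, star_smul, star_one, star_add, star_sub, star_neg, Complex.star_def, Complex.conj_I, neg_smul, smul_neg, mul_one, one_mul, mul_zero, zero_mul, smul_zero, zero_add, add_zero, sub_zero, zero_sub, sub_self, neg_zero, mul_neg, neg_mul, neg_neg, sub_neg_eq_add, hse, hsf, hee, hff, hef, hfe, idem_assoc hee, idem_assoc hff, zmul_assoc hef, zmul_assoc hfe]
    have z3 : dd f (f*v*e) = f*v*e := by simp only [dd, mul_assoc, smul_mul_assoc, mul_smul_comm, star_mul, star_star, star_smul, star_one, star_add, star_sub, star_neg, Complex.star_def, Complex.conj_I, neg_smul, smul_neg, mul_one, one_mul, mul_zero, zero_mul, smul_zero, zero_add, add_zero, sub_zero, zero_sub, sub_self, neg_zero, mul_neg, neg_mul, neg_neg, sub_neg_eq_add, hse, hsf, hee, hff, hef, hfe, idem_assoc hee, idem_assoc hff, zmul_assoc hef, zmul_assoc hfe]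
    have z4 : dd f (f*d*f) = 0 := by simp only [dd, mul_assoc, smul_mul_assoc, mul_smul_comm, star_mul, star_star, star_smul, star_one, star_add, star_sub, star_neg, Complex.star_def, Complex.conj_I, neg_smul, smul_neg, mul_one, one_mul, mul_zero, zero_mul, smul_zero, zero_add, add_zero, sub_zero, zero_sub, sub_self, neg_zero, mul_neg, neg_mul, neg_neg, sub_neg_eq_add, hse, hsf, hee, hff, hef, hfe, idem_assoc hee, idem_assoc hff, zmul_assoc hef, zmul_assoc hfe]
    rw [step4 Φ hd ht f, hs, dd_add_right, dd_add_right, dd_add_right, z1, z2, z3, z4, hz]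
    simp only [zero_add, add_zero]
    have hneg : e*(-u)*f = -(e*u*f) := by simp only [mul_neg, neg_mul]
    have := PA (-u) v
    rw [hneg] at this
    exact this.symm
  have hwif : dd (I•f) t = dd (I•f) s := by
    apply hinj
    have z1 : dd (I•f) (e*a*e) = 0 := by simp only [dd, mul_assoc, smul_mul_assoc, mul_smul_comm, star_mul, star_star, star_smul, star_one, star_add, star_sub, star_neg, Complex.star_def, Complex.conj_I, neg_smul, smul_neg, mul_one, one_mul, mul_zero, zero_mul, smul_zero, zero_add, add_zero, sub_zero, zero_sub, sub_self, neg_zero, mul_neg, neg_mul, neg_neg, sub_neg_eq_add, hse, hsf, hee, hff, hef, hfe, idem_assoc hee, idem_assoc hff, zmul_assoc hef, zmul_assoc hfe]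
    have z2 : dd (I•f) (e*u*f) = I•(e*u*f) := by simp only [dd, mul_assoc, smul_mul_assoc, mul_smul_comm, star_mul, star_star, star_smul, star_one, star_add, star_sub, star_neg, Complex.star_def, Complex.conj_I, neg_smul, smul_neg, mul_one, one_mul, mul_zero, zero_mul, smul_zero, zero_add, add_zero, sub_zero, zero_sub, sub_self, neg_zero, mul_neg, neg_mul, neg_neg, sub_neg_eq_add, hse, hsf, hee, hff, hef, hfe, idem_assoc hee, idem_assoc hff, zmul_assoc hef, zmul_assoc hfe]
    have z3 : dd (I•f) (f*v*e) = I•(f*v*e) := by simp only [dd, mul_assoc, smul_mul_assoc, mul_smul_comm, star_mul, star_star, star_smul, star_one, star_add, star_sub, star_neg, Complex.star_def, Complex.conj_I, neg_smul, smul_neg, mul_one, one_mul, mul_zero, zero_mul, smul_zero, zero_add, add_zero, sub_zero, zero_sub, sub_self, neg_zero, mul_neg, neg_mul, neg_neg, sub_neg_eq_add, hse, hsf, hee, hff, hef, hfe, idem_assoc hee, idem_assoc hff, zmul_assoc hef, zmul_assoc hfe]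
    have z4 : dd (I•f) (f*d*f) = I•(f*d*f) + I•(f*d*f) := by simp only [dd, mul_assoc, smul_mul_assoc, mul_smul_comm, star_mul, star_star, star_smul, star_one, star_add, star_sub, star_neg, Complex.star_def, Complex.conj_I, neg_smul, smul_neg, mul_one, one_mul, mul_zero, zero_mul, smul_zero, zero_add, add_zero, sub_zero, zero_sub, sub_self, neg_zero, mul_neg, neg_mul, neg_neg, sub_neg_eq_add, hse, hsf, hee, hff, hef, hfe, idem_assoc hee, idem_assoc hff, zmul_assoc hef, zmul_assoc hfe]
    rw [step4 Φ hd ht (I•f), hs, dd_add_right, dd_add_right, dd_add_right, z1, z2, z3, z4, hz]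
    simp only [zero_add, add_zero]
    -- goal: Φ (I•U) + Φ (I•V) + Φ (I•D + I•D) = Φ (I•U + I•V + (I•D + I•D))
    have hsm1 : e*(I•u)*f = I•(e*u*f) := by rw [mul_smul_comm, smul_mul_assoc]
    have hsm2 : f*(I•v)*e = I•(f*v*e) := by rw [mul_smul_comm, smul_mul_assoc]
    have hsm3 : f*(I•d + I•d)*f = I•(f*d*f) + I•(f*d*f) := by
      rw [mul_add, add_mul, mul_smul_comm, smul_mul_assoc]
    have h3 := T3' (I•d + I•d) (I•v) (I•u)
    rw [hsm1, hsm2, hsm3] at h3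
    rw [show I•(e*u*f) + I•(f*v*e) + (I•(f*d*f) + I•(f*d*f)) =
        (I•(f*d*f) + I•(f*d*f)) + I•(f*v*e) + I•(e*u*f) from by abel]
    rw [h3]
    abel
  have hd1 : dd f (t - s) = 0 := by rw [dd_sub_right, hwf, sub_self]
  have hd2 : dd (I•f) (t - s) = 0 := by rw [dd_sub_right, hwif, sub_self]
  obtain ⟨hfc0, hcf0⟩ := diag_kill (e := f) hsf hd1 hd2
  set c := t - s with hcdef
  have hec : e*c = c := by
    have h' : (e+f)*c = 1*c := by rw [hef1]
    rw [add_mul, hfc0, add_zero, one_mul] at h'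
    exact h'
  have hce : c*e = c := by
    have h' : c*(e+f) = c*1 := by rw [hef1]
    rw [mul_add, hcf0, add_zero, mul_one] at h'
    exact h'
  have hec' : ∀ z, e*(c*z) = c*z := fun z => by rw [← mul_assoc, hec]
  have hw2 : ∀ x y, dd (f*y*e) (dd (f*x*e) c) = 0 := by
    intro x y
    have h1 : Φ (dd (f*x*e) t) = Φ (dd (f*x*e) (e*a*e)) + Φ (dd (f*x*e) (e*u*f))
        + Φ (dd (f*x*e) (f*v*e)) + Φ (dd (f*x*e) (f*d*f)) := step4 Φ hd ht _
    have h2 : Φ (dd (f*y*e) (dd (f*x*e) t)) = Φ (dd (f*y*e) (dd (f*x*e) (e*a*e)))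
        + Φ (dd (f*y*e) (dd (f*x*e) (e*u*f)))
        + Φ (dd (f*y*e) (dd (f*x*e) (f*v*e)))
        + Φ (dd (f*y*e) (dd (f*x*e) (f*d*f))) := step4 Φ hd h1 _
    have hzU : dd (f*y*e) (dd (f*x*e) (e*u*f)) = 0 := by simp only [dd, mul_assoc, smul_mul_assoc, mul_smul_comm, star_mul, star_star, star_smul, star_one, star_add, star_sub, star_neg, Complex.star_def, Complex.conj_I, neg_smul, smul_neg, mul_one, one_mul, mul_zero, zero_mul, smul_zero, zero_add, add_zero, sub_zero, zero_sub, sub_self, neg_zero, mul_neg, neg_mul, neg_neg, sub_neg_eq_add, hse, hsf, hee, hff, hef, hfe, idem_assoc hee, idem_assoc hff, zmul_assoc hef, zmul_assoc hfe]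
    have hzV : dd (f*y*e) (dd (f*x*e) (f*v*e)) = 0 := by simp only [dd, mul_assoc, smul_mul_assoc, mul_smul_comm, star_mul, star_star, star_smul, star_one, star_add, star_sub, star_neg, Complex.star_def, Complex.conj_I, neg_smul, smul_neg, mul_one, one_mul, mul_zero, zero_mul, smul_zero, zero_add, add_zero, sub_zero, zero_sub, sub_self, neg_zero, mul_neg, neg_mul, neg_neg, sub_neg_eq_add, hse, hsf, hee, hff, hef, hfe, idem_assoc hee, idem_assoc hff, zmul_assoc hef, zmul_assoc hfe]
    have hzD : dd (f*y*e) (dd (f*x*e) (f*d*f)) = 0 := by simp only [dd, mul_assoc, smul_mul_assoc, mul_smul_comm, star_mul, star_star, star_smul, star_one, star_add, star_sub, star_neg, Complex.star_def, Complex.conj_I, neg_smul, smul_neg, mul_one, one_mul, mul_zero, zero_mul, smul_zero, zero_add, add_zero, sub_zero, zero_sub, sub_self, neg_zero, mul_neg, neg_mul, neg_neg, sub_neg_eq_add, hse, hsf, hee, hff, hef, hfe, idem_assoc hee, idem_assoc hff, zmul_assoc hef, zmul_assoc hfe]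
    have heq : dd (f*y*e) (dd (f*x*e) t) = dd (f*y*e) (dd (f*x*e) s) := by
      apply hinj
      rw [h2, hzU, hzV, hzD, hz, add_zero, add_zero, add_zero, hs, dd_add_right,
        dd_add_right, dd_add_right, dd_add_right, dd_add_right, dd_add_right,
        hzU, hzV, hzD, add_zero, add_zero, add_zero]
    rw [hcdef, dd_sub_right, dd_sub_right, heq, sub_self]
  have hcef : ∀ z, c*(e*z*f) = 0 := by
    have h' : ∀ x, c*(e*(star x)*f) = 0 := by
      intro x
      have hfm : ∀ y, (f*y*e) * (dd (f*x*e) c) = 0 := fun y =>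
        (off_kill (e := f) (f := e) hsf hse (fun y' => hw2 x y')).1 y
      have hfmzero : e * dd (f*x*e) c = 0 :=
        ann_left (e := f) (f := e) hprime hf0 hfm
      have hcomp : e * dd (f*x*e) c = -(c*(e*(star x)*f)) := by
        simp only [dd, mul_assoc, smul_mul_assoc, mul_smul_comm, star_mul, star_star, star_smul, star_one, star_add, star_sub, star_neg, Complex.star_def, Complex.conj_I, neg_smul, smul_neg, mul_one, one_mul, mul_zero, zero_mul, smul_zero, zero_add, add_zero, sub_zero, zero_sub, sub_self, neg_zero, mul_neg, neg_mul, neg_neg, sub_neg_eq_add, hse, hsf, hee, hff, hef, hfe, idem_assoc hee, idem_assoc hff, zmul_assoc hef, zmul_assoc hfe, hec', mul_sub]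
      rw [hcomp] at hfmzero
      exact neg_eq_zero.mp hfmzero
    intro z
    have := h' (star z)
    rwa [star_star] at this
  have hce0 : c*e = 0 := ann_right hprime hf0 hcef
  have hc0 : c = 0 := by rw [← hce, hce0]
  have hts : t = s := sub_eq_zero.mp hc0
  rw [← ht, hts]

include hinj hsur hd hprime hcent h1R hef1 hee hff hef hfe hse hsf he0 hf0 in
lemma add_full (a b : R) : Φ (a + b) = Φ a + Φ b := by
  have hef1' : f + e = 1 := by rw [add_comm]; exact hef1
  have Q := quad Φ hinj hsur hd hprime hcent h1R hef1 hee hff hef hfe hse hsf he0 hf0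
  have PEE := pair_EE_EE Φ hinj hsur hd hprime hcent h1R hef1 hee hff hef hfe hse hsf
    he0 hf0
  have PFF := pair_EE_EE (e := f) (f := e) Φ hinj hsur hd hprime hcent h1R hef1' hff hee
    hfe hef hsf hse hf0 he0
  have PEF := pair_EF_EF Φ hinj hsur hd hprime hcent h1R hef1 hee hff hef hfe hse hsf
    he0 hf0
  have PFE := pair_EF_EF (e := f) (f := e) Φ hinj hsur hd hprime hcent h1R hef1' hff hee
    hfe hef hsf hse hf0 he0
  have hdec : ∀ y : R, Φ y = Φ (e*y*e) + Φ (e*y*f) + Φ (f*y*e) + Φ (f*y*f) := by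
    intro y
    have hyd : e*y*e + e*y*f + f*y*e + f*y*f = y := by
      have h' : (e+f)*y*(e+f) = y := by rw [hef1, one_mul, mul_one]
      conv_rhs => rw [← h']
      simp only [add_mul, mul_add]
      abel
    conv_lhs => rw [← hyd]
    exact Q y y y y
  rw [hdec (a+b), hdec a, hdec b]
  have c1 : Φ (e*(a+b)*e) = Φ (e*a*e) + Φ (e*b*e) := by
    rw [show e*(a+b)*e = e*a*e + e*b*e from by simp only [mul_add, add_mul]]
    exact PEE a b
  have c2 : Φ (e*(a+b)*f) = Φ (e*a*f) + Φ (e*b*f) := by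
    rw [show e*(a+b)*f = e*a*f + e*b*f from by simp only [mul_add, add_mul]]
    exact PEF a b
  have c3 : Φ (f*(a+b)*e) = Φ (f*a*e) + Φ (f*b*e) := by
    rw [show f*(a+b)*e = f*a*e + f*b*e from by simp only [mul_add, add_mul]]
    exact PFE a b
  have c4 : Φ (f*(a+b)*f) = Φ (f*a*f) + Φ (f*b*f) := by
    rw [show f*(a+b)*f = f*a*f + f*b*f from by simp only [mul_add, add_mul]]
    exact PFF a b
  rw [c1, c2, c3, c4]
  abel

end Peirce
end Stmt1

open Stmt1 Complex

/-- On unital prime complex *-algebras with center ℂ·1 and a nontrivial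
projection, a bijection Φ satisfies Φ(ab − ba*) = Φ(a)Φ(b) − Φ(b)Φ(a)* for all a, b
iff Φ is a *-ring isomorphism. -/
theorem stmt_1 {A B : Type*}
    [Ring A] [Algebra ℂ A] [StarRing A] [StarModule ℂ A]
    [Ring B] [Algebra ℂ B] [StarRing B] [StarModule ℂ B]
    (hAprime : ∀ a b : A, (∀ x : A, a * x * b = 0) → a = 0 ∨ b = 0)
    (hBprime : ∀ a b : B, (∀ x : B, a * x * b = 0) → a = 0 ∨ b = 0)
    (hAcenter : ∀ a : A, (∀ x : A, a * x = x * a) → ∃ c : ℂ, a = c • (1 : A))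
    (hBcenter : ∀ b : B, (∀ x : B, b * x = x * b) → ∃ c : ℂ, b = c • (1 : B))
    (hAproj : ∃ p : A, p ≠ 0 ∧ p ≠ 1 ∧ star p = p ∧ p * p = p)
    (hBproj : ∃ q : B, q ≠ 0 ∧ q ≠ 1 ∧ star q = q ∧ q * q = q)
    (Φ : A → B) (hΦ : Function.Bijective Φ) :
    (∀ a b : A, Φ (a * b - b * star a) = Φ a * Φ b - Φ b * star (Φ a)) ↔
      ((∀ a b : A, Φ (a + b) = Φ a + Φ b) ∧
       (∀ a b : A, Φ (a * b) = Φ a * Φ b) ∧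
       (∀ a : A, Φ (star a) = star (Φ a))) := by
  obtain ⟨hinj, hsur⟩ := hΦ
  constructor
  · -- forward direction
    intro hdel
    have hd : ∀ a b : A, Φ (dd a b) = dd (Φ a) (Φ b) := hdel
    obtain ⟨p, hp0, hp1, hsp, hpp⟩ := hAproj
    -- facts about e := p, f := 1 - p
    have h1A : (1 : A) ≠ 0 := by
      intro h1
      exact hp0 (by rw [← mul_one p, h1, mul_zero])
    have h1B : (1 : B) ≠ 0 := by
      obtain ⟨q, hq0, _, _, _⟩ := hBproj
      intro h1
      exact hq0 (by rw [← mul_one q, h1, mul_zero])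
    have hff : (1-p)*(1-p) = (1-p) := by
      rw [sub_mul, one_mul, mul_sub, mul_one, hpp]
      abel
    have hef : p*(1-p) = 0 := by rw [mul_sub, mul_one, hpp, sub_self]
    have hfe : (1-p)*p = 0 := by rw [sub_mul, one_mul, hpp, sub_self]
    have hsf : star (1-p) = (1-p) := by rw [star_sub, star_one, hsp]
    have hf0 : (1-p) ≠ 0 := by
      intro h'
      exact hp1 ((sub_eq_zero.mp h').symm)
    have hef1 : p + (1-p) = 1 := by abel
    -- additivity
    have hadd : ∀ a b : A, Φ (a + b) = Φ a + Φ b :=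
      add_full Φ hinj hsur hd hAprime hAcenter h1A hef1 hpp hff hef hfe hsp hsf hp0 hf0
    have hz : Φ 0 = 0 := phi_zero Φ hinj hsur hd
    have hneg : ∀ a : A, Φ (-a) = -(Φ a) := by
      intro a
      have h' := hadd a (-a)
      rw [add_neg_cancel, hz] at h'
      exact (neg_eq_of_add_eq_zero_right h'.symm).symm
    have hsub : ∀ a b : A, Φ (a - b) = Φ a - Φ b := by
      intro a b
      rw [sub_eq_add_neg, hadd, hneg, sub_eq_add_neg]
    -- Φ 1 is a real central element
    have hone_comm : ∀ y : B, Φ 1 * y = y * star (Φ 1) := by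
      intro y
      obtain ⟨b, rfl⟩ := hsur y
      have h' := hdel 1 b
      rw [one_mul, star_one, mul_one, sub_self, hz] at h'
      exact sub_eq_zero.mp h'.symm
    have hone_sa : star (Φ 1) = Φ 1 := by
      have h' := hone_comm 1
      rw [mul_one, one_mul] at h'
      exact h'.symm
    obtain ⟨μ, hμ⟩ := hBcenter (Φ 1) (fun y => by rw [hone_comm y, hone_sa])
    have hμreal : (starRingEnd ℂ) μ = μ := by
      have h' := hone_sa
      rw [hμ, star_smul, star_one, Complex.star_def] at h'
      have h2 : ((starRingEnd ℂ) μ - μ)•(1:B) = 0 := by rw [sub_smul, h', sub_self]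
      exact sub_eq_zero.mp (smul_one_cancel h1B h2)
    have hdag : ∀ a : A, Φ a - Φ (star a) = μ • Φ a - μ • star (Φ a) := by
      intro a
      have h' := hdel a 1
      rw [mul_one, one_mul, hsub, hμ, mul_smul_comm, mul_one, smul_mul_assoc,
        one_mul] at h'
      exact h'
    set j := Φ (I•(1:A)) with hj
    have hjne : j ≠ 0 := by
      intro h0
      have h1 : Φ (I•(1:A)) = Φ 0 := by rw [← hj, h0, hz]
      have h2 : I•(1:A) = 0 := hinj h1
      exact h1A (eq_zero_of_smul h2 I_ne_zero)
    have hjeq : j + j = μ • j - μ • star j := by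
      have h' := hdag (I•(1:A))
      rw [star_I_smul, star_one, hneg, sub_neg_eq_add, ← hj] at h'
      exact h'
    have hjs : star j = -j := by
      have h2 := congrArg star hjeq
      rw [star_add, star_sub, star_smul, star_smul, star_star, Complex.star_def,
        hμreal] at h2
      -- h2 : star j + star j = μ • star j - μ • j
      have h3 : (star j + j) + (star j + j) = (j + j) + (star j + star j) := by abel
      rw [hjeq, h2] at h3
      have h4 : (star j + j) + (star j + j) = 0 := by rw [h3]; abel
      have h5 : star j + j = 0 := add_self_zero h4
      exact eq_neg_of_add_eq_zero_left h5
    have hμ1 : μ = 1 := by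
      have h' : j + j = μ • j + μ • j := by
        rw [hjeq, hjs, smul_neg, sub_neg_eq_add]
      have h2 : ((2:ℂ) - 2*μ) • j = 0 := by
        rw [sub_smul, mul_smul, two_smul, two_smul, h']
        abel
      by_contra hne
      have hsc : (2:ℂ) - 2*μ ≠ 0 := by
        intro h0
        exact hne (by linear_combination (-1/2 : ℂ) * h0)
      exact hjne (eq_zero_of_smul h2 hsc)
    have hone : Φ 1 = 1 := by rw [hμ, hμ1, one_smul]
    have hstar : ∀ a : A, Φ (star a) = star (Φ a) := by
      intro a
      have h' := hdag a
      rw [hμ1, one_smul, one_smul] at h'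
      exact sub_right_inj.mp h'
    have hIb : ∀ b : A, Φ (I•b) + Φ (I•b) = j * Φ b + Φ b * j := by
      intro b
      have h' := hdel (I•(1:A)) b
      have harg : (I•(1:A))*b - b*star (I•(1:A)) = I•b + I•b := by
        rw [star_I_smul, star_one, smul_mul_assoc, one_mul, mul_neg, mul_smul_comm,
          mul_one, sub_neg_eq_add]
      rw [harg, hadd, ← hj, hjs, mul_neg, sub_neg_eq_add] at h'
      exact h'
    have hjcomm : ∀ u : B, j*u = u*j := by
      have hX : ∀ u v : B, (j*u - u*j)*v + v*(j*(star u) - (star u)*j) = 0 := by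
        intro u v
        obtain ⟨a, rfl⟩ := hsur u
        obtain ⟨b, rfl⟩ := hsur v
        have h1 : Φ (I•(a*b - b*star a)) = Φ a * Φ (I•b) - Φ (I•b) * star (Φ a) := by
          have h' := hdel a (I•b)
          rw [show a*(I•b) - (I•b)*star a = I•(a*b - b*star a) from by
            rw [mul_smul_comm, smul_mul_assoc, smul_sub]] at h'
          exact h'
        have h3 : Φ (a*b - b*star a) = Φ a * Φ b - Φ b * star (Φ a) := hdel a b
        have hEQ : Φ a * (j*Φ b + Φ b*j) - (j*Φ b + Φ b*j) * star (Φ a) =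
            j*(Φ a*Φ b - Φ b*star (Φ a)) + (Φ a*Φ b - Φ b*star (Φ a))*j := by
          rw [← hIb b]
          have hL : Φ a * (Φ (I•b) + Φ (I•b)) - (Φ (I•b) + Φ (I•b)) * star (Φ a) =
              (Φ a * Φ (I•b) - Φ (I•b) * star (Φ a)) +
              (Φ a * Φ (I•b) - Φ (I•b) * star (Φ a)) := by noncomm_ring
          rw [hL, ← h1, hIb, h3]
        calc (j*Φ a - Φ a*j)*Φ b + Φ b*(j*(star (Φ a)) - (star (Φ a))*j)
            = (j*(Φ a*Φ b - Φ b*star (Φ a)) + (Φ a*Φ b - Φ b*star (Φ a))*j)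
              - (Φ a * (j*Φ b + Φ b*j) - (j*Φ b + Φ b*j) * star (Φ a)) := by noncomm_ring
          _ = 0 := by rw [← hEQ]; exact sub_self _
      have hcen1 : ∀ u : B, j*u - u*j = -(j*star u - star u*j) := by
        intro u
        have h' := hX u 1
        rw [mul_one, one_mul] at h'
        exact eq_neg_of_add_eq_zero_left h'
      have hcen2 : ∀ u v : B, (j*u - u*j)*v = v*(j*u - u*j) := by
        intro u v
        have h' := hX u v
        have h'' : (j*u - u*j)*v = -(v*(j*star u - star u*j)) :=
          eq_neg_of_add_eq_zero_left h'
        rw [h'', ← mul_neg, ← hcen1 u]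
      intro u
      obtain ⟨cu, hcu⟩ := hBcenter (j*u - u*j) (hcen2 u)
      obtain ⟨cu2, hcu2⟩ := hBcenter (j*(u*u) - (u*u)*j) (hcen2 (u*u))
      have hleib : j*(u*u) - (u*u)*j = (j*u - u*j)*u + u*(j*u - u*j) := by noncomm_ring
      rw [hcu, hcu2, smul_mul_assoc, one_mul, mul_smul_comm, mul_one] at hleib
      by_cases hc : cu = 0
      · have h0 : j*u - u*j = 0 := by rw [hcu, hc, zero_smul]
        exact sub_eq_zero.mp h0
      · exfalso
        have h2cu : (2*cu : ℂ) ≠ 0 := mul_ne_zero two_ne_zero hc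
        have h2 : (2*cu) • u = cu2 • (1:B) := by
          rw [mul_smul, two_smul]
          exact hleib.symm
        have hu : u = ((2*cu)⁻¹ * cu2) • (1:B) := by
          rw [mul_smul, ← h2, smul_smul, inv_mul_cancel₀ h2cu, one_smul]
        have hjz : j*u - u*j = 0 := by
          rw [hu, mul_smul_comm, smul_mul_assoc, mul_one, one_mul, sub_self]
        rw [hcu] at hjz
        exact hc (smul_one_cancel h1B hjz)
    obtain ⟨κ, hκ⟩ := hBcenter j hjcomm
    have hκ0 : κ ≠ 0 := by
      intro h0
      exact hjne (by rw [hκ, h0, zero_smul])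
    have hκconj : (starRingEnd ℂ) κ = -κ := by
      have h' := hjs
      rw [hκ, star_smul, star_one, Complex.star_def, ← neg_smul] at h'
      have h2 : ((starRingEnd ℂ) κ - (-κ)) • (1:B) = 0 := by rw [sub_smul, h', sub_self]
      exact sub_eq_zero.mp (smul_one_cancel h1B h2)
    have hIb' : ∀ b : A, Φ (I•b) = κ • Φ b := by
      intro b
      have h' := hIb b
      rw [hκ, smul_mul_assoc, one_mul, mul_smul_comm, mul_one] at h'
      exact add_self_cancel h'
    have hmul : ∀ a b : A, Φ (a*b) = Φ a * Φ b := by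
      intro a b
      have h1 : Φ (a*b - b*star a) = Φ a * Φ b - Φ b * Φ (star a) := by
        rw [hdel, hstar]
      have h2 : Φ (a*b + b*star a) = Φ a * Φ b + Φ b * Φ (star a) := by
        have h' := hdel (I•a) b
        rw [show (I•a)*b - b*star (I•a) = I•(a*b + b*star a) from by
          rw [star_I_smul, smul_mul_assoc, mul_neg, mul_smul_comm, sub_neg_eq_add,
            smul_add]] at h'
        rw [hIb', hIb', smul_mul_assoc, star_smul, Complex.star_def, hκconj, neg_smul,
          mul_neg, mul_smul_comm, sub_neg_eq_add, ← smul_add] at h'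
        have h'' := smul_cancel hκ0 h'
        rw [h'', hstar]
      have h3 : Φ (a*b) + Φ (a*b) = (Φ a*Φ b) + (Φ a*Φ b) := by
        have h4 : Φ ((a*b - b*star a) + (a*b + b*star a)) =
            Φ (a*b - b*star a) + Φ (a*b + b*star a) := hadd _ _
        rw [show (a*b - b*star a) + (a*b + b*star a) = a*b + a*b from by abel, hadd,
          h1, h2] at h4
        rw [h4]
        abel
      exact add_self_cancel h3
    exact ⟨hadd, hmul, hstar⟩
  · rintro ⟨hadd, hmul, hstar⟩ a b
    have hz : Φ 0 = 0 := by
      have h' := hadd 0 0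
      rw [add_zero] at h'
      exact right_eq_add.mp h'
    have hsub : ∀ x y : A, Φ (x - y) = Φ x - Φ y := by
      intro x y
      have h' := hadd (x - y) y
      rw [sub_add_cancel] at h'
      exact eq_sub_of_add_eq h'.symm
    rw [hsub, hmul, hmul, hstar]
end

section
/- Let A be a unital prime complex *-algebra containing a nontrivial projection, let B be a complex *-algebra, and let Φ : A → B be a bijective mapping satisfying Φ(xy − yx*) = Φ(x)Φ(y) − Φ(y)Φ(x)* for all x, y ∈ A. Then Φ is additive, i.e. Φ(a + b) = Φ(a) + Φ(b) for all a, b ∈ A. -/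
set_option linter.unusedSectionVars false
set_option maxHeartbeats 1000000

namespace Stmt7Proof

variable {A B : Type*}
    [Ring A] [Algebra ℂ A] [StarRing A] [StarModule ℂ A]
    [Ring B] [Algebra ℂ B] [StarRing B] [StarModule ℂ B]

/-- Corner predicate: `x` lies in the Peirce corner `e ⬝ A ⬝ f`. -/
def Cor (e f x : A) : Prop := e * x = x ∧ x * f = x

namespace Cor

variable {e f e' f' x y : A}

theorem add (hx : Cor e f x) (hy : Cor e f y) : Cor e f (x + y) :=
  ⟨by rw [mul_add, hx.1, hy.1], by rw [add_mul, hx.2, hy.2]⟩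

theorem neg (hx : Cor e f x) : Cor e f (-x) :=
  ⟨by rw [mul_neg, hx.1], by rw [neg_mul, hx.2]⟩

theorem sub (hx : Cor e f x) (hy : Cor e f y) : Cor e f (x - y) :=
  ⟨by rw [mul_sub, hx.1, hy.1], by rw [sub_mul, hx.2, hy.2]⟩

theorem smul (hx : Cor e f x) (α : ℂ) : Cor e f (α • x) :=
  ⟨by rw [mul_smul_comm, hx.1], by rw [smul_mul_assoc, hx.2]⟩

theorem star' (hx : Cor e f x) (hse : star e = e) (hsf : star f = f) :
    Cor f e (star x) :=
  ⟨by rw [← hsf, ← star_mul, hx.2], by rw [← hse, ← star_mul, hx.1]⟩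

theorem mul_eq_zero (hfe : f * e' = 0) (hx : Cor e f x) (hy : Cor e' f' y) :
    x * y = 0 := by
  have hxy : x * y = (x * f) * (e' * y) := by rw [hx.2, hy.1]
  rw [hxy, mul_assoc, ← mul_assoc f, hfe, zero_mul, mul_zero]

theorem lzero {g : A} (hx : Cor e f x) (hge : g * e = 0) : g * x = 0 := by
  rw [← hx.1, ← mul_assoc, hge, zero_mul]

theorem rzero {g : A} (hx : Cor e f x) (hfg : f * g = 0) : x * g = 0 := by
  rw [← hx.2, mul_assoc, hfg, mul_zero]

end Cor

theorem lhead {e x : A} (hx : e * x = x) (y : A) : e * (x * y) = x * y := by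
  rw [← mul_assoc, hx]

theorem lzhead {e x : A} (hx : e * x = 0) (y : A) : e * (x * y) = 0 := by
  rw [← mul_assoc, hx, zero_mul]

theorem smul_cancel {α : ℂ} (hα : α ≠ 0) {u v : A} (e : α • u = α • v) : u = v := by
  have h2 := congrArg (fun z : A => α⁻¹ • z) e
  simpa [smul_smul, inv_mul_cancel₀ hα] using h2

theorem smul_cancel0 {α : ℂ} (hα : α ≠ 0) {u : A} (e : α • u = 0) : u = 0 :=
  smul_cancel hα (by rw [e, smul_zero])

theorem half {u v : A} (e : u + u = v + v) : u = v := by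
  have h2 : (2:ℂ) • u = (2:ℂ) • v := by rw [two_smul, two_smul]; exact e
  exact smul_cancel (by norm_num) h2

theorem halfz {u : A} (e : u + u = 0) : u = 0 :=
  half (v := 0) (by simpa using e)

theorem dIe {e : A} (hse : star e = e) (y : A) :
    (Complex.I • e) * y - y * star (Complex.I • e) = Complex.I • (e * y + y * e) := by
  rw [star_smul, hse, smul_mul_assoc, mul_smul_comm, smul_add]
  rw [show star Complex.I = -Complex.I by simp [Complex.star_def, Complex.conj_I]]
  rw [neg_smul, sub_neg_eq_add]

/-- All the standing hypotheses, bundled. -/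
structure Hyp (p q : A) (Φ : A → B) : Prop where
  hp : p * p = p
  hq : q * q = q
  hpq : p * q = 0
  hqp : q * p = 0
  hps : star p = p
  hqs : star q = q
  hp0 : p ≠ 0
  hq0 : q ≠ 0
  hpq1 : p + q = 1
  hprime : ∀ a b : A, (∀ x : A, a * x * b = 0) → a = 0 ∨ b = 0
  hinj : Function.Injective Φ
  hsurj : Function.Surjective Φ
  hmul : ∀ x y : A, Φ (x * y - y * star x) = Φ x * Φ y - Φ y * star (Φ x)

variable {p q : A} {Φ : A → B}

theorem phi0 (H : Hyp p q Φ) : Φ 0 = 0 := by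
  obtain ⟨a, ha⟩ := H.hsurj 0
  have h0 := H.hmul a 0
  rw [mul_zero, zero_mul, sub_zero, ha] at h0
  simpa using h0

theorem keyL (H : Hyp p q Φ) {a b c : A} (hc : Φ c = Φ a + Φ b) (x : A) :
    Φ (x * c - c * star x) = Φ (x * a - a * star x) + Φ (x * b - b * star x) := by
  rw [H.hmul, H.hmul, H.hmul, hc]
  noncomm_ring

theorem keyR (H : Hyp p q Φ) {a b c : A} (hc : Φ c = Φ a + Φ b) (x : A) :
    Φ (c * x - x * star c) = Φ (a * x - x * star a) + Φ (b * x - x * star b) := by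
  rw [H.hmul, H.hmul, H.hmul, hc, star_add]
  noncomm_ring

theorem killL_right (H : Hyp p q Φ) {a b c : A} (hc : Φ c = Φ a + Φ b) (x : A)
    (hxb : x * b - b * star x = 0) : x * c - c * star x = x * a - a * star x := by
  apply H.hinj
  rw [keyL H hc x, hxb, phi0 H, add_zero]

theorem killL_left (H : Hyp p q Φ) {a b c : A} (hc : Φ c = Φ a + Φ b) (x : A)
    (hxa : x * a - a * star x = 0) : x * c - c * star x = x * b - b * star x := by
  apply H.hinj
  rw [keyL H hc x, hxa, phi0 H, zero_add]

theorem killL0 (H : Hyp p q Φ) {a b c : A} (hc : Φ c = Φ a + Φ b) (x : A)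
    (hxa : x * a - a * star x = 0) (hxb : x * b - b * star x = 0) :
    x * c - c * star x = 0 := by
  apply H.hinj
  rw [keyL H hc x, hxa, hxb, phi0 H, add_zero]

theorem killR_right (H : Hyp p q Φ) {a b c : A} (hc : Φ c = Φ a + Φ b) (x : A)
    (hxb : b * x - x * star b = 0) : c * x - x * star c = a * x - x * star a := by
  apply H.hinj
  rw [keyR H hc x, hxb, phi0 H, add_zero]

theorem killR_left (H : Hyp p q Φ) {a b c : A} (hc : Φ c = Φ a + Φ b) (x : A)
    (hxa : a * x - x * star a = 0) : c * x - x * star c = b * x - x * star b := by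
  apply H.hinj
  rw [keyR H hc x, hxa, phi0 H, zero_add]

theorem peirce (H : Hyp p q Φ) (c : A) :
    c = p * (c * p) + p * (c * q) + q * (c * p) + q * (c * q) := by
  conv_lhs => rw [show c = (p + q) * (c * (p + q)) by rw [H.hpq1, one_mul, mul_one]]
  simp only [mul_add, add_mul]
  abel

/-- Claim C1 : additivity of (A₁₁, A₂₂) pairs. -/
theorem C1 (H : Hyp p q Φ) {a b : A} (ha : Cor p p a) (hb : Cor q q b) :
    Φ (a + b) = Φ a + Φ b := by
  obtain ⟨c, hc⟩ := H.hsurj (Φ a + Φ b)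
  have hpb : p * b = 0 := hb.lzero H.hpq
  have hbp : b * p = 0 := hb.rzero H.hqp
  have hqa : q * a = 0 := ha.lzero H.hqp
  have haq : a * q = 0 := ha.rzero H.hpq
  have k1 : (Complex.I • p) * c - c * star (Complex.I • p)
      = (Complex.I • p) * a - a * star (Complex.I • p) :=
    killL_right H hc _ (by rw [dIe H.hps, hpb, hbp, add_zero, smul_zero])
  rw [dIe H.hps, dIe H.hps, ha.1, ha.2] at k1
  have E1 : p * c + c * p = a + a := smul_cancel Complex.I_ne_zero k1
  have k2 : (Complex.I • q) * c - c * star (Complex.I • q)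
      = (Complex.I • q) * b - b * star (Complex.I • q) :=
    killL_left H hc _ (by rw [dIe H.hqs, hqa, haq, add_zero, smul_zero])
  rw [dIe H.hqs, dIe H.hqs, hb.1, hb.2] at k2
  have E2 : q * c + c * q = b + b := smul_cancel Complex.I_ne_zero k2
  have c11 : p * (c * p) = a := by
    have e : p * ((p * c + c * p) * p) = p * ((a + a) * p) := by rw [E1]
    simp only [mul_add, add_mul, mul_assoc, lhead H.hp, H.hp, ha.1, ha.2] at e
    exact half e
  have c12 : p * (c * q) = 0 := by
    have e : p * ((p * c + c * p) * q) = p * ((a + a) * q) := by rw [E1]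
    simp only [mul_add, add_mul, mul_assoc, lhead H.hp, H.hpq, haq, mul_zero,
      add_zero, zero_add] at e
    exact e
  have c21 : q * (c * p) = 0 := by
    have e : q * ((p * c + c * p) * p) = q * ((a + a) * p) := by rw [E1]
    simp only [mul_add, add_mul, mul_assoc, lzhead H.hqp, H.hp, ha.2, hqa, mul_zero,
      zero_mul, add_zero, zero_add] at e
    exact e
  have c22 : q * (c * q) = b := by
    have e : q * ((q * c + c * q) * q) = q * ((b + b) * q) := by rw [E2]
    simp only [mul_add, add_mul, mul_assoc, lhead H.hq, H.hq, hb.1, hb.2] at e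
    exact half e
  have hcab : c = a + b := by
    rw [peirce H c, c11, c12, c21, c22]
    abel
  rw [← hcab]; exact hc

/-- Claim C3 : additivity of (A₁₂, A₂₁) pairs. -/
theorem C3 (H : Hyp p q Φ) {u v : A} (hu : Cor p q u) (hv : Cor q p v) :
    Φ (u + v) = Φ u + Φ v := by
  obtain ⟨c, hc⟩ := H.hsurj (Φ u + Φ v)
  have hup : u * p = 0 := hu.rzero H.hqp
  have hqu : q * u = 0 := hu.lzero H.hqp
  have hvq : v * q = 0 := hv.rzero H.hpq
  have hpv : p * v = 0 := hv.lzero H.hpq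
  have hsu : Cor q p (star u) := hu.star' H.hps H.hqs
  have hsv : Cor p q (star v) := hv.star' H.hqs H.hps
  have hspq : star (p - q) = p - q := by rw [star_sub, H.hps, H.hqs]
  have hkillu : (p - q) * u + u * (p - q) = 0 := by
    rw [sub_mul, mul_sub, hu.1, hqu, hup, hu.2]
    abel
  have hkillv : (p - q) * v + v * (p - q) = 0 := by
    rw [sub_mul, mul_sub, hpv, hv.1, hv.2, hvq]
    abel
  have E0 : (p - q) * c + c * (p - q) = 0 := by
    have k := killL0 H hc (Complex.I • (p - q))
      (by rw [dIe hspq, hkillu, smul_zero])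
      (by rw [dIe hspq, hkillv, smul_zero])
    rw [dIe hspq] at k
    exact smul_cancel0 Complex.I_ne_zero k
  have F : p * c + c * p = q * c + c * q := by
    have h' := E0
    rw [sub_mul, mul_sub] at h'
    have h'' : (p * c + c * p) - (q * c + c * q) = 0 := by rw [← h']; abel
    exact sub_eq_zero.mp h''
  have c11 : p * (c * p) = 0 := by
    have e : p * ((p * c + c * p) * p) = p * ((q * c + c * q) * p) := by rw [F]
    simp only [mul_add, add_mul, mul_assoc, lhead H.hp, lzhead H.hpq, H.hp, H.hqp,
      mul_zero, zero_mul, add_zero, zero_add] at e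
    exact halfz e
  have c22 : q * (c * q) = 0 := by
    have e : q * ((p * c + c * p) * q) = q * ((q * c + c * q) * q) := by rw [F]
    simp only [mul_add, add_mul, mul_assoc, lhead H.hq, lzhead H.hqp, H.hq, H.hpq,
      mul_zero, zero_mul, add_zero, zero_add] at e
    exact (halfz e.symm)
  have hsuq : (star u) * q = 0 := hsu.rzero H.hpq
  have hsvp : (star v) * p = 0 := hsv.rzero H.hqp
  have hqsu : q * star u = star u := hsu.1
  have hpsv : p * star v = star v := hsv.1
  have E3 : c * q - q * star c = u - star u := by
    have k := killR_right H hc q (by rw [hvq, hsv.lzero H.hqp, sub_zero])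
    rwa [hu.2, hqsu] at k
  have c12 : p * (c * q) = u := by
    have e : p * ((c * q - q * star c) * q) = p * ((u - star u) * q) := by rw [E3]
    simp only [sub_mul, mul_sub, mul_assoc, H.hq, lzhead H.hpq, hu.2, hu.1, hsuq,
      mul_zero, sub_zero] at e
    exact e
  have E4 : c * p - p * star c = v - star v := by
    have k := killR_left H hc p (by rw [hup, hsu.lzero H.hpq, sub_zero])
    rwa [hv.2, hpsv] at k
  have c21 : q * (c * p) = v := by
    have e : q * ((c * p - p * star c) * p) = q * ((v - star v) * p) := by rw [E4]
    simp only [sub_mul, mul_sub, mul_assoc, H.hp, lzhead H.hqp, hv.2, hv.1, hsvp,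
      mul_zero, sub_zero] at e
    exact e
  have hcab : c = u + v := by
    rw [peirce H c, c11, c12, c21, c22]
    abel
  rw [← hcab]; exact hc


/-- Claim C4a : additivity of (A₁₂, A₁₂) pairs. -/
theorem C4a (H : Hyp p q Φ) {a b : A} (ha : Cor p q a) (hb : Cor p q b) :
    Φ (a + b) = Φ a + Φ b := by
  by_cases hb0 : b = 0
  · subst hb0; rw [add_zero, phi0 H, add_zero]
  obtain ⟨c, hc⟩ := H.hsurj (Φ a + Φ b)
  have hap : a * p = 0 := ha.rzero H.hqp
  have hbp : b * p = 0 := hb.rzero H.hqp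
  -- Step 1: p*c - c*p = c, hence c ∈ A₁₂.
  have s1 : p * c - c * p = c := by
    apply H.hinj
    have k := keyL H hc p
    rw [H.hps] at k
    rw [show p * a - a * p = a by rw [ha.1, hap, sub_zero]] at k
    rw [show p * b - b * p = b by rw [hb.1, hbp, sub_zero]] at k
    rw [k]
    exact hc.symm
  have hpcp : p * (c * p) = 0 := by
    have e : p * (p * c - c * p) = p * c := by rw [s1]
    rw [mul_sub, show p * (p * c) = p * c by rw [← mul_assoc, H.hp]] at e
    exact sub_eq_self.mp e
  have hcp : c * p = 0 := by
    have e : (p * c - c * p) * p = c * p := by rw [s1]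
    rw [sub_mul, mul_assoc, mul_assoc, H.hp, hpcp, zero_sub] at e
    have h2 := congrArg (fun z => z + c * p) e
    simp only [neg_add_cancel] at h2
    exact halfz h2.symm
  have hpc : p * c = c := by
    have := s1; rw [hcp, sub_zero] at this; exact this
  have hcq : c * q = c := by
    have e := congrArg (fun z => c * z) H.hpq1
    simp only [mul_add, hcp, zero_add, mul_one] at e
    exact e
  have hcCor : Cor p q c := ⟨hpc, hcq⟩
  -- base pair (a, -b*) ∈ S from C3
  have hsb : Cor q p (star b) := hb.star' H.hps H.hqs
  have hP : Φ (a + -star b) = Φ a + Φ (-star b) := C3 H ha hsb.neg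
  set D := c - a - b with hD
  have hDCor : Cor p q D := (hcCor.sub ha).sub hb
  have hsD : Cor q p (star D) := hDCor.star' H.hps H.hqs
  have hstarD : star (c - a - b) = star c - star a - star b := by
    rw [star_sub, star_sub]
  -- R1
  have R1 : ∀ t : A, Cor q q t → star t = t → D * (t * star b) = 0 := by
    intro t ht hts
    have hxCor : Cor p q (b * t) := ⟨lhead hb.1 t, by rw [mul_assoc, ht.2]⟩
    have htsb : Cor q p (t * star b) := ⟨lhead ht.1 _, by rw [mul_assoc, hsb.2]⟩
    have hsx : star (b * t) = t * star b := by rw [star_mul, hts]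
    have he : (b * t) * b - b * star (b * t)
        = (b * t) * (-star b) - (-star b) * star (b * t) := by
      have h1 : (b * t) * b = 0 := Cor.mul_eq_zero H.hqp hxCor hb
      have h2 : star b * (t * star b) = 0 := Cor.mul_eq_zero H.hpq hsb htsb
      rw [h1, hsx, zero_sub, mul_neg, neg_mul, h2, neg_zero, sub_zero, mul_assoc]
    have htr : (b * t) * c - c * star (b * t)
        = ((b * t) * a - a * star (b * t)) + ((b * t) * b - b * star (b * t)) := by
      have k := keyL H hc (b * t)
      have k2 := keyL H hP (b * t)
      rw [he, ← k2] at k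
      have hk := H.hinj k
      rw [hk]
      have expand : (b * t) * (a + -star b) - (a + -star b) * star (b * t)
          = ((b * t) * a - a * star (b * t))
            + ((b * t) * (-star b) - (-star b) * star (b * t)) := by
        noncomm_ring
      rw [expand, ← he]
    have hxD : (b * t) * D - D * star (b * t) = 0 := by
      have expand : (b * t) * D - D * star (b * t)
          = ((b * t) * c - c * star (b * t)) - ((b * t) * a - a * star (b * t))
            - ((b * t) * b - b * star (b * t)) := by
        rw [hD]; noncomm_ring
      rw [expand, htr]; abel
    have hxD0 : (b * t) * D = 0 := Cor.mul_eq_zero H.hqp hxCor hDCor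
    rw [hxD0, zero_sub, neg_eq_zero, hsx] at hxD
    exact hxD
  -- R2
  have R2 : ∀ t : A, Cor q q t → star t = t → b * (t * star D) = 0 := by
    intro t ht hts
    have htsb : Cor q p (t * star b) := ⟨lhead ht.1 _, by rw [mul_assoc, hsb.2]⟩
    have hbt : Cor p q (b * t) := ⟨lhead hb.1 t, by rw [mul_assoc, ht.2]⟩
    have hbx' : b * (b * t + t * star b) - (b * t + t * star b) * star b = 0 := by
      rw [mul_add, add_mul]
      have h1 : b * (b * t) = 0 := by
        rw [← mul_assoc, Cor.mul_eq_zero H.hqp hb hb, zero_mul]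
      have h2 : (t * star b) * star b = 0 := Cor.mul_eq_zero H.hpq htsb hsb
      rw [h1, h2, zero_add, add_zero, mul_assoc, sub_self]
    have k := killR_right H hc (b * t + t * star b) hbx'
    have hDx' : D * (b * t + t * star b) - (b * t + t * star b) * star D = 0 := by
      have expand : D * (b * t + t * star b) - (b * t + t * star b) * star D
          = (c * (b * t + t * star b) - (b * t + t * star b) * star c)
            - (a * (b * t + t * star b) - (b * t + t * star b) * star a)
            - (b * (b * t + t * star b) - (b * t + t * star b) * star b) := by
        rw [hD, hstarD]; noncomm_ring
      rw [expand, k, hbx']; abel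
    have h3 : D * (b * t + t * star b) = 0 := by
      rw [mul_add]
      have e1 : D * (b * t) = 0 := by
        rw [← mul_assoc, Cor.mul_eq_zero H.hqp hDCor hb, zero_mul]
      have e2 : D * (t * star b) = 0 := R1 t ht hts
      rw [e1, e2, add_zero]
    rw [h3, zero_sub, neg_eq_zero, add_mul] at hDx'
    have e3 : (t * star b) * star D = 0 := Cor.mul_eq_zero H.hpq htsb hsD
    rw [e3, add_zero, mul_assoc] at hDx'
    exact hDx'
  -- R3 : extend to all of A₂₂
  have R3 : ∀ t : A, Cor q q t → b * (t * star D) = 0 := by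
    intro t ht
    have hstt : Cor q q (star t) := ht.star' H.hqs H.hqs
    set t1 : A := ((2:ℂ)⁻¹) • (t + star t) with ht1
    set t2 : A := (-(2:ℂ)⁻¹ * Complex.I) • (t - star t) with ht2
    have ht1c : Cor q q t1 := (ht.add hstt).smul _
    have ht2c : Cor q q t2 := (ht.sub hstt).smul _
    have ht1s : star t1 = t1 := by
      rw [ht1, star_smul, star_add, star_star]
      rw [show star ((2:ℂ)⁻¹) = ((2:ℂ)⁻¹) by simp]
      rw [add_comm]
    have ht2s : star t2 = t2 := by
      rw [ht2, star_smul, star_sub, star_star]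
      rw [show star (-(2:ℂ)⁻¹ * Complex.I) = (2:ℂ)⁻¹ * Complex.I by
        simp [Complex.star_def, Complex.conj_I, map_mul]]
      rw [show ((2:ℂ)⁻¹ * Complex.I) • (star t - t)
          = (-(2:ℂ)⁻¹ * Complex.I) • (t - star t) by
        rw [neg_mul, neg_smul, ← smul_neg, neg_sub]]
    have hdecomp : t = t1 + Complex.I • t2 := by
      rw [ht1, ht2, smul_smul]
      rw [show Complex.I * (-(2:ℂ)⁻¹ * Complex.I) = (2:ℂ)⁻¹ by
        have hI : Complex.I * Complex.I = -1 := Complex.I_mul_I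
        calc Complex.I * (-(2:ℂ)⁻¹ * Complex.I)
            = -(2:ℂ)⁻¹ * (Complex.I * Complex.I) := by ring
          _ = (2:ℂ)⁻¹ := by rw [hI]; ring]
      rw [smul_add, smul_sub]
      have harr : ((2:ℂ)⁻¹ • t + (2:ℂ)⁻¹ • star t)
          + ((2:ℂ)⁻¹ • t - (2:ℂ)⁻¹ • star t) = ((2:ℂ)⁻¹ + (2:ℂ)⁻¹) • t := by
        rw [add_smul]; abel
      rw [harr, show ((2:ℂ)⁻¹ + (2:ℂ)⁻¹) = (1:ℂ) by norm_num, one_smul]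
    calc b * (t * star D)
        = b * ((t1 + Complex.I • t2) * star D) := by rw [← hdecomp]
      _ = b * (t1 * star D) + Complex.I • (b * (t2 * star D)) := by
          rw [add_mul, mul_add]
          congr 1
          rw [smul_mul_assoc Complex.I t2 (star D), mul_smul_comm]
      _ = 0 := by
          rw [R2 _ ht1c ht1s, R2 _ ht2c ht2s, smul_zero, add_zero]
  -- primeness
  have hbyD : ∀ y : A, b * y * star D = 0 := by
    intro y
    have hqyq : Cor q q (q * (y * q)) :=
      ⟨by rw [← mul_assoc, H.hq], by rw [mul_assoc, mul_assoc, H.hq]⟩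
    have h5 := R3 _ hqyq
    rw [show (q * (y * q)) * star D = q * (y * star D) by
      rw [mul_assoc, mul_assoc, hsD.1]] at h5
    rw [show b * (q * (y * star D)) = b * y * star D by
      rw [← mul_assoc, hb.2, mul_assoc]] at h5
    exact h5
  rcases H.hprime b (star D) hbyD with h1 | h1
  · exact absurd h1 hb0
  · have hD0 : c - a - b = 0 := by
      have h2 := congrArg star h1
      rwa [star_star, star_zero, hD] at h2
    have hcab : c = a + b := by
      have h2 : c - (a + b) = 0 := by rw [sub_add_eq_sub_sub]; exact hD0
      exact sub_eq_zero.mp h2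
    rw [← hcab]; exact hc

/-- Claim C4b : additivity of (A₂₁, A₂₁) pairs. -/
theorem C4b (H : Hyp p q Φ) {a b : A} (ha : Cor q p a) (hb : Cor q p b) :
    Φ (a + b) = Φ a + Φ b := by
  by_cases hb0 : b = 0
  · subst hb0; rw [add_zero, phi0 H, add_zero]
  obtain ⟨c, hc⟩ := H.hsurj (Φ a + Φ b)
  have haq : a * q = 0 := ha.rzero H.hpq
  have hbq : b * q = 0 := hb.rzero H.hpq
  have s1 : q * c - c * q = c := by
    apply H.hinj
    have k := keyL H hc q
    rw [H.hqs] at k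
    rw [show q * a - a * q = a by rw [ha.1, haq, sub_zero]] at k
    rw [show q * b - b * q = b by rw [hb.1, hbq, sub_zero]] at k
    rw [k]
    exact hc.symm
  have hqcq : q * (c * q) = 0 := by
    have e : q * (q * c - c * q) = q * c := by rw [s1]
    rw [mul_sub, show q * (q * c) = q * c by rw [← mul_assoc, H.hq]] at e
    exact sub_eq_self.mp e
  have hcq : c * q = 0 := by
    have e : (q * c - c * q) * q = c * q := by rw [s1]
    rw [sub_mul, mul_assoc, mul_assoc, H.hq, hqcq, zero_sub] at e
    have h2 := congrArg (fun z => z + c * q) e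
    simp only [neg_add_cancel] at h2
    exact halfz h2.symm
  have hqc : q * c = c := by
    have := s1; rw [hcq, sub_zero] at this; exact this
  have hcp : c * p = c := by
    have e := congrArg (fun z => c * z) H.hpq1
    simp only [mul_add, hcq, add_zero, mul_one] at e
    exact e
  have hcCor : Cor q p c := ⟨hqc, hcp⟩
  have hsb : Cor p q (star b) := hb.star' H.hqs H.hps
  have hP : Φ (a + -star b) = Φ a + Φ (-star b) := by
    have h' := C3 H hsb.neg ha
    rw [add_comm (-star b) a, add_comm (Φ (-star b)) (Φ a)] at h'
    exact h'
  set D := c - a - b with hD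
  have hDCor : Cor q p D := (hcCor.sub ha).sub hb
  have hsD : Cor p q (star D) := hDCor.star' H.hqs H.hps
  have hstarD : star (c - a - b) = star c - star a - star b := by
    rw [star_sub, star_sub]
  have R1 : ∀ t : A, Cor p p t → star t = t → D * (t * star b) = 0 := by
    intro t ht hts
    have hxCor : Cor q p (b * t) := ⟨lhead hb.1 t, by rw [mul_assoc, ht.2]⟩
    have htsb : Cor p q (t * star b) := ⟨lhead ht.1 _, by rw [mul_assoc, hsb.2]⟩
    have hsx : star (b * t) = t * star b := by rw [star_mul, hts]
    have he : (b * t) * b - b * star (b * t)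
        = (b * t) * (-star b) - (-star b) * star (b * t) := by
      have h1 : (b * t) * b = 0 := Cor.mul_eq_zero H.hpq hxCor hb
      have h2 : star b * (t * star b) = 0 := Cor.mul_eq_zero H.hqp hsb htsb
      rw [h1, hsx, zero_sub, mul_neg, neg_mul, h2, neg_zero, sub_zero, mul_assoc]
    have htr : (b * t) * c - c * star (b * t)
        = ((b * t) * a - a * star (b * t)) + ((b * t) * b - b * star (b * t)) := by
      have k := keyL H hc (b * t)
      have k2 := keyL H hP (b * t)
      rw [he, ← k2] at k
      have hk := H.hinj k
      rw [hk]
      have expand : (b * t) * (a + -star b) - (a + -star b) * star (b * t)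
          = ((b * t) * a - a * star (b * t))
            + ((b * t) * (-star b) - (-star b) * star (b * t)) := by
        noncomm_ring
      rw [expand, ← he]
    have hxD : (b * t) * D - D * star (b * t) = 0 := by
      have expand : (b * t) * D - D * star (b * t)
          = ((b * t) * c - c * star (b * t)) - ((b * t) * a - a * star (b * t))
            - ((b * t) * b - b * star (b * t)) := by
        rw [hD]; noncomm_ring
      rw [expand, htr]; abel
    have hxD0 : (b * t) * D = 0 := Cor.mul_eq_zero H.hpq hxCor hDCor
    rw [hxD0, zero_sub, neg_eq_zero, hsx] at hxD
    exact hxD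
  have R2 : ∀ t : A, Cor p p t → star t = t → b * (t * star D) = 0 := by
    intro t ht hts
    have htsb : Cor p q (t * star b) := ⟨lhead ht.1 _, by rw [mul_assoc, hsb.2]⟩
    have hbt : Cor q p (b * t) := ⟨lhead hb.1 t, by rw [mul_assoc, ht.2]⟩
    have hbx' : b * (b * t + t * star b) - (b * t + t * star b) * star b = 0 := by
      rw [mul_add, add_mul]
      have h1 : b * (b * t) = 0 := by
        rw [← mul_assoc, Cor.mul_eq_zero H.hpq hb hb, zero_mul]
      have h2 : (t * star b) * star b = 0 := Cor.mul_eq_zero H.hqp htsb hsb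
      rw [h1, h2, zero_add, add_zero, mul_assoc, sub_self]
    have k := killR_right H hc (b * t + t * star b) hbx'
    have hDx' : D * (b * t + t * star b) - (b * t + t * star b) * star D = 0 := by
      have expand : D * (b * t + t * star b) - (b * t + t * star b) * star D
          = (c * (b * t + t * star b) - (b * t + t * star b) * star c)
            - (a * (b * t + t * star b) - (b * t + t * star b) * star a)
            - (b * (b * t + t * star b) - (b * t + t * star b) * star b) := by
        rw [hD, hstarD]; noncomm_ring
      rw [expand, k, hbx']; abel
    have h3 : D * (b * t + t * star b) = 0 := by
      rw [mul_add]
      have e1 : D * (b * t) = 0 := by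
        rw [← mul_assoc, Cor.mul_eq_zero H.hpq hDCor hb, zero_mul]
      have e2 : D * (t * star b) = 0 := R1 t ht hts
      rw [e1, e2, add_zero]
    rw [h3, zero_sub, neg_eq_zero, add_mul] at hDx'
    have e3 : (t * star b) * star D = 0 := Cor.mul_eq_zero H.hqp htsb hsD
    rw [e3, add_zero, mul_assoc] at hDx'
    exact hDx'
  have R3 : ∀ t : A, Cor p p t → b * (t * star D) = 0 := by
    intro t ht
    have hstt : Cor p p (star t) := ht.star' H.hps H.hps
    set t1 : A := ((2:ℂ)⁻¹) • (t + star t) with ht1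
    set t2 : A := (-(2:ℂ)⁻¹ * Complex.I) • (t - star t) with ht2
    have ht1c : Cor p p t1 := (ht.add hstt).smul _
    have ht2c : Cor p p t2 := (ht.sub hstt).smul _
    have ht1s : star t1 = t1 := by
      rw [ht1, star_smul, star_add, star_star]
      rw [show star ((2:ℂ)⁻¹) = ((2:ℂ)⁻¹) by simp]
      rw [add_comm]
    have ht2s : star t2 = t2 := by
      rw [ht2, star_smul, star_sub, star_star]
      rw [show star (-(2:ℂ)⁻¹ * Complex.I) = (2:ℂ)⁻¹ * Complex.I by
        simp [Complex.star_def, Complex.conj_I, map_mul]]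
      rw [show ((2:ℂ)⁻¹ * Complex.I) • (star t - t)
          = (-(2:ℂ)⁻¹ * Complex.I) • (t - star t) by
        rw [neg_mul, neg_smul, ← smul_neg, neg_sub]]
    have hdecomp : t = t1 + Complex.I • t2 := by
      rw [ht1, ht2, smul_smul]
      rw [show Complex.I * (-(2:ℂ)⁻¹ * Complex.I) = (2:ℂ)⁻¹ by
        have hI : Complex.I * Complex.I = -1 := Complex.I_mul_I
        calc Complex.I * (-(2:ℂ)⁻¹ * Complex.I)
            = -(2:ℂ)⁻¹ * (Complex.I * Complex.I) := by ring
          _ = (2:ℂ)⁻¹ := by rw [hI]; ring]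
      rw [smul_add, smul_sub]
      have harr : ((2:ℂ)⁻¹ • t + (2:ℂ)⁻¹ • star t)
          + ((2:ℂ)⁻¹ • t - (2:ℂ)⁻¹ • star t) = ((2:ℂ)⁻¹ + (2:ℂ)⁻¹) • t := by
        rw [add_smul]; abel
      rw [harr, show ((2:ℂ)⁻¹ + (2:ℂ)⁻¹) = (1:ℂ) by norm_num, one_smul]
    calc b * (t * star D)
        = b * ((t1 + Complex.I • t2) * star D) := by rw [← hdecomp]
      _ = b * (t1 * star D) + Complex.I • (b * (t2 * star D)) := by
          rw [add_mul, mul_add]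
          congr 1
          rw [smul_mul_assoc Complex.I t2 (star D), mul_smul_comm]
      _ = 0 := by
          rw [R2 _ ht1c ht1s, R2 _ ht2c ht2s, smul_zero, add_zero]
  have hbyD : ∀ y : A, b * y * star D = 0 := by
    intro y
    have hpyp : Cor p p (p * (y * p)) :=
      ⟨by rw [← mul_assoc, H.hp], by rw [mul_assoc, mul_assoc, H.hp]⟩
    have h5 := R3 _ hpyp
    rw [show (p * (y * p)) * star D = p * (y * star D) by
      rw [mul_assoc, mul_assoc, hsD.1]] at h5
    rw [show b * (p * (y * star D)) = b * y * star D by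
      rw [← mul_assoc, hb.2, mul_assoc]] at h5
    exact h5
  rcases H.hprime b (star D) hbyD with h1 | h1
  · exact absurd h1 hb0
  · have hD0 : c - a - b = 0 := by
      have h2 := congrArg star h1
      rwa [star_star, star_zero, hD] at h2
    have hcab : c = a + b := by
      have h2 : c - (a + b) = 0 := by rw [sub_add_eq_sub_sub]; exact hD0
      exact sub_eq_zero.mp h2
    rw [← hcab]; exact hc

/-- Claim C4c : additivity of (A₁₁, A₁₁) pairs. -/
theorem C4c (H : Hyp p q Φ) {a b : A} (ha : Cor p p a) (hb : Cor p p b) :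
    Φ (a + b) = Φ a + Φ b := by
  obtain ⟨c, hc⟩ := H.hsurj (Φ a + Φ b)
  have hkill : ∀ z : A, Cor p q z → z * c - c * star z = 0 := by
    intro z hz
    have hza : z * a = 0 := Cor.mul_eq_zero H.hqp hz ha
    have hzb : z * b = 0 := Cor.mul_eq_zero H.hqp hz hb
    have hasz : a * star z = 0 := Cor.mul_eq_zero H.hpq ha (hz.star' H.hps H.hqs)
    have hbsz : b * star z = 0 := Cor.mul_eq_zero H.hpq hb (hz.star' H.hps H.hqs)
    exact killL0 H hc z (by rw [hza, hasz, sub_zero]) (by rw [hzb, hbsz, sub_zero])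
  have hzc : ∀ z : A, Cor p q z → z * c = 0 ∧ c * star z = 0 := by
    intro z hz
    have h1 := hkill z hz
    have h2 := hkill (Complex.I • z) (hz.smul _)
    rw [smul_mul_assoc, star_smul, mul_smul_comm] at h2
    rw [show star Complex.I = -Complex.I by simp [Complex.star_def, Complex.conj_I],
      neg_smul, sub_neg_eq_add, ← smul_add] at h2
    have h3 : z * c + c * star z = 0 := smul_cancel0 Complex.I_ne_zero h2
    have h4 : z * c = 0 := by
      have h6 : z * c + z * c = (z * c - c * star z) + (z * c + c * star z) := by abel
      rw [h1, h3, add_zero] at h6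
      exact halfz h6
    have h7 : c * star z = 0 := by
      rw [h4, zero_add] at h3; exact h3
    exact ⟨h4, h7⟩
  have hqc : q * c = 0 := by
    have hpy : ∀ y, p * y * (q * c) = 0 := by
      intro y
      have hz : Cor p q (p * (y * q)) :=
        ⟨by rw [← mul_assoc, H.hp], by rw [mul_assoc, mul_assoc, H.hq]⟩
      have h5 := (hzc _ hz).1
      rw [show (p * (y * q)) * c = p * y * (q * c) by
        rw [mul_assoc, mul_assoc, mul_assoc]] at h5
      exact h5
    rcases H.hprime p (q * c) hpy with h | h
    · exact absurd h H.hp0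
    · exact h
  have hcq : c * q = 0 := by
    have hcy : ∀ y, (c * q) * y * p = 0 := by
      intro y
      have hz : Cor p q (p * (star y * q)) :=
        ⟨by rw [← mul_assoc, H.hp], by rw [mul_assoc, mul_assoc, H.hq]⟩
      have h5 := (hzc _ hz).2
      rw [show star (p * (star y * q)) = (q * y) * p by
        rw [star_mul, star_mul, star_star, H.hps, H.hqs, mul_assoc]] at h5
      rw [show c * ((q * y) * p) = (c * q) * y * p by
        rw [mul_assoc, mul_assoc, mul_assoc]] at h5
      exact h5
    rcases H.hprime (c * q) p hcy with h | h
    · exact h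
    · exact absurd h H.hp0
  have hpc : p * c = c := by
    have e := congrArg (fun z => z * c) H.hpq1
    simp only [add_mul, hqc, add_zero, one_mul] at e
    exact e
  have hcp : c * p = c := by
    have e := congrArg (fun z => c * z) H.hpq1
    simp only [mul_add, hcq, add_zero, mul_one] at e
    exact e
  have hcCor : Cor p p c := ⟨hpc, hcp⟩
  have hmove : ∀ z : A, Cor p q z → c * z = a * z + b * z := by
    intro z hz
    have hza : Cor p q (a * z) := ⟨lhead ha.1 z, by rw [mul_assoc, hz.2]⟩
    have hzb : Cor p q (b * z) := ⟨lhead hb.1 z, by rw [mul_assoc, hz.2]⟩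
    have k := keyR H hc z
    rw [show a * z - z * star a = a * z by
      rw [Cor.mul_eq_zero H.hqp hz (ha.star' H.hps H.hps), sub_zero]] at k
    rw [show b * z - z * star b = b * z by
      rw [Cor.mul_eq_zero H.hqp hz (hb.star' H.hps H.hps), sub_zero]] at k
    rw [show c * z - z * star c = c * z by
      rw [Cor.mul_eq_zero H.hqp hz (hcCor.star' H.hps H.hps), sub_zero]] at k
    rw [← C4a H hza hzb] at k
    exact H.hinj k
  have hDz : ∀ y : A, (c - a - b) * y * q = 0 := by
    intro y
    have hz : Cor p q (p * (y * q)) :=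
      ⟨by rw [← mul_assoc, H.hp], by rw [mul_assoc, mul_assoc, H.hq]⟩
    have h5 := hmove _ hz
    have hD' : (c - a - b) * (p * (y * q)) = 0 := by
      rw [sub_mul, sub_mul, h5]; abel
    have hDp : (c - a - b) * p = c - a - b := ((hcCor.sub ha).sub hb).2
    rw [show (c - a - b) * (p * (y * q)) = (c - a - b) * y * q by
      rw [← mul_assoc, hDp, mul_assoc]] at hD'
    exact hD'
  rcases H.hprime (c - a - b) q hDz with h | h
  · have hcab : c = a + b := by
      have h2 : c - (a + b) = 0 := by rw [sub_add_eq_sub_sub]; exact h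
      exact sub_eq_zero.mp h2
    rw [← hcab]; exact hc
  · exact absurd h H.hq0

/-- Claim C4d : additivity of (A₂₂, A₂₂) pairs. -/
theorem C4d (H : Hyp p q Φ) {a b : A} (ha : Cor q q a) (hb : Cor q q b) :
    Φ (a + b) = Φ a + Φ b := by
  obtain ⟨c, hc⟩ := H.hsurj (Φ a + Φ b)
  have hkill : ∀ z : A, Cor q p z → z * c - c * star z = 0 := by
    intro z hz
    have hza : z * a = 0 := Cor.mul_eq_zero H.hpq hz ha
    have hzb : z * b = 0 := Cor.mul_eq_zero H.hpq hz hb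
    have hasz : a * star z = 0 := Cor.mul_eq_zero H.hqp ha (hz.star' H.hqs H.hps)
    have hbsz : b * star z = 0 := Cor.mul_eq_zero H.hqp hb (hz.star' H.hqs H.hps)
    exact killL0 H hc z (by rw [hza, hasz, sub_zero]) (by rw [hzb, hbsz, sub_zero])
  have hzc : ∀ z : A, Cor q p z → z * c = 0 ∧ c * star z = 0 := by
    intro z hz
    have h1 := hkill z hz
    have h2 := hkill (Complex.I • z) (hz.smul _)
    rw [smul_mul_assoc, star_smul, mul_smul_comm] at h2
    rw [show star Complex.I = -Complex.I by simp [Complex.star_def, Complex.conj_I],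
      neg_smul, sub_neg_eq_add, ← smul_add] at h2
    have h3 : z * c + c * star z = 0 := smul_cancel0 Complex.I_ne_zero h2
    have h4 : z * c = 0 := by
      have h6 : z * c + z * c = (z * c - c * star z) + (z * c + c * star z) := by abel
      rw [h1, h3, add_zero] at h6
      exact halfz h6
    have h7 : c * star z = 0 := by
      rw [h4, zero_add] at h3; exact h3
    exact ⟨h4, h7⟩
  have hpc : p * c = 0 := by
    have hpy : ∀ y, q * y * (p * c) = 0 := by
      intro y
      have hz : Cor q p (q * (y * p)) :=
        ⟨by rw [← mul_assoc, H.hq], by rw [mul_assoc, mul_assoc, H.hp]⟩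
      have h5 := (hzc _ hz).1
      rw [show (q * (y * p)) * c = q * y * (p * c) by
        rw [mul_assoc, mul_assoc, mul_assoc]] at h5
      exact h5
    rcases H.hprime q (p * c) hpy with h | h
    · exact absurd h H.hq0
    · exact h
  have hcp : c * p = 0 := by
    have hcy : ∀ y, (c * p) * y * q = 0 := by
      intro y
      have hz : Cor q p (q * (star y * p)) :=
        ⟨by rw [← mul_assoc, H.hq], by rw [mul_assoc, mul_assoc, H.hp]⟩
      have h5 := (hzc _ hz).2
      rw [show star (q * (star y * p)) = (p * y) * q by
        rw [star_mul, star_mul, star_star, H.hps, H.hqs, mul_assoc]] at h5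
      rw [show c * ((p * y) * q) = (c * p) * y * q by
        rw [mul_assoc, mul_assoc, mul_assoc]] at h5
      exact h5
    rcases H.hprime (c * p) q hcy with h | h
    · exact h
    · exact absurd h H.hq0
  have hqc : q * c = c := by
    have e := congrArg (fun z => z * c) H.hpq1
    simp only [add_mul, hpc, zero_add, one_mul] at e
    exact e
  have hcq : c * q = c := by
    have e := congrArg (fun z => c * z) H.hpq1
    simp only [mul_add, hcp, zero_add, mul_one] at e
    exact e
  have hcCor : Cor q q c := ⟨hqc, hcq⟩
  have hmove : ∀ z : A, Cor q p z → c * z = a * z + b * z := by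
    intro z hz
    have hza : Cor q p (a * z) := ⟨lhead ha.1 z, by rw [mul_assoc, hz.2]⟩
    have hzb : Cor q p (b * z) := ⟨lhead hb.1 z, by rw [mul_assoc, hz.2]⟩
    have k := keyR H hc z
    rw [show a * z - z * star a = a * z by
      rw [Cor.mul_eq_zero H.hpq hz (ha.star' H.hqs H.hqs), sub_zero]] at k
    rw [show b * z - z * star b = b * z by
      rw [Cor.mul_eq_zero H.hpq hz (hb.star' H.hqs H.hqs), sub_zero]] at k
    rw [show c * z - z * star c = c * z by
      rw [Cor.mul_eq_zero H.hpq hz (hcCor.star' H.hqs H.hqs), sub_zero]] at k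
    rw [← C4b H hza hzb] at k
    exact H.hinj k
  have hDz : ∀ y : A, (c - a - b) * y * p = 0 := by
    intro y
    have hz : Cor q p (q * (y * p)) :=
      ⟨by rw [← mul_assoc, H.hq], by rw [mul_assoc, mul_assoc, H.hp]⟩
    have h5 := hmove _ hz
    have hD' : (c - a - b) * (q * (y * p)) = 0 := by
      rw [sub_mul, sub_mul, h5]; abel
    have hDq : (c - a - b) * q = c - a - b := ((hcCor.sub ha).sub hb).2
    rw [show (c - a - b) * (q * (y * p)) = (c - a - b) * y * p by
      rw [← mul_assoc, hDq, mul_assoc]] at hD'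
    exact hD'
  rcases H.hprime (c - a - b) p hDz with h | h
  · have hcab : c = a + b := by
      have h2 : c - (a + b) = 0 := by rw [sub_add_eq_sub_sub]; exact h
      exact sub_eq_zero.mp h2
    rw [← hcab]; exact hc
  · exact absurd h H.hp0

/-- Claim C5a : (offdiagonal, A₁₁) additivity. -/
theorem C5a (H : Hyp p q Φ) {m1 m2 n : A} (h1 : Cor p q m1) (h2 : Cor q p m2)
    (hn : Cor p p n) : Φ (m1 + m2 + n) = Φ (m1 + m2) + Φ n := by
  obtain ⟨c, hc⟩ := H.hsurj (Φ (m1 + m2) + Φ n)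
  have k1 : (Complex.I • q) * c - c * star (Complex.I • q)
      = (Complex.I • q) * (m1 + m2) - (m1 + m2) * star (Complex.I • q) :=
    killL_right H hc _
      (by rw [dIe H.hqs, hn.lzero H.hqp, hn.rzero H.hpq, add_zero, smul_zero])
  rw [dIe H.hqs, dIe H.hqs] at k1
  have E1 : q * c + c * q = q * (m1 + m2) + (m1 + m2) * q :=
    smul_cancel Complex.I_ne_zero k1
  rw [mul_add, add_mul, h1.lzero H.hqp, h2.1, h1.2, h2.rzero H.hpq,
    zero_add, add_zero] at E1
  have hspq : star (p - q) = p - q := by rw [star_sub, H.hps, H.hqs]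
  have hkm : (p - q) * (m1 + m2) + (m1 + m2) * (p - q) = 0 := by
    rw [mul_add, add_mul, sub_mul, sub_mul, mul_sub, mul_sub,
      h1.1, h1.lzero H.hqp, h2.lzero H.hpq, h2.1, h1.2, h1.rzero H.hqp,
      h2.2, h2.rzero H.hpq]
    abel
  have k2 : (Complex.I • (p - q)) * c - c * star (Complex.I • (p - q))
      = (Complex.I • (p - q)) * n - n * star (Complex.I • (p - q)) :=
    killL_left H hc _ (by rw [dIe hspq, hkm, smul_zero])
  rw [dIe hspq, dIe hspq] at k2
  have E2 : (p - q) * c + c * (p - q) = (p - q) * n + n * (p - q) :=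
    smul_cancel Complex.I_ne_zero k2
  rw [show (p - q) * n + n * (p - q) = n + n by
    rw [sub_mul, mul_sub, hn.1, hn.lzero H.hqp, hn.2, hn.rzero H.hpq,
      sub_zero]] at E2
  have c12 : p * (c * q) = m1 := by
    have e : p * ((q * c + c * q) * q) = p * ((m2 + m1) * q) := by rw [E1]
    simp only [mul_add, add_mul, mul_assoc, lzhead H.hpq, H.hq,
      h2.rzero H.hpq, h1.2, h1.1, mul_zero, zero_add, add_zero] at e
    exact e
  have c21 : q * (c * p) = m2 := by
    have e : q * ((q * c + c * q) * p) = q * ((m2 + m1) * p) := by rw [E1]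
    simp only [mul_add, add_mul, mul_assoc, lhead H.hq, H.hqp,
      h2.2, h2.1, h1.rzero H.hqp, mul_zero, zero_add, add_zero] at e
    exact e
  have c22 : q * (c * q) = 0 := by
    have e : q * ((q * c + c * q) * q) = q * ((m2 + m1) * q) := by rw [E1]
    simp only [mul_add, add_mul, mul_assoc, lhead H.hq, H.hq,
      h2.rzero H.hpq, h1.2, h1.lzero H.hqp, mul_zero, zero_add, add_zero] at e
    exact halfz e
  have c11 : p * (c * p) = n := by
    have e : p * (((p - q) * c + c * (p - q)) * p) = p * ((n + n) * p) := by rw [E2]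
    simp only [sub_mul, mul_sub, mul_add, add_mul, mul_assoc, lhead H.hp,
      lzhead H.hpq, H.hp, H.hqp, hn.2, hn.1, mul_zero, zero_mul, sub_zero,
      add_zero, zero_add] at e
    exact half e
  have hcab : c = m1 + m2 + n := by
    rw [peirce H c, c11, c12, c21, c22]
    abel
  rw [← hcab]; exact hc

/-- Claim C5b : (offdiagonal, A₂₂) additivity. -/
theorem C5b (H : Hyp p q Φ) {m1 m2 n : A} (h1 : Cor p q m1) (h2 : Cor q p m2)
    (hn : Cor q q n) : Φ (m1 + m2 + n) = Φ (m1 + m2) + Φ n := by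
  obtain ⟨c, hc⟩ := H.hsurj (Φ (m1 + m2) + Φ n)
  have k1 : (Complex.I • p) * c - c * star (Complex.I • p)
      = (Complex.I • p) * (m1 + m2) - (m1 + m2) * star (Complex.I • p) :=
    killL_right H hc _
      (by rw [dIe H.hps, hn.lzero H.hpq, hn.rzero H.hqp, add_zero, smul_zero])
  rw [dIe H.hps, dIe H.hps] at k1
  have E1 : p * c + c * p = p * (m1 + m2) + (m1 + m2) * p :=
    smul_cancel Complex.I_ne_zero k1
  rw [mul_add, add_mul, h1.1, h2.lzero H.hpq, h1.rzero H.hqp, h2.2,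
    add_zero, zero_add] at E1
  have hsqp : star (q - p) = q - p := by rw [star_sub, H.hps, H.hqs]
  have hkm : (q - p) * (m1 + m2) + (m1 + m2) * (q - p) = 0 := by
    rw [mul_add, add_mul, sub_mul, sub_mul, mul_sub, mul_sub,
      h1.lzero H.hqp, h1.1, h2.1, h2.lzero H.hpq, h1.2, h1.rzero H.hqp,
      h2.rzero H.hpq, h2.2]
    abel
  have k2 : (Complex.I • (q - p)) * c - c * star (Complex.I • (q - p))
      = (Complex.I • (q - p)) * n - n * star (Complex.I • (q - p)) :=
    killL_left H hc _ (by rw [dIe hsqp, hkm, smul_zero])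
  rw [dIe hsqp, dIe hsqp] at k2
  have E2 : (q - p) * c + c * (q - p) = (q - p) * n + n * (q - p) :=
    smul_cancel Complex.I_ne_zero k2
  rw [show (q - p) * n + n * (q - p) = n + n by
    rw [sub_mul, mul_sub, hn.1, hn.lzero H.hpq, hn.2, hn.rzero H.hqp,
      sub_zero]] at E2
  have c12 : p * (c * q) = m1 := by
    have e : p * ((p * c + c * p) * q) = p * ((m1 + m2) * q) := by rw [E1]
    simp only [mul_add, add_mul, mul_assoc, lhead H.hp, H.hpq,
      h1.2, h1.1, h2.rzero H.hpq, mul_zero, zero_add, add_zero] at e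
    exact e
  have c21 : q * (c * p) = m2 := by
    have e : q * ((p * c + c * p) * p) = q * ((m1 + m2) * p) := by rw [E1]
    simp only [mul_add, add_mul, mul_assoc, lzhead H.hqp, H.hp,
      h1.rzero H.hqp, h2.2, h2.1, mul_zero, zero_add, add_zero] at e
    exact e
  have c11 : p * (c * p) = 0 := by
    have e : p * ((p * c + c * p) * p) = p * ((m1 + m2) * p) := by rw [E1]
    simp only [mul_add, add_mul, mul_assoc, lhead H.hp, H.hp,
      h1.rzero H.hqp, h2.2, h2.lzero H.hpq, mul_zero, zero_add, add_zero] at e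
    exact halfz e
  have c22 : q * (c * q) = n := by
    have e : q * (((q - p) * c + c * (q - p)) * q) = q * ((n + n) * q) := by rw [E2]
    simp only [sub_mul, mul_sub, mul_add, add_mul, mul_assoc, lhead H.hq,
      lzhead H.hqp, H.hq, H.hpq, hn.2, hn.1, mul_zero, zero_mul, sub_zero,
      add_zero, zero_add] at e
    exact half e
  have hcab : c = m1 + m2 + n := by
    rw [peirce H c, c11, c12, c21, c22]
    abel
  rw [← hcab]; exact hc

/-- Claim C6 : (offdiagonal, diagonal) additivity. -/
theorem C6 (H : Hyp p q Φ) {m1 m2 n1 n2 : A} (h1 : Cor p q m1) (h2 : Cor q p m2)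
    (hn1 : Cor p p n1) (hn2 : Cor q q n2) :
    Φ ((m1 + m2) + (n1 + n2)) = Φ (m1 + m2) + Φ (n1 + n2) := by
  obtain ⟨c, hc⟩ := H.hsurj (Φ (m1 + m2) + Φ (n1 + n2))
  have k1 := keyL H hc (Complex.I • p)
  rw [dIe H.hps, dIe H.hps, dIe H.hps] at k1
  rw [show p * (m1 + m2) + (m1 + m2) * p = m1 + m2 by
    rw [mul_add, add_mul, h1.1, h2.lzero H.hpq, h1.rzero H.hqp, h2.2,
      add_zero, zero_add]] at k1
  rw [show p * (n1 + n2) + (n1 + n2) * p = n1 + n1 by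
    rw [mul_add, add_mul, hn1.1, hn2.lzero H.hpq, hn1.2, hn2.rzero H.hqp,
      add_zero]] at k1
  have hC5 := C5a H (h1.smul Complex.I) (h2.smul Complex.I)
    ((hn1.add hn1).smul Complex.I)
  rw [← smul_add Complex.I m1 m2] at hC5
  rw [← hC5] at k1
  have E1 : p * c + c * p = (m1 + m2) + (n1 + n1) := by
    have h' := H.hinj k1
    rw [← smul_add] at h'
    exact smul_cancel Complex.I_ne_zero h'
  have k2 := keyL H hc (Complex.I • q)
  rw [dIe H.hqs, dIe H.hqs, dIe H.hqs] at k2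
  rw [show q * (m1 + m2) + (m1 + m2) * q = m1 + m2 by
    rw [mul_add, add_mul, h1.lzero H.hqp, h2.1, h1.2, h2.rzero H.hpq,
      zero_add, add_zero, add_comm m2 m1]] at k2
  rw [show q * (n1 + n2) + (n1 + n2) * q = n2 + n2 by
    rw [mul_add, add_mul, hn1.lzero H.hqp, hn2.1, hn1.rzero H.hpq, hn2.2,
      zero_add]] at k2
  have hC5' := C5b H (h1.smul Complex.I) (h2.smul Complex.I)
    ((hn2.add hn2).smul Complex.I)
  rw [← smul_add Complex.I m1 m2] at hC5'
  rw [← hC5'] at k2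
  have E2 : q * c + c * q = (m1 + m2) + (n2 + n2) := by
    have h' := H.hinj k2
    rw [← smul_add] at h'
    exact smul_cancel Complex.I_ne_zero h'
  have c11 : p * (c * p) = n1 := by
    have e : p * ((p * c + c * p) * p) = p * (((m1 + m2) + (n1 + n1)) * p) := by
      rw [E1]
    simp only [mul_add, add_mul, mul_assoc, lhead H.hp, H.hp,
      h1.rzero H.hqp, h2.2, h2.lzero H.hpq, hn1.2, hn1.1,
      mul_zero, zero_add, add_zero] at e
    exact half e
  have c12 : p * (c * q) = m1 := by
    have e : p * ((p * c + c * p) * q) = p * (((m1 + m2) + (n1 + n1)) * q) := by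
      rw [E1]
    simp only [mul_add, add_mul, mul_assoc, lhead H.hp, H.hpq,
      h1.2, h1.1, h2.rzero H.hpq, hn1.rzero H.hpq,
      mul_zero, zero_add, add_zero] at e
    exact e
  have c21 : q * (c * p) = m2 := by
    have e : q * ((p * c + c * p) * p) = q * (((m1 + m2) + (n1 + n1)) * p) := by
      rw [E1]
    simp only [mul_add, add_mul, mul_assoc, lzhead H.hqp, H.hp,
      h1.rzero H.hqp, h2.2, h2.1, hn1.2, hn1.lzero H.hqp,
      mul_zero, zero_add, add_zero] at e
    exact e
  have c22 : q * (c * q) = n2 := by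
    have e : q * ((q * c + c * q) * q) = q * (((m1 + m2) + (n2 + n2)) * q) := by
      rw [E2]
    simp only [mul_add, add_mul, mul_assoc, lhead H.hq, H.hq,
      h1.2, h1.lzero H.hqp, h2.rzero H.hpq, hn2.2, hn2.1,
      mul_zero, zero_add, add_zero] at e
    exact half e
  have hcab : c = (m1 + m2) + (n1 + n2) := by
    rw [peirce H c, c11, c12, c21, c22]
    abel
  rw [← hcab]; exact hc

/-- Four-corner decomposition of Φ. -/
theorem F1 (H : Hyp p q Φ) (x : A) :
    Φ x = Φ (p * (x * p)) + Φ (p * (x * q)) + Φ (q * (x * p)) + Φ (q * (x * q)) := by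
  have h11 : Cor p p (p * (x * p)) :=
    ⟨by rw [← mul_assoc, H.hp], by rw [mul_assoc, mul_assoc, H.hp]⟩
  have h12 : Cor p q (p * (x * q)) :=
    ⟨by rw [← mul_assoc, H.hp], by rw [mul_assoc, mul_assoc, H.hq]⟩
  have h21 : Cor q p (q * (x * p)) :=
    ⟨by rw [← mul_assoc, H.hq], by rw [mul_assoc, mul_assoc, H.hp]⟩
  have h22 : Cor q q (q * (x * q)) :=
    ⟨by rw [← mul_assoc, H.hq], by rw [mul_assoc, mul_assoc, H.hq]⟩
  have hx2 : x = (p * (x * q) + q * (x * p)) + (p * (x * p) + q * (x * q)) := by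
    conv_lhs => rw [peirce H x]
    abel
  calc Φ x = Φ ((p * (x * q) + q * (x * p)) + (p * (x * p) + q * (x * q))) := by
        rw [← hx2]
    _ = Φ (p * (x * q) + q * (x * p)) + Φ (p * (x * p) + q * (x * q)) :=
        C6 H h12 h21 h11 h22
    _ = (Φ (p * (x * q)) + Φ (q * (x * p))) + (Φ (p * (x * p)) + Φ (q * (x * q))) := by
        rw [C3 H h12 h21, C1 H h11 h22]
    _ = _ := by abel

/-- Final additivity. -/
theorem addAll (H : Hyp p q Φ) (a b : A) : Φ (a + b) = Φ a + Φ b := by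
  have cor11 : ∀ y : A, Cor p p (p * (y * p)) := fun y =>
    ⟨by rw [← mul_assoc, H.hp], by rw [mul_assoc, mul_assoc, H.hp]⟩
  have cor12 : ∀ y : A, Cor p q (p * (y * q)) := fun y =>
    ⟨by rw [← mul_assoc, H.hp], by rw [mul_assoc, mul_assoc, H.hq]⟩
  have cor21 : ∀ y : A, Cor q p (q * (y * p)) := fun y =>
    ⟨by rw [← mul_assoc, H.hq], by rw [mul_assoc, mul_assoc, H.hp]⟩
  have cor22 : ∀ y : A, Cor q q (q * (y * q)) := fun y =>
    ⟨by rw [← mul_assoc, H.hq], by rw [mul_assoc, mul_assoc, H.hq]⟩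
  rw [F1 H (a + b), F1 H a, F1 H b]
  rw [show p * ((a + b) * p) = p * (a * p) + p * (b * p) by rw [add_mul, mul_add]]
  rw [show p * ((a + b) * q) = p * (a * q) + p * (b * q) by rw [add_mul, mul_add]]
  rw [show q * ((a + b) * p) = q * (a * p) + q * (b * p) by rw [add_mul, mul_add]]
  rw [show q * ((a + b) * q) = q * (a * q) + q * (b * q) by rw [add_mul, mul_add]]
  rw [C4c H (cor11 a) (cor11 b), C4a H (cor12 a) (cor12 b),
    C4b H (cor21 a) (cor21 b), C4d H (cor22 a) (cor22 b)]
  abel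

end Stmt7Proof

/-- Lemma 2.3, minus case: additivity. -/
theorem stmt_7 {A B : Type*}
    [Ring A] [Algebra ℂ A] [StarRing A] [StarModule ℂ A]
    [Ring B] [Algebra ℂ B] [StarRing B] [StarModule ℂ B]
    (hAprime : ∀ a b : A, (∀ x : A, a * x * b = 0) → a = 0 ∨ b = 0)
    (hAproj : ∃ p : A, p ≠ 0 ∧ p ≠ 1 ∧ star p = p ∧ p * p = p)
    (Φ : A → B) (hΦ : Function.Bijective Φ)
    (h : ∀ x y : A, Φ (x * y - y * star x) = Φ x * Φ y - Φ y * star (Φ x)) :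
    ∀ a b : A, Φ (a + b) = Φ a + Φ b := by
  obtain ⟨p, hp0, hp1, hps, hpp⟩ := hAproj
  have H : Stmt7Proof.Hyp p (1 - p) Φ :=
    { hp := hpp
      hq := by rw [sub_mul, one_mul, mul_sub, mul_one, hpp, sub_self, sub_zero]
      hpq := by rw [mul_sub, mul_one, hpp, sub_self]
      hqp := by rw [sub_mul, one_mul, hpp, sub_self]
      hps := hps
      hqs := by rw [star_sub, star_one, hps]
      hp0 := hp0
      hq0 := by
        intro hq
        exact hp1 (sub_eq_zero.mp hq).symm
      hpq1 := by abel
      hprime := hAprime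
      hinj := hΦ.1
      hsurj := hΦ.2
      hmul := h }
  exact fun a b => Stmt7Proof.addAll H a b
end

section
/- Let A and B be unital prime complex *-algebras whose centers equal ℂ·1 and which each contain a nontrivial projection, and let Φ : A → B be a bijective mapping satisfying Φ(xy + yx*) = Φ(x)Φ(y) + Φ(y)Φ(x)* for all x, y ∈ A. Then Φ(iℝ·1_A) = iℝ·1_B and Φ(ℂ·1_A) = ℂ·1_B; that is, the image under Φ of the set of purely imaginary multiples of the identity of A is exactly the set of purely imaginary multiples of the identity of B, and the image of the set of complex multiples of the identity of A is exactly the set of complex multiples of the identity of B. -/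
private lemma stmt10_scal_inj {A : Type*} [Ring A] [Algebra ℂ A] [Nontrivial A]
    {c d : ℂ} (h : c • (1 : A) = d • 1) : c = d :=
  (algebraMap ℂ A).injective (by
    rw [Algebra.algebraMap_eq_smul_one, Algebra.algebraMap_eq_smul_one, h])

/-- If `a` satisfies the "quasi-associativity" identity for the product
`T(x,y) = xy + y x*`, then `a` commutes with everything. -/
private lemma stmt10_central_of_P {A : Type*} [Ring A] [StarRing A]
    (hprime : ∀ a b : A, (∀ x : A, a * x * b = 0) → a = 0 ∨ b = 0)
    (hnc : ∃ u v : A, u * v ≠ v * u) (a : A)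
    (hP : ∀ x y : A, a * (x * y + y * star x) + (x * y + y * star x) * star a
        = (a * x + x * star a) * y + y * star (a * x + x * star a)) :
    ∀ y : A, a * y = y * a := by
  have hstar : ∀ x y : A, a * (y * star x) + x * (y * star a)
      = x * (star a * y) + y * (a * star x) := by
    intro x y
    have H := hP x y
    simp only [star_add, star_mul, star_star] at H
    linear_combination (norm := noncomm_ring) H
  have hk : ∀ y : A, (a - star a) * y = y * (a - star a) := by
    intro y
    have H := hstar 1 y
    simp only [star_one, one_mul, mul_one] at H
    linear_combination (norm := noncomm_ring) H
  have hstar2 : ∀ x y : A, a * (y * star x) + x * (y * a)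
      = x * (a * y) + y * (a * star x) := by
    intro x y
    linear_combination (norm := noncomm_ring) hstar x y - x * hk y
  have hd1 : ∀ y x : A, (a * y - y * a) * star x = x * (a * y - y * a) := by
    intro y x
    linear_combination (norm := noncomm_ring) hstar2 x y
  have hd2 : ∀ y x : A, (a * y - y * a) * x = star x * (a * y - y * a) := by
    intro y x
    have := hd1 y (star x); rwa [star_star] at this
  have hswap : ∀ y p q : A, (a * y - y * a) * (p * q) = (a * y - y * a) * (q * p) := by
    intro y p q
    calc (a * y - y * a) * (p * q) = star (p * q) * (a * y - y * a) := hd2 y (p * q)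
      _ = star q * (star p * (a * y - y * a)) := by rw [star_mul, mul_assoc]
      _ = star q * ((a * y - y * a) * p) := by rw [← hd2 y p]
      _ = ((a * y - y * a) * q) * p := by rw [← mul_assoc, ← hd2 y q]
      _ = (a * y - y * a) * (q * p) := by rw [mul_assoc]
  obtain ⟨u, x, hux⟩ := hnc
  intro y
  have hz : ∀ z : A, (a * y - y * a) * z * (u * x - x * u) = 0 := by
    intro z
    have h1 : (a * y - y * a) * (z * (u * x)) = (a * y - y * a) * (z * (x * u)) := by
      calc (a * y - y * a) * (z * (u * x))
          = (a * y - y * a) * ((u * x) * z) := hswap y z (u * x)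
        _ = (a * y - y * a) * (u * (x * z)) := by rw [mul_assoc]
        _ = (a * y - y * a) * ((x * z) * u) := hswap y u (x * z)
        _ = ((a * y - y * a) * (x * z)) * u := (mul_assoc _ _ _).symm
        _ = ((a * y - y * a) * (z * x)) * u := by rw [hswap y x z]
        _ = (a * y - y * a) * (z * (x * u)) := by rw [mul_assoc, mul_assoc]
    linear_combination (norm := noncomm_ring) h1
  rcases hprime (a * y - y * a) (u * x - x * u) hz with h0 | h0
  · linear_combination (norm := noncomm_ring) h0
  · exact absurd (sub_eq_zero.mp h0) hux

private lemma stmt10_P_of_scalar {A : Type*} [Ring A] [Algebra ℂ A] [StarRing A]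
    [StarModule ℂ A] (c : ℂ) (x y : A) :
    (c • (1 : A)) * (x * y + y * star x) + (x * y + y * star x) * star (c • (1 : A))
      = ((c • (1 : A)) * x + x * star (c • (1 : A))) * y
        + y * star ((c • (1 : A)) * x + x * star (c • (1 : A))) := by
  simp only [star_smul, star_one, smul_mul_assoc, one_mul, mul_smul_comm, mul_one,
    star_add, star_star, smul_add, add_mul, mul_add]
  module

private lemma stmt10_S_of_scalar {A : Type*} [Ring A] [Algebra ℂ A] [StarRing A]
    [StarModule ℂ A] (t : ℝ) (x : A) :
    ((((t : ℂ) * Complex.I)) • (1 : A)) * x + x * star ((((t : ℂ) * Complex.I)) • (1 : A)) = 0 := by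
  have hst : star ((t : ℂ) * Complex.I) = -((t : ℂ) * Complex.I) := by
    simp [Complex.star_def, Complex.conj_I]
  simp [star_smul, star_one, smul_mul_assoc, one_mul, mul_smul_comm, mul_one, hst, neg_smul]

private lemma stmt10_scalar_of_S {A : Type*} [Ring A] [Algebra ℂ A] [StarRing A]
    [StarModule ℂ A] [Nontrivial A]
    (hcenter : ∀ a : A, (∀ x : A, a * x = x * a) → ∃ c : ℂ, a = c • (1 : A))
    (a : A) (hS : ∀ x : A, a * x + x * star a = 0) :
    ∃ t : ℝ, a = ((t : ℂ) * Complex.I) • (1 : A) := by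
  have h1 : star a = -a := by
    have := hS 1
    simp only [mul_one, one_mul] at this
    linear_combination (norm := noncomm_ring) this
  have hcomm : ∀ x : A, a * x = x * a := by
    intro x
    have := hS x
    rw [h1] at this
    linear_combination (norm := noncomm_ring) this
  obtain ⟨c, rfl⟩ := hcenter a hcomm
  have hsc : star c = -c := by
    apply stmt10_scal_inj (A := A)
    rw [neg_smul, ← h1, star_smul, star_one]
  have hc : c = (c.im : ℂ) * Complex.I := by
    have hre : c.re = 0 := by
      have := congrArg Complex.re hsc
      simp [Complex.star_def] at this
      linarith
    apply Complex.ext <;> simp [hre]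
  exact ⟨c.im, by rw [← hc]⟩

/-- Lemma 2.5: Φ(iℝ·1_A) = iℝ·1_B and Φ(ℂ·1_A) = ℂ·1_B. -/
theorem stmt_10 {A B : Type*}
    [Ring A] [Algebra ℂ A] [StarRing A] [StarModule ℂ A]
    [Ring B] [Algebra ℂ B] [StarRing B] [StarModule ℂ B]
    (hAprime : ∀ a b : A, (∀ x : A, a * x * b = 0) → a = 0 ∨ b = 0)
    (hBprime : ∀ a b : B, (∀ x : B, a * x * b = 0) → a = 0 ∨ b = 0)
    (hAcenter : ∀ a : A, (∀ x : A, a * x = x * a) → ∃ c : ℂ, a = c • (1 : A))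
    (hBcenter : ∀ b : B, (∀ x : B, b * x = x * b) → ∃ c : ℂ, b = c • (1 : B))
    (hAproj : ∃ p : A, p ≠ 0 ∧ p ≠ 1 ∧ star p = p ∧ p * p = p)
    (hBproj : ∃ q : B, q ≠ 0 ∧ q ≠ 1 ∧ star q = q ∧ q * q = q)
    (Φ : A → B) (hΦ : Function.Bijective Φ)
    (h : ∀ x y : A, Φ (x * y + y * star x) = Φ x * Φ y + Φ y * star (Φ x)) :
    Φ '' {a : A | ∃ t : ℝ, a = ((t : ℂ) * Complex.I) • (1 : A)} =
      {b : B | ∃ t : ℝ, b = ((t : ℂ) * Complex.I) • (1 : B)} ∧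
    Φ '' {a : A | ∃ c : ℂ, a = c • (1 : A)} = {b : B | ∃ c : ℂ, b = c • (1 : B)} := by
  obtain ⟨p, hp0, hp1, hpstar, hpp⟩ := hAproj
  obtain ⟨q, hq0, hq1, hqstar, hqq⟩ := hBproj
  have hntA : Nontrivial A := nontrivial_of_ne p 0 hp0
  have hntB : Nontrivial B := nontrivial_of_ne q 0 hq0
  -- Φ(0) = 0
  have hΦ0 : Φ 0 = 0 := by
    obtain ⟨y0, hy0⟩ := hΦ.2 0
    have := h 0 y0
    simpa [hy0] using this
  -- noncommutativity of A and B
  have hAnc : ∃ u v : A, u * v ≠ v * u := by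
    by_contra hc
    push_neg at hc
    obtain ⟨c, hcp⟩ := hAcenter p (fun x => hc p x)
    have hcc : c * c = c := by
      apply stmt10_scal_inj (A := A)
      have h2 : (c • (1 : A)) * (c • 1) = (c * c) • 1 := by
        rw [smul_mul_assoc, mul_smul_comm, one_mul, smul_smul]
      rw [← h2, ← hcp, hpp, hcp]
    have hc01 : c = 0 ∨ c = 1 := by
      have h3 : c * (c - 1) = 0 := by linear_combination hcc
      rcases mul_eq_zero.mp h3 with h4 | h4
      · exact Or.inl h4
      · exact Or.inr (sub_eq_zero.mp h4)
    rcases hc01 with rfl | rfl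
    · exact hp0 (by rw [hcp, zero_smul])
    · exact hp1 (by rw [hcp, one_smul])
  have hBnc : ∃ u v : B, u * v ≠ v * u := by
    by_contra hc
    push_neg at hc
    obtain ⟨c, hcp⟩ := hBcenter q (fun x => hc q x)
    have hcc : c * c = c := by
      apply stmt10_scal_inj (A := B)
      have h2 : (c • (1 : B)) * (c • 1) = (c * c) • 1 := by
        rw [smul_mul_assoc, mul_smul_comm, one_mul, smul_smul]
      rw [← h2, ← hcp, hqq, hcp]
    have hc01 : c = 0 ∨ c = 1 := by
      have h3 : c * (c - 1) = 0 := by linear_combination hcc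
      rcases mul_eq_zero.mp h3 with h4 | h4
      · exact Or.inl h4
      · exact Or.inr (sub_eq_zero.mp h4)
    rcases hc01 with rfl | rfl
    · exact hq0 (by rw [hcp, zero_smul])
    · exact hq1 (by rw [hcp, one_smul])
  -- characterizations
  have hSa : ∀ a : A, (∀ x : A, a * x + x * star a = 0) ↔
      ∃ t : ℝ, a = ((t : ℂ) * Complex.I) • (1 : A) := fun a =>
    ⟨stmt10_scalar_of_S hAcenter a, by rintro ⟨t, rfl⟩ x; exact stmt10_S_of_scalar t x⟩
  have hSb : ∀ b : B, (∀ x : B, b * x + x * star b = 0) ↔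
      ∃ t : ℝ, b = ((t : ℂ) * Complex.I) • (1 : B) := fun b =>
    ⟨stmt10_scalar_of_S hBcenter b, by rintro ⟨t, rfl⟩ x; exact stmt10_S_of_scalar t x⟩
  have hPa : ∀ a : A, (∀ x y : A,
      a * (x * y + y * star x) + (x * y + y * star x) * star a
        = (a * x + x * star a) * y + y * star (a * x + x * star a)) ↔
      ∃ c : ℂ, a = c • (1 : A) := by
    intro a
    constructor
    · intro hP
      exact hAcenter a (stmt10_central_of_P hAprime hAnc a hP)
    · rintro ⟨c, rfl⟩ x y
      exact stmt10_P_of_scalar c x y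
  have hPb : ∀ b : B, (∀ x y : B,
      b * (x * y + y * star x) + (x * y + y * star x) * star b
        = (b * x + x * star b) * y + y * star (b * x + x * star b)) ↔
      ∃ c : ℂ, b = c • (1 : B) := by
    intro b
    constructor
    · intro hP
      exact hBcenter b (stmt10_central_of_P hBprime hBnc b hP)
    · rintro ⟨c, rfl⟩ x y
      exact stmt10_P_of_scalar c x y
  -- transfer of the S-property along Φ
  have hStrans : ∀ a : A, (∀ x : A, a * x + x * star a = 0) ↔
      (∀ b : B, Φ a * b + b * star (Φ a) = 0) := by
    intro a
    constructor
    · intro hS b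
      obtain ⟨y, rfl⟩ := hΦ.2 b
      rw [← h a y, hS y, hΦ0]
    · intro hS x
      apply hΦ.1
      rw [h a x, hS (Φ x), hΦ0]
  -- transfer of the P-property along Φ
  have hPtrans : ∀ a : A, (∀ x y : A,
      a * (x * y + y * star x) + (x * y + y * star x) * star a
        = (a * x + x * star a) * y + y * star (a * x + x * star a)) ↔
      (∀ x y : B,
      Φ a * (x * y + y * star x) + (x * y + y * star x) * star (Φ a)
        = (Φ a * x + x * star (Φ a)) * y + y * star (Φ a * x + x * star (Φ a))) := by
    intro a
    constructor
    · intro hP x' y'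
      obtain ⟨x, rfl⟩ := hΦ.2 x'
      obtain ⟨y, rfl⟩ := hΦ.2 y'
      rw [← h x y, ← h a x, ← h a (x * y + y * star x), ← h (a * x + x * star a) y]
      exact congrArg Φ (hP x y)
    · intro hP x y
      apply hΦ.1
      rw [h a (x * y + y * star x), h x y, h (a * x + x * star a) y, h a x]
      exact hP (Φ x) (Φ y)
  constructor
  · ext b
    simp only [Set.mem_image, Set.mem_setOf_eq]
    constructor
    · rintro ⟨a, ha, rfl⟩
      exact (hSb (Φ a)).mp ((hStrans a).mp ((hSa a).mpr ha))
    · intro hb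
      obtain ⟨a, rfl⟩ := hΦ.2 b
      exact ⟨a, (hSa a).mp ((hStrans a).mpr ((hSb (Φ a)).mpr hb)), rfl⟩
  · ext b
    simp only [Set.mem_image, Set.mem_setOf_eq]
    constructor
    · rintro ⟨a, ha, rfl⟩
      exact (hPb (Φ a)).mp ((hPtrans a).mp ((hPa a).mpr ha))
    · intro hb
      obtain ⟨a, rfl⟩ := hΦ.2 b
      exact ⟨a, (hPa a).mp ((hPtrans a).mpr ((hPb (Φ a)).mpr hb)), rfl⟩
end
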